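/- arXiv:1312.3002 — 6 statements merged into one kernel-verified Lean document; each statement's English description precedes it below -/
import Mathlib

section
/- An ordinal α is closed under ψ (meaning ψ(β) < α for every β < α) if and only if α = 0 or α = ω^(ω·β) for some ordinal β > 0. -/
open scoped Classical

/-- Words: finite strings over the alphabet of natural numbers. -/
abbrev Word := List ℕ

/-- Lexicographic "not greater" comparison of finite sequences of words,
where entries are compared with the preorder `r`. -/
def LexLe (r : Word → Word → Prop) (xs ys : List Word) : Prop :=
  (xs.length ≤ ys.length ∧ ∀ i < xs.length,
      r (xs.getD i []) (ys.getD i []) ∧ r (ys.getD i []) (xs.getD i []))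
  ∨ ∃ s, s < xs.length ∧ s < ys.length ∧
      (∀ i < s, r (xs.getD i []) (ys.getD i []) ∧ r (ys.getD i []) (xs.getD i [])) ∧
      r (xs.getD s []) (ys.getD s []) ∧ ¬ r (ys.getD s []) (xs.getD s [])

/-- `M` is a lexicographically maximal subsequence of `xs` (w.r.t. entry preorder `r`). -/
def IsLexMax (r : Word → Word → Prop) (xs M : List Word) : Prop :=
  M.Sublist xs ∧ ∀ N : List Word, N.Sublist xs → LexLe r N M

/-- Fuelled version of the recursively defined preorder `≾` on words:
`Λ ≾ Λ`; and if `n` is the minimal symbol of `A ++ B`, split `A` and `B` into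
blocks at `n` and compare the lexicographically maximal subsequences of blocks. -/
def leAux : ℕ → Word → Word → Prop
  | 0, A, B => A = [] ∧ B = []
  | (fuel+1), A, B =>
      (A = [] ∧ B = []) ∨
      (∀ m, (A ++ B).min? = some m →
        ∀ MA MB : List Word, IsLexMax (leAux fuel) (A.splitOn m) MA →
          IsLexMax (leAux fuel) (B.splitOn m) MB →
          LexLe (leAux fuel) MA MB)

/-- The preorder `≾` on words (the fuel `|A|+|B|+1` suffices for the recursion). -/
def Wle (A B : Word) : Prop := leAux (A.length + B.length + 1) A B

/-- The equivalence `∼`: `A ≾ B` and `B ≾ A`. -/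
def Wequiv (A B : Word) : Prop := Wle A B ∧ Wle B A

/-- The strict relation `≺`: `A ≾ B` and not `B ≾ A`. -/
def Wlt (A B : Word) : Prop := Wle A B ∧ ¬ Wle B A

/-- Fuelled version of the normal form predicate `NF`. -/
def NFAux : ℕ → Word → Prop
  | 0, A => A = []
  | (fuel+1), A => A = [] ∨ ∀ m, A.min? = some m →
      (A.splitOn m).Chain' (fun x y => Wle y x) ∧ ∀ b ∈ A.splitOn m, NFAux fuel b

/-- `A` is in normal form. -/
def InNF (A : Word) : Prop := NFAux A.length A

/-- `◇ₖ A`: the normal form of the word `A` with symbol `k` appended. -/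
noncomputable def diamond (k : ℕ) (A : Word) : Word :=
  if h : ∃ B, InNF B ∧ Wequiv B (A ++ [k]) then h.choose else []

/-- Fuelled version of the ordinal value functions `o_n` on normal-form words in `S_n`. -/
noncomputable def oAux : ℕ → ℕ → Word → Ordinal
  | 0, _, _ => 0
  | (fuel+1), n, A =>
      if A.all (· = n) then (A.length : Ordinal)
      else ((A.splitOn n).map (fun b => Ordinal.omega0 ^ oAux fuel (n+1) b)).foldr (· + ·) 0

/-- The ordinal value function `o_n : NF ∩ S_n → Ordinals`. -/
noncomputable def oW (n : ℕ) (A : Word) : Ordinal :=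
  oAux (A.foldr max 0 + A.length + 1) n A

/-- The towers of `ω`-exponentiations: `ω_0 = 1`, `ω_{n+1} = ω ^ ω_n`. -/
noncomputable def omegaTower : ℕ → Ordinal
  | 0 => 1
  | (n+1) => Ordinal.omega0 ^ omegaTower n

/-- `ε₀`, the supremum of the `ω`-towers. -/
noncomputable def eps0 : Ordinal := ⨆ n : ℕ, omegaTower n

/-- The function `ψ` on ordinals: `ψ 0 = ω`, and for `α > 0` with Cantor normal form
`ω^{α_1}+⋯+ω^{α_n}` (non-increasing exponents), `ψ α = ω^{α_1}+⋯+ω^{α_{n-1}}+ω^{α_n+1}`. -/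
noncomputable def psi (α : Ordinal) : Ordinal :=
  match (Ordinal.CNF Ordinal.omega0 α).getLast? with
  | none => Ordinal.omega0
  | some p =>
      ((Ordinal.CNF Ordinal.omega0 α).dropLast).foldr
        (fun q r => Ordinal.omega0 ^ q.1 * q.2 + r) 0
      + (Ordinal.omega0 ^ p.1 * (p.2 - 1) + Ordinal.omega0 ^ (p.1 + 1))

/-- The standard fundamental sequences `α[n]` for limit ordinals below `ε₀`
(junk values elsewhere). -/
noncomputable def fundSeq (α : Ordinal) (n : ℕ) : Ordinal :=
  match (Ordinal.CNF Ordinal.omega0 α).getLast? with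
  | none => 0
  | some p =>
    let pre := ((Ordinal.CNF Ordinal.omega0 α).dropLast).foldr
        (fun q r => Ordinal.omega0 ^ q.1 * q.2 + r) 0
      + Ordinal.omega0 ^ p.1 * (p.2 - 1)
    if p.1 = 0 then 0
    else if h : ∃ e', p.1 = e' + 1 then
      pre + Ordinal.omega0 ^ h.choose * ((n : Ordinal) + 1)
    else if hlt : p.1 < α then pre + Ordinal.omega0 ^ (fundSeq p.1 n) else 0
termination_by α
decreasing_by exact hlt

/-- The relation `R`: `α R β` iff `β = α + 1`, or `β` is a limit and `α = β[n]` for some `n`. -/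
def Rrel (α β : Ordinal) : Prop :=
  β = α + 1 ∨ (Order.IsSuccLimit β ∧ ∃ n : ℕ, α = fundSeq β n)

open Ordinal in
private lemma CNF_omega0_opow (e : Ordinal) : CNF omega0 (omega0 ^ e) = [(e, 1)] := by
  rw [Ordinal.CNF.ne_zero (opow_ne_zero _ omega0_ne_zero),
    Ordinal.log_opow one_lt_omega0, Ordinal.div_self (opow_ne_zero _ omega0_ne_zero),
    Ordinal.mod_self, Ordinal.CNF.zero_right]

open Ordinal in
private lemma psi_zero : psi 0 = omega0 := by
  simp [psi, Ordinal.CNF.zero_right]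

open Ordinal in
private lemma psi_getLast {gamma : Ordinal} {p : Ordinal × Ordinal}
    (h : (CNF omega0 gamma).getLast? = some p) :
    psi gamma = (CNF omega0 gamma).dropLast.foldr (fun q r => omega0 ^ q.1 * q.2 + r) 0
      + (omega0 ^ p.1 * (p.2 - 1) + omega0 ^ (p.1 + 1)) := by
  unfold psi
  rw [h]

open Ordinal in
private lemma psi_opow (e : Ordinal) : psi (omega0 ^ e) = omega0 ^ (e + 1) := by
  rw [psi_getLast (p := (e, 1)) (by rw [CNF_omega0_opow]; rfl)]
  rw [CNF_omega0_opow]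
  simp [Ordinal.sub_self]

open Ordinal in
private lemma term_lt {L : Ordinal} {a b : Ordinal} (h1 : a ≤ L) (h2 : b < omega0) :
    omega0 ^ a * b < omega0 ^ (L + 2) := by
  calc omega0 ^ a * b < omega0 ^ a * omega0 :=
        mul_lt_mul_of_pos_left h2 (opow_pos _ omega0_pos)
    _ = omega0 ^ (a + 1) := by rw [add_one_eq_succ, opow_succ]
    _ ≤ omega0 ^ (L + 1) := opow_le_opow_right omega0_pos (add_le_add_left h1 1)
    _ < omega0 ^ (L + 2) := (opow_lt_opow_iff_right one_lt_omega0).mpr (by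
        rw [show L + 2 = (L + 1) + 1 by rw [add_assoc, one_add_one_eq_two]]; exact lt_add_one _)

open Ordinal in
private lemma foldr_lt {L : Ordinal} (l : List (Ordinal × Ordinal))
    (h : ∀ q ∈ l, omega0 ^ q.1 * q.2 < omega0 ^ L) :
    l.foldr (fun q r => omega0 ^ q.1 * q.2 + r) 0 < omega0 ^ L := by
  induction l with
  | nil => simpa using opow_pos L omega0_pos
  | cons a t ih =>
    simp only [List.foldr_cons]
    exact principal_add_omega0_opow L (h a (List.mem_cons_self))
      (ih fun q hq => h q (List.mem_cons_of_mem _ hq))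

open Ordinal in
private lemma psi_lt_opow {gamma : Ordinal} (hg : gamma ≠ 0) :
    psi gamma < omega0 ^ (Ordinal.log omega0 gamma + 2) := by
  set L := Ordinal.log omega0 gamma with hL
  have hne : CNF omega0 gamma ≠ [] := by
    rw [Ordinal.CNF.ne_zero hg]; simp
  obtain ⟨p, hp⟩ := Option.isSome_iff_exists.mp (List.getLast?_isSome.mpr hne)
  have hpmem : p ∈ CNF omega0 gamma := List.mem_of_getLast? hp
  rw [psi_getLast hp]
  refine principal_add_omega0_opow _ (foldr_lt _ fun q hq => ?_)
    (principal_add_omega0_opow _ ?_ ?_)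
  · have hqmem : q ∈ CNF omega0 gamma := (List.dropLast_sublist _).subset hq
    exact term_lt (Ordinal.CNF.fst_le_log hqmem) (Ordinal.CNF.snd_lt one_lt_omega0 hqmem)
  · exact term_lt (Ordinal.CNF.fst_le_log hpmem)
      ((Ordinal.sub_le_self _ _).trans_lt (Ordinal.CNF.snd_lt one_lt_omega0 hpmem))
  · calc omega0 ^ (p.1 + 1) ≤ omega0 ^ (L + 1) :=
        opow_le_opow_right omega0_pos (add_le_add_left (Ordinal.CNF.fst_le_log hpmem) 1)
      _ < omega0 ^ (L + 2) := (opow_lt_opow_iff_right one_lt_omega0).mpr (by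
          rw [show L + 2 = (L + 1) + 1 by rw [add_assoc, one_add_one_eq_two]]; exact lt_add_one _)

theorem psi_closed_iff (α : Ordinal) :
    (∀ β < α, psi β < α) ↔
      (α = 0 ∨ ∃ β : Ordinal, 0 < β ∧ α = Ordinal.omega0 ^ (Ordinal.omega0 * β)) := by
  classical
  constructor
  · intro h
    rcases eq_or_ne α 0 with h0 | h0
    · exact Or.inl h0
    right
    have hαpos : 0 < α := pos_iff_ne_zero.mpr h0
    have hω : Ordinal.omega0 < α := by simpa [psi_zero] using h 0 hαpos
    set L := Ordinal.log Ordinal.omega0 α with hL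
    have hle : Ordinal.omega0 ^ L ≤ α := Ordinal.opow_log_le_self _ h0
    have heq : α = Ordinal.omega0 ^ L := by
      by_contra hne
      have h1 : Ordinal.omega0 ^ L < α := lt_of_le_of_ne hle (Ne.symm hne)
      have h2 := h _ h1
      rw [psi_opow] at h2
      have h3 := Ordinal.lt_opow_succ_log_self Ordinal.one_lt_omega0 α
      rw [← Ordinal.add_one_eq_succ] at h3
      exact absurd h3 (asymm h2)
    have hL1 : 1 < L := by
      rw [heq] at hω
      have : Ordinal.omega0 ^ (1 : Ordinal) < Ordinal.omega0 ^ L := by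
        rwa [Ordinal.opow_one]
      exact (Ordinal.opow_lt_opow_iff_right Ordinal.one_lt_omega0).mp this
    have hnotsucc : ∀ f, L ≠ f + 1 := by
      intro f hf
      have hlt : Ordinal.omega0 ^ f < α := by
        rw [heq, hf]
        exact (Ordinal.opow_lt_opow_iff_right Ordinal.one_lt_omega0).mpr (lt_add_one f)
      have h2 := h _ hlt
      rw [psi_opow, ← hf, ← heq] at h2
      exact lt_irrefl _ h2
    have hmod : L % Ordinal.omega0 = 0 := by
      by_contra hm
      obtain ⟨n, hn⟩ := Ordinal.lt_omega0.mp (Ordinal.mod_lt L Ordinal.omega0_ne_zero)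
      cases n with
      | zero => exact hm (by simpa using hn)
      | succ k =>
        apply hnotsucc (Ordinal.omega0 * (L / Ordinal.omega0) + k)
        have hd := Ordinal.div_add_mod L Ordinal.omega0
        rw [hn, Nat.cast_succ, ← add_assoc] at hd
        exact hd.symm
    have hdiv : 0 < L / Ordinal.omega0 := by
      rcases eq_or_ne (L / Ordinal.omega0) 0 with hd | hd
      · exfalso
        have h3 := Ordinal.div_add_mod L Ordinal.omega0
        rw [hd, hmod, mul_zero, zero_add] at h3
        rw [← h3] at hL1
        exact absurd hL1 (by norm_num)
      · exact pos_iff_ne_zero.mpr hd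
    refine ⟨L / Ordinal.omega0, hdiv, ?_⟩
    rw [heq]
    congr 1
    conv_lhs => rw [← Ordinal.div_add_mod L Ordinal.omega0, hmod, add_zero]
  · rintro (rfl | ⟨β, hβ, rfl⟩)
    · intro b hb
      exact absurd hb (not_lt_of_ge zero_le)
    intro γ hγ
    have hωβ : 1 < Ordinal.omega0 * β := by
      calc (1 : Ordinal) < Ordinal.omega0 := Ordinal.one_lt_omega0
        _ = Ordinal.omega0 * 1 := (mul_one _).symm
        _ ≤ Ordinal.omega0 * β := mul_le_mul_right (Order.one_le_iff_pos.mpr hβ) _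
    rcases eq_or_ne γ 0 with rfl | hγ0
    · rw [psi_zero]
      calc Ordinal.omega0 = Ordinal.omega0 ^ (1 : Ordinal) := (Ordinal.opow_one _).symm
        _ < _ := (Ordinal.opow_lt_opow_iff_right Ordinal.one_lt_omega0).mpr hωβ
    · have hlog : Ordinal.log Ordinal.omega0 γ < Ordinal.omega0 * β :=
        (Ordinal.lt_opow_iff_log_lt Ordinal.one_lt_omega0 hγ0).mp hγ
      have hlim : Order.IsSuccLimit (Ordinal.omega0 * β) :=
        Ordinal.isSuccLimit_mul_left Ordinal.isSuccLimit_omega0 hβ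
      have h2 : Ordinal.log Ordinal.omega0 γ + 2 < Ordinal.omega0 * β := by
        have s1 := hlim.succ_lt hlog
        have s2 := hlim.succ_lt s1
        rw [← Ordinal.add_one_eq_succ, ← Ordinal.add_one_eq_succ] at s2
        calc Ordinal.log Ordinal.omega0 γ + 2
            = Ordinal.log Ordinal.omega0 γ + 1 + 1 := by
              rw [add_assoc, one_add_one_eq_two]
          _ < _ := s2
      exact (psi_lt_opow hγ0).trans_le
        (Ordinal.opow_le_opow_right Ordinal.omega0_pos h2.le)
end

section
/- The transitive closure of the relation R on the ordinals below ε₀ is the standard strict order <. That is, for all α, β < ε₀: α < β if and only if there is a finite chain α = γ_0 R γ_1 R ... R γ_m = β with m ≥ 1. -/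
open scoped Classical

open Ordinal

lemma foldrF_add (L : List (Ordinal × Ordinal)) (x : Ordinal) :
    L.foldr (fun q r => omega0 ^ q.1 * q.2 + r) x
      = L.foldr (fun q r => omega0 ^ q.1 * q.2 + r) 0 + x := by
  induction L with
  | nil => simp
  | cons q L ih => simp [ih, add_assoc]

lemma cnf_last (β : Ordinal) (hβ0 : β ≠ 0) :
    ∃ e c, (CNF omega0 β).getLast? = some (e, c) ∧ e ≤ β ∧
      ∃ m : ℕ, c = (m : Ordinal) + 1 ∧
        β = ((CNF omega0 β).dropLast.foldr (fun q r => omega0 ^ q.1 * q.2 + r) 0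
              + omega0 ^ e * (m : Ordinal)) + omega0 ^ e := by
  have hne : CNF omega0 β ≠ [] := by
    intro h
    have h2 := CNF.foldr omega0 β
    rw [h] at h2
    exact hβ0 h2.symm
  set p := (CNF omega0 β).getLast hne with hp
  refine ⟨p.1, p.2, ?_, ?_, ?_⟩
  · rw [List.getLast?_eq_getLast hne]
  · exact (CNF.fst_le_log (List.getLast_mem hne)).trans (log_le_self _ _)
  · have hcω : p.2 < omega0 := CNF.snd_lt one_lt_omega0 (List.getLast_mem hne)
    have hc0 : 0 < p.2 := CNF.snd_pos (List.getLast_mem hne)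
    obtain ⟨k, hk⟩ := lt_omega0.1 hcω
    obtain ⟨m, rfl⟩ : ∃ m, k = m + 1 := by
      cases k with
      | zero => exfalso; rw [hk] at hc0; simp at hc0
      | succ m => exact ⟨m, rfl⟩
    refine ⟨m, by rw [hk]; push_cast; ring_nf, ?_⟩
    conv_lhs => rw [← CNF.foldr omega0 β, ← List.dropLast_append_getLast hne]
    rw [List.foldr_append, List.foldr_cons, List.foldr_nil, foldrF_add, ← hp, hk]
    push_cast
    rw [mul_add_one, add_zero, add_assoc]

lemma fundSeq_unfold (β e c : Ordinal) (n : ℕ) (h : (CNF omega0 β).getLast? = some (e, c)) :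
    fundSeq β n = (if e = 0 then 0
    else if hx : ∃ e', e = e' + 1 then
      ((CNF omega0 β).dropLast.foldr (fun q r => omega0 ^ q.1 * q.2 + r) 0
        + omega0 ^ e * (c - 1)) + omega0 ^ hx.choose * ((n : Ordinal) + 1)
    else if e < β then ((CNF omega0 β).dropLast.foldr (fun q r => omega0 ^ q.1 * q.2 + r) 0
        + omega0 ^ e * (c - 1)) + omega0 ^ (fundSeq e n) else 0) := by
  rw [fundSeq, h]; rfl

lemma lt_eps0_lt_opow {β : Ordinal} (hβ : β < eps0) : β < omega0 ^ β := by
  rcases (right_le_opow β one_lt_omega0).lt_or_eq with h | h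
  · exact h
  · exfalso
    refine absurd hβ (not_lt.2 (ciSup_le fun n => ?_))
    induction n with
    | zero =>
      have : (1 : Ordinal) = omega0 ^ (0 : Ordinal) := (opow_zero _).symm
      calc omegaTower 0 = (1:Ordinal) := rfl
        _ = omega0 ^ (0:Ordinal) := this
        _ ≤ omega0 ^ β := opow_le_opow_right omega0_pos (zero_le (a := β))
        _ = β := h.symm
    | succ n ih =>
      calc omegaTower (n+1) = omega0 ^ omegaTower n := rfl
        _ ≤ omega0 ^ β := opow_le_opow_right omega0_pos ih
        _ = β := h.symm

lemma sub_one_nat (m : ℕ) : ((m : Ordinal) + 1) - 1 = (m : Ordinal) :=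
  Ordinal.sub_eq_of_add_eq (by rw [one_add_natCast, Order.succ_eq_add_one]; push_cast; rfl)

lemma fundSeq_lt {β : Ordinal} (hβ : Order.IsSuccLimit β) (n : ℕ) : fundSeq β n < β := by
  induction β using Ordinal.induction with
  | h β IH =>
  obtain ⟨e, c, hl, heβ, m, hc, hβeq⟩ := cnf_last β hβ.pos.ne'
  rw [fundSeq_unfold β e c n hl]
  have hc1 : c - 1 = (m : Ordinal) := by rw [hc]; exact sub_one_nat m
  set pre0 := (CNF omega0 β).dropLast.foldr (fun q r => omega0 ^ q.1 * q.2 + r) 0 with hpre0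
  split_ifs with h0 hx hlt
  · exact hβ.pos
  · obtain hch := hx.choose_spec
    rw [hc1]
    conv_rhs => rw [hβeq]
    apply add_lt_add_right
    conv_rhs => rw [hch, add_one_eq_succ, opow_succ]
    rw [mul_lt_mul_iff_right₀ (opow_pos _ omega0_pos)]
    have h2 := nat_lt_omega0 (n+1)
    push_cast at h2
    exact h2
  · have he : Order.IsSuccLimit e := by
      rcases zero_or_succ_or_isSuccLimit e with h | ⟨a, ha⟩ | h
      · exact absurd h h0
      · exact absurd ⟨a, by rw [← ha, add_one_eq_succ]⟩ hx
      · exact h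
    rw [hc1]
    conv_rhs => rw [hβeq]
    exact add_lt_add_right ((opow_lt_opow_iff_right one_lt_omega0).2 (IH e hlt he)) _
  · exact hβ.pos

lemma le_fundSeq {β : Ordinal} (hβ : Order.IsSuccLimit β) (hβε : β < eps0) {α : Ordinal} (hα : α < β) :
    ∃ n : ℕ, α ≤ fundSeq β n := by
  induction β using Ordinal.induction generalizing α with
  | h β IH =>
  obtain ⟨e, c, hl, heβ, m, hc, hβeq⟩ := cnf_last β hβ.pos.ne'
  have hc1 : c - 1 = (m : Ordinal) := by rw [hc]; exact sub_one_nat m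
  set pre0 := (CNF omega0 β).dropLast.foldr (fun q r => omega0 ^ q.1 * q.2 + r) 0 with hpre0
  set pre := pre0 + omega0 ^ e * (m : Ordinal) with hpre
  have h0 : e ≠ 0 := by
    intro h0
    rw [h0, opow_zero] at hβeq
    have h1 : pre < β := by rw [hβeq, add_one_eq_succ]; exact Order.lt_succ pre
    have := hβ.succ_lt h1
    rw [hβeq, add_one_eq_succ] at this
    exact absurd this (lt_irrefl _)
  have helt : e < β := by
    rcases heβ.lt_or_eq with h | h
    · exact h
    · exfalso
      subst h
      exact absurd ((le_add_self (b := pre)).trans_eq hβeq.symm) (not_le.2 (lt_eps0_lt_opow hβε))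
  have hβpre : β = pre + omega0 ^ e := hβeq
  rcases le_or_gt α pre with hle | hlt
  · refine ⟨0, ?_⟩
    rw [fundSeq_unfold β e c 0 hl, hc1]
    rcases Classical.em (∃ e', e = e' + 1) with hx | hx
    · rw [if_neg h0, dif_pos hx]
      exact hle.trans le_self_add
    · rw [if_neg h0, dif_neg hx, if_pos helt]
      exact hle.trans le_self_add
  · set δ := α - pre with hδ
    have hpd : pre + δ = α := Ordinal.add_sub_cancel_of_le hlt.le
    have hδω : δ < omega0 ^ e := by
      have : pre + δ < pre + omega0 ^ e := by rw [hpd, ← hβpre]; exact hα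
      exact (add_lt_add_iff_left pre).1 this
    rcases Classical.em (∃ e', e = e' + 1) with hx | hx
    · obtain hch := hx.choose_spec
      rw [hch, add_one_eq_succ, opow_succ] at hδω
      obtain ⟨c', hc'ω, hδc'⟩ := (lt_mul_iff_of_isSuccLimit isSuccLimit_omega0).1 hδω
      obtain ⟨k, rfl⟩ := lt_omega0.1 hc'ω
      refine ⟨k, ?_⟩
      rw [fundSeq_unfold β e c k hl, hc1, if_neg h0, dif_pos hx]
      rw [← hpd]
      apply add_le_add_right
      exact hδc'.le.trans (mul_le_mul_right (by push_cast; exact le_self_add) _)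
    · have he : Order.IsSuccLimit e := by
        rcases zero_or_succ_or_isSuccLimit e with h | ⟨a, ha⟩ | h
        · exact absurd h h0
        · exact absurd ⟨a, by rw [← ha, add_one_eq_succ]⟩ hx
        · exact h
      obtain ⟨γ, hγe, hδγ⟩ := (lt_opow_of_isSuccLimit omega0_ne_zero he).1 hδω
      obtain ⟨n, hγn⟩ := IH e helt he (helt.trans hβε) hγe
      refine ⟨n, ?_⟩
      rw [fundSeq_unfold β e c n hl, hc1, if_neg h0, dif_neg hx, if_pos helt]
      rw [← hpd]
      apply add_le_add_right
      exact (hδγ.le.trans (opow_le_opow_right omega0_pos hγn)).trans (le_refl _)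

lemma Rrel_lt {x y : Ordinal} (h : Rrel x y) : x < y := by
  rcases h with rfl | ⟨hlim, n, rfl⟩
  · rw [add_one_eq_succ]; exact Order.lt_succ x
  · exact fundSeq_lt hlim n

lemma transGen_lt {x y : Ordinal} (h : Relation.TransGen Rrel x y) : x < y := by
  induction h with
  | single h => exact Rrel_lt h
  | tail _ h ih => exact ih.trans (Rrel_lt h)

lemma lt_imp_transGen (β : Ordinal) : β < eps0 → ∀ α, α < β → Relation.TransGen Rrel α β := by
  induction β using Ordinal.induction with
  | h β IH =>
  intro hβ α h
  rcases zero_or_succ_or_isSuccLimit β with rfl | ⟨γ, rfl⟩ | hlim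
  · exact absurd h (not_lt_zero (a := α))
  · have hγ : γ < eps0 := (Order.lt_succ γ).trans hβ
    rcases (Order.lt_succ_iff.1 h).lt_or_eq with h' | rfl
    · exact (IH γ (Order.lt_succ γ) hγ α h').tail (Or.inl (add_one_eq_succ γ).symm)
    · exact Relation.TransGen.single (Or.inl (add_one_eq_succ α).symm)
  · obtain ⟨n, hn⟩ := le_fundSeq hlim hβ h
    have hfn : fundSeq β n < β := fundSeq_lt hlim n
    rcases hn.lt_or_eq with h' | rfl
    · exact (IH _ hfn (hfn.trans hβ) α h').tail (Or.inr ⟨hlim, n, rfl⟩)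
    · exact Relation.TransGen.single (Or.inr ⟨hlim, n, rfl⟩)

theorem transGen_Rrel_iff_lt (α β : Ordinal) (hα : α < eps0) (hβ : β < eps0) :
    α < β ↔ Relation.TransGen Rrel α β :=
  ⟨lt_imp_transGen β hβ α, transGen_lt⟩
end

section
/- Fix natural numbers h ≥ 1 and k with 1 ≤ k ≤ h. Define I_s = 3^s 2 (s copies of 3 followed by a 2), K_{h,k} = I_{h-1} I_{h-2} ... I_{k+1} I_k 3^k, and L_h = I_{h-1} I_{h-2} ... I_1. Then: (a) I_{h-1}...I_k 3^{k-1} ≾ L_h ≺ I_{h-1}...I_k 3^k = K_{h,k}; and (b) K_{h,1} ≺ K_{h,2} ≺ ... ≺ K_{h,h}. -/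
open scoped Classical

/-- `I_s = 3^s 2`. -/
def Iword (s : ℕ) : Word := List.replicate s 3 ++ [2]

/-- `I_{h-1} I_{h-2} … I_k`. -/
def Ipre (h k : ℕ) : Word := (((List.range' k (h - k)).reverse).map Iword).flatten

/-- `K_{h,k} = I_{h-1} … I_k 3^k`. -/
def Kword (h k : ℕ) : Word := Ipre h k ++ List.replicate k 3

/-- `L_h = I_{h-1} … I_1`. -/
def Lword (h : ℕ) : Word := Ipre h 1

section AuxLemmas

lemma leAux_succ_iff (f : ℕ) (A B : Word) : leAux (f+1) A B ↔
    ((A = [] ∧ B = []) ∨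
      (∀ m, (A ++ B).min? = some m →
        ∀ MA MB : List Word, IsLexMax (leAux f) (A.splitOn m) MA →
          IsLexMax (leAux f) (B.splitOn m) MB →
          LexLe (leAux f) MA MB)) := Iff.rfl

lemma leAux_nil : ∀ f, leAux f ([] : Word) []
  | 0 => ⟨rfl, rfl⟩
  | (_+1) => Or.inl ⟨rfl, rfl⟩

lemma getD_rep_nil (n i : ℕ) : (List.replicate n ([] : Word)).getD i [] = [] := by
  rcases Nat.lt_or_ge i n with h | h
  · rw [List.getD_eq_getElem _ _ (by simpa using h)]; simp
  · rw [List.getD_eq_default]; simpa using h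

lemma lexle_rep_iff (f a b : ℕ) :
    LexLe (leAux f) (List.replicate a []) (List.replicate b []) ↔ a ≤ b := by
  constructor
  · rintro (⟨h, _⟩ | ⟨s, _, _, _, _, hr⟩)
    · simpa using h
    · exact absurd (by rw [getD_rep_nil, getD_rep_nil]; exact leAux_nil f) hr
  · intro h
    exact Or.inl ⟨by simpa using h, fun i _ => by
      rw [getD_rep_nil, getD_rep_nil]; exact ⟨leAux_nil f, leAux_nil f⟩⟩

lemma isLexMax_rep_iff (f n : ℕ) (M : List Word) :
    IsLexMax (leAux f) (List.replicate n []) M ↔ M = List.replicate n [] := by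
  constructor
  · rintro ⟨hsub, hmax⟩
    obtain ⟨l, hl, rfl⟩ := List.sublist_replicate_iff.mp hsub
    have h2 := (lexle_rep_iff f n l).mp (hmax _ (List.Sublist.refl _))
    rw [le_antisymm hl h2]
  · rintro rfl
    refine ⟨List.Sublist.refl _, fun N hN => ?_⟩
    obtain ⟨l, hl, rfl⟩ := List.sublist_replicate_iff.mp hN
    exact (lexle_rep_iff f l n).mpr hl

lemma splitOn_rep3 (a : ℕ) :
    (List.replicate a 3 : Word).splitOn 3 = List.replicate (a+1) [] := by
  induction a with
  | zero => simp [List.splitOn]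
  | succ n ih =>
    rw [List.replicate_succ]
    have h := List.splitOnP_first (p := (· == (3:ℕ))) (xs := ([] : Word)) (by simp) 3
      (by simp) (List.replicate n 3)
    simp only [List.nil_append] at h
    rw [List.replicate_succ]
    show List.splitOnP (· == 3) (3 :: List.replicate n 3) = _
    rw [h, List.replicate_succ]
    exact congrArg (List.cons []) ih

lemma min?_rep3 {a b : ℕ} (h : 0 < a + b) :
    ((List.replicate a 3 ++ List.replicate b 3 : Word)).min? = some 3 := by
  rw [← List.replicate_add]
  apply List.min?_eq_some_iff'.mpr
  constructor
  · exact List.mem_replicate.mpr ⟨by omega, rfl⟩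
  · intro x hx; rw [List.eq_of_mem_replicate hx]

lemma block_le_iff (f a b : ℕ) :
    leAux (f+1) (List.replicate a 3) (List.replicate b 3) ↔ a ≤ b := by
  rw [leAux_succ_iff]
  rcases Nat.eq_zero_or_pos (a + b) with hab | hab
  · have ha : a = 0 := by omega
    have hb : b = 0 := by omega
    subst ha; subst hb
    constructor
    · intro _; exact le_rfl
    · intro _; exact Or.inl ⟨by simp, by simp⟩
  · constructor
    · rintro (⟨h1, h2⟩ | h)
      · simp only [List.replicate_eq_nil_iff] at h1 h2; omega
      · have := h 3 (min?_rep3 hab) (List.replicate (a+1) []) (List.replicate (b+1) [])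
          (by rw [splitOn_rep3]; exact (isLexMax_rep_iff f _ _).mpr rfl)
          (by rw [splitOn_rep3]; exact (isLexMax_rep_iff f _ _).mpr rfl)
        have := (lexle_rep_iff f _ _).mp this
        omega
    · intro hle
      refine Or.inr fun m hm MA MB hMA hMB => ?_
      rw [min?_rep3 hab] at hm
      injection hm with hm; subst hm
      rw [splitOn_rep3] at hMA
      rw [splitOn_rep3] at hMB
      rw [(isLexMax_rep_iff f _ _).mp hMA, (isLexMax_rep_iff f _ _).mp hMB]
      exact (lexle_rep_iff f _ _).mpr (by omega)

end AuxLemmas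

section AuxLemmas2

/-- Sublist of a nonincreasing list of naturals: either pointwise-equal prefix, or
first difference is a strict drop. -/
lemma res_sublist : ∀ (M N : List ℕ), N.Sublist M → M.Pairwise (fun x y => y ≤ x) →
    (N.length ≤ M.length ∧ ∀ i < N.length, N.getD i 0 = M.getD i 0) ∨
    (∃ s, s < N.length ∧ (∀ i < s, N.getD i 0 = M.getD i 0) ∧ N.getD s 0 < M.getD s 0) := by
  intro M
  induction M with
  | nil =>
    intro N hN _
    left; simp [List.sublist_nil.mp hN]
  | cons m M' ih =>
    intro N hN hp
    match N, hN with
    | [], _ => left; simp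
    | n :: N', hN =>
      have hnm : n ≤ m := by
        have hmem : n ∈ m :: M' := hN.subset List.mem_cons_self
        rcases List.mem_cons.mp hmem with rfl | hmem'
        · exact le_rfl
        · exact (List.pairwise_cons.mp hp).1 _ hmem'
      rcases Nat.lt_or_ge n m with hlt | hge
      · right
        exact ⟨0, by simp, fun i hi => absurd hi (Nat.not_lt_zero i), by simpa using hlt⟩
      · have heq : n = m := le_antisymm hnm hge
        subst heq
        have hN' : N'.Sublist M' := List.cons_sublist_cons.mp hN
        rcases ih N' hN' (List.pairwise_cons.mp hp).2 with ⟨hl, he⟩ | ⟨s, hs, he, hlt⟩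
        · left
          refine ⟨by simpa using hl, fun i hi => ?_⟩
          cases i with
          | zero => simp
          | succ j =>
            simp only [List.getD_cons_succ]
            exact he j (by simpa using hi)
        · right
          refine ⟨s+1, by simpa using hs, fun i hi => ?_, by simpa using hlt⟩
          cases i with
          | zero => simp
          | succ j =>
            simp only [List.getD_cons_succ]
            exact he j (by omega)

/-- The list of `3`-blocks with given exponents. -/
def blk (es : List ℕ) : List Word := es.map (fun a => List.replicate a 3)

lemma blk_length (es : List ℕ) : (blk es).length = es.length := by simp [blk]

lemma blk_getD {es : List ℕ} {i : ℕ} (h : i < es.length) :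
    (blk es).getD i [] = List.replicate (es.getD i 0) 3 := by
  rw [List.getD_eq_getElem _ _ (by simpa [blk] using h), List.getD_eq_getElem _ _ h]
  simp [blk]

lemma lexle_blk_of_sublist (f : ℕ) {es es' : List ℕ} (hp : es.Pairwise (fun x y => y ≤ x))
    (hsub : es'.Sublist es) : LexLe (leAux (f+1)) (blk es') (blk es) := by
  have hsl : es'.length ≤ es.length := hsub.length_le
  rcases res_sublist es es' hsub hp with ⟨hl, he⟩ | ⟨s, hs, he, hlt⟩
  · left
    refine ⟨by simp [blk_length, hl], fun i hi => ?_⟩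
    have hi' : i < es'.length := by simpa [blk_length] using hi
    rw [blk_getD hi', blk_getD (lt_of_lt_of_le hi' hl), he i hi']
    exact ⟨(block_le_iff f _ _).mpr le_rfl, (block_le_iff f _ _).mpr le_rfl⟩
  · right
    refine ⟨s, by simpa [blk_length] using hs, by rw [blk_length]; omega, fun i hi => ?_, ?_, ?_⟩
    · have hi' : i < es'.length := lt_trans hi hs
      rw [blk_getD hi', blk_getD (by omega), he i hi]
      exact ⟨(block_le_iff f _ _).mpr le_rfl, (block_le_iff f _ _).mpr le_rfl⟩
    · rw [blk_getD hs, blk_getD (by omega)]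
      exact (block_le_iff f _ _).mpr (le_of_lt hlt)
    · rw [blk_getD hs, blk_getD (by omega), block_le_iff]
      omega

lemma isLexMax_blk (f : ℕ) {es : List ℕ} (hp : es.Pairwise (fun x y => y ≤ x)) :
    IsLexMax (leAux (f+1)) (blk es) (blk es) := by
  refine ⟨List.Sublist.refl _, fun N hN => ?_⟩
  obtain ⟨es', hsub, rfl⟩ := List.sublist_map_iff.mp (show N.Sublist (es.map _) from hN)
  exact lexle_blk_of_sublist f hp hsub

lemma lexmax_blk_unique (f : ℕ) {es : List ℕ} {M : List Word}
    (hp : es.Pairwise (fun x y => y ≤ x))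
    (h : IsLexMax (leAux (f+1)) (blk es) M) : M = blk es := by
  obtain ⟨hsub, hmax⟩ := h
  obtain ⟨es', hsub', rfl⟩ := List.sublist_map_iff.mp (show M.Sublist (es.map _) from hsub)
  have hLe : LexLe (leAux (f+1)) (blk es) (blk es') := hmax _ (List.Sublist.refl _)
  have hsl : es'.length ≤ es.length := hsub'.length_le
  rcases res_sublist es es' hsub' hp with ⟨_, he⟩ | ⟨s, hs, he, hlt⟩
  · have hge : es.length ≤ es'.length := by
      rcases hLe with ⟨h1, _⟩ | ⟨t, ht1, ht2, _, _, hneg⟩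
      · simpa [blk_length] using h1
      · exfalso
        have ht' : t < es'.length := by simpa [blk_length] using ht2
        rw [blk_getD ht', blk_getD (by omega), he t ht'] at hneg
        exact hneg ((block_le_iff f _ _).mpr le_rfl)
    have heq : es' = es := hsub'.eq_of_length (le_antisymm hsl hge)
    rw [heq]; rfl
  · exfalso
    rcases hLe with ⟨_, h2⟩ | ⟨t, ht1, ht2, hte, htr, hneg⟩
    · have := (h2 s (by rw [blk_length]; omega)).1
      rw [blk_getD (by omega), blk_getD hs, block_le_iff] at this
      omega
    · have ht' : t < es'.length := by simpa [blk_length] using ht2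
      rcases Nat.lt_trichotomy t s with htlt | rfl | htgt
      · rw [blk_getD ht', blk_getD (by omega), he t htlt] at hneg
        exact hneg ((block_le_iff f _ _).mpr le_rfl)
      · have h1 := htr
        rw [blk_getD (by omega), blk_getD hs, block_le_iff] at h1
        omega
      · have h1 := (hte s htgt).1
        rw [blk_getD (by omega), blk_getD hs, block_le_iff] at h1
        omega

end AuxLemmas2

section AuxLemmas3

/-- The word `3^{a₀} 2 3^{a₁} 2 … 2 3^{aₙ}`. -/
def wordOf : List ℕ → Word
  | [] => []
  | [a] => List.replicate a 3
  | a :: b :: es => List.replicate a 3 ++ 2 :: wordOf (b :: es)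

lemma wordOf_splitOn : ∀ es : List ℕ, es ≠ [] → (wordOf es).splitOn 2 = blk es := by
  intro es
  induction es with
  | nil => intro h; exact absurd rfl h
  | cons a t ih =>
    intro _
    cases t with
    | nil =>
      show (List.replicate a 3 : Word).splitOn 2 = [List.replicate a 3]
      exact List.splitOnP_eq_single (by
        intro x hx
        rw [List.eq_of_mem_replicate hx]
        rfl)
    | cons b t' =>
      show (List.replicate a 3 ++ 2 :: wordOf (b :: t')).splitOn 2 = _
      have h := List.splitOnP_first (p := (· == (2:ℕ))) (xs := (List.replicate a 3 : Word))
        (by intro x hx; rw [List.eq_of_mem_replicate hx]; rfl) 2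
        (by simp) (wordOf (b :: t'))
      show List.splitOnP (· == 2) _ = _
      rw [h]
      have := ih (by simp)
      show _ :: List.splitOn 2 (wordOf (b :: t')) = blk (a :: b :: t')
      rw [this]
      rfl

lemma wordOf_mem : ∀ es : List ℕ, ∀ x ∈ wordOf es, x = 2 ∨ x = 3 := by
  intro es
  induction es with
  | nil => intro x hx; simp [wordOf] at hx
  | cons a t ih =>
    cases t with
    | nil =>
      intro x hx
      right; exact List.eq_of_mem_replicate (by simpa [wordOf] using hx)
    | cons b t' =>
      intro x hx
      have hx' : x ∈ List.replicate a 3 ++ 2 :: wordOf (b :: t') := hx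
      rcases List.mem_append.mp hx' with h | h
      · right; exact List.eq_of_mem_replicate h
      · rcases List.mem_cons.mp h with rfl | h
        · left; rfl
        · exact ih x h

lemma two_mem_wordOf {es : List ℕ} (h : 2 ≤ es.length) : 2 ∈ wordOf es := by
  match es, h with
  | a :: b :: t, _ =>
    show 2 ∈ List.replicate a 3 ++ 2 :: wordOf (b :: t)
    exact List.mem_append.mpr (Or.inr List.mem_cons_self)

lemma min?_two {l : Word} (h2 : 2 ∈ l) (h23 : ∀ x ∈ l, x = 2 ∨ x = 3) :
    l.min? = some 2 :=
  List.min?_eq_some_iff'.mpr ⟨h2, fun b hb => by rcases h23 b hb with rfl | rfl <;> omega⟩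

lemma wle_top (f : ℕ) {e1 e2 : List ℕ}
    (hp1 : e1.Pairwise (fun x y => y ≤ x)) (hp2 : e2.Pairwise (fun x y => y ≤ x))
    (hne1 : e1 ≠ []) (hne2 : e2 ≠ [])
    (hmin : (wordOf e1 ++ wordOf e2).min? = some 2)
    (hlex : LexLe (leAux (f+1)) (blk e1) (blk e2)) :
    leAux (f+2) (wordOf e1) (wordOf e2) := by
  rw [leAux_succ_iff]
  refine Or.inr fun m hm MA MB hMA hMB => ?_
  rw [hmin] at hm
  injection hm with hm; subst hm
  rw [wordOf_splitOn e1 hne1] at hMA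
  rw [wordOf_splitOn e2 hne2] at hMB
  rw [lexmax_blk_unique f hp1 hMA, lexmax_blk_unique f hp2 hMB]
  exact hlex

lemma not_wle_top (f : ℕ) {e1 e2 : List ℕ}
    (hp1 : e1.Pairwise (fun x y => y ≤ x)) (hp2 : e2.Pairwise (fun x y => y ≤ x))
    (hne1 : e1 ≠ []) (hne2 : e2 ≠ []) (hw1 : wordOf e1 ≠ [])
    (hmin : (wordOf e1 ++ wordOf e2).min? = some 2)
    (hnlex : ¬ LexLe (leAux (f+1)) (blk e1) (blk e2)) :
    ¬ leAux (f+2) (wordOf e1) (wordOf e2) := by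
  rw [leAux_succ_iff]
  rintro (⟨h, _⟩ | h)
  · exact hw1 h
  · refine hnlex (h 2 hmin (blk e1) (blk e2) ?_ ?_)
    · rw [wordOf_splitOn e1 hne1]; exact isLexMax_blk f hp1
    · rw [wordOf_splitOn e2 hne2]; exact isLexMax_blk f hp2

lemma lexle_blk_prefix (f : ℕ) {e1 e2 : List ℕ} (hl : e1.length ≤ e2.length)
    (he : ∀ i < e1.length, e1.getD i 0 = e2.getD i 0) :
    LexLe (leAux (f+1)) (blk e1) (blk e2) := by
  left
  refine ⟨by simp [blk_length, hl], fun i hi => ?_⟩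
  have hi' : i < e1.length := by simpa [blk_length] using hi
  rw [blk_getD hi', blk_getD (lt_of_lt_of_le hi' hl), he i hi']
  exact ⟨(block_le_iff f _ _).mpr le_rfl, (block_le_iff f _ _).mpr le_rfl⟩

lemma lexlt_blk (f : ℕ) {e1 e2 : List ℕ} {s : ℕ} (hs1 : s < e1.length) (hs2 : s < e2.length)
    (he : ∀ i < s, e1.getD i 0 = e2.getD i 0) (hlt : e1.getD s 0 < e2.getD s 0) :
    LexLe (leAux (f+1)) (blk e1) (blk e2) ∧ ¬ LexLe (leAux (f+1)) (blk e2) (blk e1) := by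
  constructor
  · right
    refine ⟨s, by simpa [blk_length] using hs1, by simpa [blk_length] using hs2,
      fun i hi => ?_, ?_, ?_⟩
    · rw [blk_getD (by omega), blk_getD (by omega), he i hi]
      exact ⟨(block_le_iff f _ _).mpr le_rfl, (block_le_iff f _ _).mpr le_rfl⟩
    · rw [blk_getD hs1, blk_getD hs2]
      exact (block_le_iff f _ _).mpr (le_of_lt hlt)
    · rw [blk_getD hs2, blk_getD hs1, block_le_iff]
      omega
  · rintro (⟨_, h2⟩ | ⟨t, ht1, ht2, hte, htr, hneg⟩)
    · have := (h2 s (by simpa [blk_length] using hs2)).1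
      rw [blk_getD hs2, blk_getD hs1, block_le_iff] at this
      omega
    · have ht1' : t < e2.length := by simpa [blk_length] using ht1
      have ht2' : t < e1.length := by simpa [blk_length] using ht2
      rcases Nat.lt_trichotomy t s with htlt | rfl | htgt
      · rw [blk_getD ht2', blk_getD ht1', he t htlt] at hneg
        exact hneg ((block_le_iff f _ _).mpr le_rfl)
      · rw [blk_getD hs2, blk_getD hs1, block_le_iff] at htr
        omega
      · have := (hte s htgt).1
        rw [blk_getD hs2, blk_getD hs1, block_le_iff] at this
        omega

end AuxLemmas3

section AuxLemmas4

/-- The exponent list `[k+n-1, …, k+1, k, j]`. -/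
def elist (k n j : ℕ) : List ℕ := (List.range' k n).reverse ++ [j]

lemma elist_length (k n j : ℕ) : (elist k n j).length = n + 1 := by simp [elist]

lemma elist_ne_nil (k n j : ℕ) : elist k n j ≠ [] := by simp [elist]

lemma elist_getD_lt {k n j i : ℕ} (hi : i < n) : (elist k n j).getD i 0 = k + n - 1 - i := by
  have h1 : i < (List.range' k n).reverse.length := by simpa using hi
  rw [elist, List.getD_eq_getElem _ _ (by simp; omega), List.getElem_append_left h1,
    List.getElem_reverse]
  rw [List.getElem_range']
  simp
  omega

lemma elist_getD_last (k n j : ℕ) : (elist k n j).getD n 0 = j := by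
  rw [elist, List.getD_eq_getElem _ _ (by simp), List.getElem_append_right (by simp)]
  simp

lemma elist_pairwise {k n j : ℕ} (h : j ≤ k) :
    (elist k n j).Pairwise (fun x y => y ≤ x) := by
  rw [elist, List.pairwise_append]
  refine ⟨?_, List.pairwise_singleton _ _, ?_⟩
  · rw [List.pairwise_reverse]
    have : (List.range' k n).Pairwise (· < ·) := List.pairwise_lt_range'
    exact this.imp (fun {a b} hab => le_of_lt hab)
  · intro x hx y hy
    rw [List.mem_singleton] at hy
    subst hy
    have := (List.mem_range'_1.mp (List.mem_reverse.mp hx)).1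
    omega

lemma wordOf_snoc : ∀ es : List ℕ, es ≠ [] → ∀ j,
    wordOf (es ++ [j]) = wordOf es ++ 2 :: List.replicate j 3 := by
  intro es
  induction es with
  | nil => intro h; exact absurd rfl h
  | cons a t ih =>
    intro _ j
    cases t with
    | nil => rfl
    | cons b t' =>
      show List.replicate a 3 ++ 2 :: wordOf (b :: t' ++ [j]) = _
      rw [ih (by simp) j]
      show _ = (List.replicate a 3 ++ 2 :: wordOf (b :: t')) ++ 2 :: List.replicate j 3
      simp

lemma ipre_eq : ∀ n k j, Ipre (k + n) k ++ List.replicate j 3 = wordOf (elist k n j) := by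
  intro n
  induction n with
  | zero =>
    intro k j
    show (((List.range' k (k - k)).reverse).map Iword).flatten ++ _ = _
    rw [Nat.sub_self]
    rfl
  | succ n ih =>
    intro k j
    have hr : List.range' k (n+1) = k :: List.range' (k+1) n := List.range'_succ
    have h1 : Ipre (k + (n+1)) k =
        Ipre ((k+1) + n) (k+1) ++ (List.replicate k 3 ++ [2]) := by
      rw [Ipre, Ipre]
      have e1 : k + (n+1) - k = n + 1 := by omega
      have e2 : (k+1) + n - (k+1) = n := by omega
      rw [e1, e2, hr]
      simp [Iword]
    rw [h1]
    have h2 : elist k (n+1) j = elist (k+1) n k ++ [j] := by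
      rw [elist, elist, hr]
      simp
    rw [h2, wordOf_snoc _ (elist_ne_nil _ _ _) j, ← ih (k+1) k]
    simp

end AuxLemmas4

section AuxLemmas5

lemma wordOf_elist_ne_nil {k n j : ℕ} (hj : 1 ≤ j) : wordOf (elist k n j) ≠ [] := by
  cases n with
  | zero =>
    show wordOf (elist k 0 j) ≠ []
    have : elist k 0 j = [j] := rfl
    rw [this]
    show List.replicate j 3 ≠ []
    simp
    omega
  | succ m =>
    exact List.ne_nil_of_mem (two_mem_wordOf (by rw [elist_length]; omega))

lemma min?_wordOf_append {e1 e2 : List ℕ} (h : 2 ∈ wordOf e1 ∨ 2 ∈ wordOf e2) :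
    (wordOf e1 ++ wordOf e2).min? = some 2 := by
  apply min?_two
  · exact List.mem_append.mpr h
  · intro x hx
    rcases List.mem_append.mp hx with hx | hx
    · exact wordOf_mem e1 x hx
    · exact wordOf_mem e2 x hx

lemma wle_words {e1 e2 : List ℕ}
    (hp1 : e1.Pairwise (fun x y => y ≤ x)) (hp2 : e2.Pairwise (fun x y => y ≤ x))
    (hne1 : e1 ≠ []) (hne2 : e2 ≠ [])
    (h2 : 2 ∈ wordOf e1 ∨ 2 ∈ wordOf e2)
    (hlex : ∀ f : ℕ, LexLe (leAux (f+1)) (blk e1) (blk e2)) :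
    Wle (wordOf e1) (wordOf e2) := by
  have hne : (wordOf e1).length + (wordOf e2).length ≠ 0 := by
    rcases h2 with h | h
    · have := List.length_pos_iff.mpr (List.ne_nil_of_mem h); omega
    · have := List.length_pos_iff.mpr (List.ne_nil_of_mem h); omega
  obtain ⟨f, hf⟩ : ∃ f, (wordOf e1).length + (wordOf e2).length = f + 1 :=
    ⟨(wordOf e1).length + (wordOf e2).length - 1, by omega⟩
  show leAux ((wordOf e1).length + (wordOf e2).length + 1) _ _
  rw [hf]
  exact wle_top f hp1 hp2 hne1 hne2 (min?_wordOf_append h2) (hlex f)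

lemma not_wle_words {e1 e2 : List ℕ}
    (hp1 : e1.Pairwise (fun x y => y ≤ x)) (hp2 : e2.Pairwise (fun x y => y ≤ x))
    (hne1 : e1 ≠ []) (hne2 : e2 ≠ []) (hw1 : wordOf e1 ≠ [])
    (h2 : 2 ∈ wordOf e1 ∨ 2 ∈ wordOf e2)
    (hnlex : ∀ f : ℕ, ¬ LexLe (leAux (f+1)) (blk e1) (blk e2)) :
    ¬ Wle (wordOf e1) (wordOf e2) := by
  have hne : (wordOf e1).length + (wordOf e2).length ≠ 0 := by
    have := List.length_pos_iff.mpr hw1; omega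
  obtain ⟨f, hf⟩ : ∃ f, (wordOf e1).length + (wordOf e2).length = f + 1 :=
    ⟨(wordOf e1).length + (wordOf e2).length - 1, by omega⟩
  show ¬ leAux ((wordOf e1).length + (wordOf e2).length + 1) _ _
  rw [hf]
  exact not_wle_top f hp1 hp2 hne1 hne2 hw1 (min?_wordOf_append h2) (hnlex f)

end AuxLemmas5

theorem K_L_comparison (h k : ℕ) (h1 : 1 ≤ k) (h2 : k ≤ h) :
    (Wle (Ipre h k ++ List.replicate (k-1) 3) (Lword h) ∧
     Wlt (Lword h) (Kword h k)) ∧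
    (k < h → Wlt (Kword h k) (Kword h (k+1))) := by
  rcases Nat.lt_or_ge h 2 with hh1 | hh2
  · -- h = 1, k = 1
    have hk : k = 1 := by omega
    have hh : h = 1 := by omega
    subst hk; subst hh
    have hIpre : Ipre 1 1 = [] := by simp [Ipre]
    have hL : Lword 1 = [] := by rw [Lword, hIpre]
    have hK : Kword 1 1 = [3] := by rw [Kword, hIpre]; rfl
    refine ⟨⟨?_, ?_, ?_⟩, ?_⟩
    · rw [hIpre, hL]
      show leAux _ _ _
      exact leAux_nil _
    · rw [hL, hK]
      exact (block_le_iff 1 0 1).mpr (by omega)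
    · rw [hL, hK]
      intro hcon
      have := (block_le_iff 1 1 0).mp hcon
      omega
    · intro hcon; omega
  · -- h ≥ 2
    set n := h - k with hn
    have hhk : h = k + n := by omega
    have wX : Ipre h k ++ List.replicate (k-1) 3 = wordOf (elist k n (k-1)) := by
      have := ipre_eq n k (k-1); rw [← hhk] at this; exact this
    have wL : Lword h = wordOf (elist 1 (h-1) 0) := by
      have := ipre_eq (h-1) 1 0
      rw [show 1 + (h-1) = h by omega] at this
      rw [Lword, ← this]
      simp
    have wK : Kword h k = wordOf (elist k n k) := by
      have := ipre_eq n k k; rw [← hhk] at this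
      rw [Kword, this]
    -- pairwise facts
    have hpX := elist_pairwise (k := k) (n := n) (j := k-1) (by omega)
    have hpL := elist_pairwise (k := 1) (n := h-1) (j := 0) (by omega)
    have hpK := elist_pairwise (k := k) (n := n) (j := k) le_rfl
    have hL2 : 2 ∈ wordOf (elist 1 (h-1) 0) := two_mem_wordOf (by rw [elist_length]; omega)
    -- (a2) strict comparison data : L vs K at position s = n
    have hLKlex : ∀ f : ℕ, LexLe (leAux (f+1)) (blk (elist 1 (h-1) 0)) (blk (elist k n k)) ∧
        ¬ LexLe (leAux (f+1)) (blk (elist k n k)) (blk (elist 1 (h-1) 0)) := by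
      intro f
      apply lexlt_blk f (s := n)
      · rw [elist_length]; omega
      · rw [elist_length]; omega
      · intro i hi
        rw [elist_getD_lt (show i < h-1 by omega), elist_getD_lt (show i < n from hi)]
        omega
      · rcases Nat.lt_or_ge n (h-1) with hcase | hcase
        · rw [elist_getD_lt hcase, elist_getD_last]
          omega
        · have hn' : n = h - 1 := by omega
          rw [hn', elist_getD_last, ← hn', elist_getD_last]
          omega
    refine ⟨⟨?_, ?_, ?_⟩, ?_⟩
    · -- (a1)  X ≼ L
      rw [wX, wL]
      apply wle_words hpX hpL (elist_ne_nil _ _ _) (elist_ne_nil _ _ _) (Or.inr hL2)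
      intro f
      apply lexle_blk_prefix f
      · rw [elist_length, elist_length]; omega
      · intro i hi
        rw [elist_length] at hi
        rcases Nat.lt_or_ge i n with hin | hin
        · rw [elist_getD_lt hin, elist_getD_lt (show i < h-1 by omega)]
          omega
        · have hi' : i = n := by omega
          subst hi'
          rw [elist_getD_last]
          rcases Nat.lt_or_ge n (h-1) with hcase | hcase
          · rw [elist_getD_lt hcase]; omega
          · have hn' : n = h - 1 := by omega
            rw [hn', elist_getD_last]
            omega
    · -- (a2)  L ≼ K
      rw [wL, wK]
      apply wle_words hpL hpK (elist_ne_nil _ _ _) (elist_ne_nil _ _ _) (Or.inl hL2)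
      intro f
      exact (hLKlex f).1
    · -- (a2)  ¬ K ≼ L
      rw [wL, wK]
      apply not_wle_words hpK hpL (elist_ne_nil _ _ _) (elist_ne_nil _ _ _)
        (wordOf_elist_ne_nil (by omega)) (Or.inr hL2)
      intro f
      exact (hLKlex f).2
    · -- (b)
      intro hkh
      have hn1 : 1 ≤ n := by omega
      have wK' : Kword h (k+1) = wordOf (elist (k+1) (n-1) (k+1)) := by
        have := ipre_eq (n-1) (k+1) (k+1)
        rw [show (k+1) + (n-1) = h by omega] at this
        rw [Kword, this]
      have hpK' := elist_pairwise (k := k+1) (n := n-1) (j := k+1) le_rfl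
      have hK2 : 2 ∈ wordOf (elist k n k) := two_mem_wordOf (by rw [elist_length]; omega)
      have hKKlex : ∀ f : ℕ, LexLe (leAux (f+1)) (blk (elist k n k)) (blk (elist (k+1) (n-1) (k+1))) ∧
          ¬ LexLe (leAux (f+1)) (blk (elist (k+1) (n-1) (k+1))) (blk (elist k n k)) := by
        intro f
        apply lexlt_blk f (s := n-1)
        · rw [elist_length]; omega
        · rw [elist_length]; omega
        · intro i hi
          rw [elist_getD_lt (show i < n by omega), elist_getD_lt (show i < n-1 from hi)]
          omega
        · rw [elist_getD_lt (show n-1 < n by omega),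
            show n-1 = (n-1) from rfl]
          rw [elist_getD_last]
          omega
      constructor
      · rw [wK, wK']
        apply wle_words hpK hpK' (elist_ne_nil _ _ _) (elist_ne_nil _ _ _) (Or.inl hK2)
        intro f
        exact (hKKlex f).1
      · rw [wK, wK']
        apply not_wle_words hpK' hpK (elist_ne_nil _ _ _) (elist_ne_nil _ _ _)
          (wordOf_elist_ne_nil (by omega)) (Or.inr hK2)
        intro f
        exact (hKKlex f).2
end

section
/- For all words C, D ∈ W_ω, C ≾ CD; that is, appending any word on the right does not decrease a word in the preorder ≾. -/
open scoped Classical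

namespace WormProof
open List

lemma min?_iff {l : List ℕ} {m : ℕ} : l.min? = some m ↔ m ∈ l ∧ ∀ b ∈ l, m ≤ b :=
  List.min?_eq_some_iff

lemma splitOn_ne_nil (m : ℕ) (l : Word) : l.splitOn m ≠ [] := List.splitOnP_ne_nil _ l

lemma splitOn_nil (m : ℕ) : ([] : Word).splitOn m = [[]] := rfl

lemma splitOn_cons (m c : ℕ) (C : Word) :
    (c :: C).splitOn m =
      if c = m then [] :: C.splitOn m else (C.splitOn m).modifyHead (c :: ·) := by
  simp only [List.splitOn, List.splitOnP_cons, beq_iff_eq]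

lemma splitOn_sum (m : ℕ) (A : Word) :
    ((A.splitOn m).map List.length).sum + (A.splitOn m).length = A.length + 1 := by
  induction A with
  | nil => simp [splitOn_nil]
  | cons c C ih =>
    rw [splitOn_cons]
    by_cases hc : c = m
    · simp only [if_pos hc, List.map_cons, List.sum_cons, List.length_cons, List.length_nil]
      omega
    · rw [if_neg hc]
      rcases h : C.splitOn m with _ | ⟨h0, t⟩
      · exact absurd h (splitOn_ne_nil m C)
      · rw [h] at ih
        simp only [List.modifyHead, List.map_cons, List.sum_cons, List.length_cons] at ih ⊢
        omega

lemma splitOn_not_mem {m : ℕ} {A : Word} (h : m ∉ A) : A.splitOn m = [A] := by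
  apply List.splitOnP_eq_single
  intro x hx
  have hne : x ≠ m := fun hxm => h (hxm ▸ hx)
  simpa using hne

lemma two_le_splitOn_length {m : ℕ} {A : Word} (h : m ∈ A) : 2 ≤ (A.splitOn m).length := by
  induction A with
  | nil => simp at h
  | cons c C ih =>
    rw [splitOn_cons]
    by_cases hc : c = m
    · rw [if_pos hc]
      have h1 : 1 ≤ (C.splitOn m).length := List.length_pos_iff.mpr (splitOn_ne_nil m C)
      simp only [List.length_cons]
      omega
    · rw [if_neg hc]
      have hm : m ∈ C := by
        rcases List.mem_cons.mp h with h' | h'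
        · exact absurd h'.symm hc
        · exact h'
      have h2 := ih hm
      rcases hC : C.splitOn m with _ | ⟨h0, t⟩
      · exact absurd hC (splitOn_ne_nil m C)
      · rw [hC] at h2; simpa using h2

lemma length_le_of_mem {u : Word} {l : List Word} (h : u ∈ l) :
    u.length ≤ (l.map List.length).sum := by
  induction l with
  | nil => simp at h
  | cons a l ih =>
    rcases List.mem_cons.mp h with rfl | h'
    · simp
    · simp only [List.map_cons, List.sum_cons]
      exact le_add_of_nonneg_of_le (Nat.zero_le _) (ih h')

lemma length_le_of_mem₂ {u v : Word} {l : List Word} (hu : u ∈ l) (hv : v ∈ l) (huv : u ≠ v) :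
    u.length + v.length ≤ (l.map List.length).sum ∧ 2 ≤ l.length := by
  induction l with
  | nil => simp at hu
  | cons a l ih =>
    simp only [List.map_cons, List.sum_cons, List.length_cons]
    rcases List.mem_cons.mp hu with rfl | hu'
    · have hv' : v ∈ l := by
        rcases List.mem_cons.mp hv with h' | h'
        · exact absurd h'.symm huv
        · exact h'
      have h1 := length_le_of_mem hv'
      have h2 : 1 ≤ l.length := List.length_pos_iff.mpr (List.ne_nil_of_mem hv')
      omega
    · rcases List.mem_cons.mp hv with rfl | hv'
      · have h1 := length_le_of_mem hu'
        have h2 : 1 ≤ l.length := List.length_pos_iff.mpr (List.ne_nil_of_mem hu')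
        omega
      · have h1 := ih hu' hv'
        omega

lemma length_le_of_mem₃ {u v w : Word} {l : List Word} (hu : u ∈ l) (hv : v ∈ l) (hw : w ∈ l)
    (huv : u ≠ v) (hvw : v ≠ w) (huw : u ≠ w) :
    u.length + v.length + w.length ≤ (l.map List.length).sum ∧ 3 ≤ l.length := by
  induction l with
  | nil => simp at hu
  | cons a l ih =>
    simp only [List.map_cons, List.sum_cons, List.length_cons]
    rcases List.mem_cons.mp hu with rfl | hu'
    · have hv' : v ∈ l := by
        rcases List.mem_cons.mp hv with h' | h'
        · exact absurd h'.symm huv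
        · exact h'
      have hw' : w ∈ l := by
        rcases List.mem_cons.mp hw with h' | h'
        · exact absurd h'.symm huw
        · exact h'
      have h1 := length_le_of_mem₂ hv' hw' hvw
      omega
    · rcases List.mem_cons.mp hv with rfl | hv'
      · have hw' : w ∈ l := by
          rcases List.mem_cons.mp hw with h' | h'
          · exact absurd h'.symm hvw
          · exact h'
        have h1 := length_le_of_mem₂ hu' hw' huw
        omega
      · rcases List.mem_cons.mp hw with rfl | hw'
        · have h1 := length_le_of_mem₂ hu' hv' huv
          omega
        · have h1 := ih hu' hv' hw'
          omega

/-- length bound: single member -/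
lemma mem_splitOn_length {m : ℕ} {A u : Word} (h : u ∈ A.splitOn m) : u.length ≤ A.length := by
  have h1 := length_le_of_mem h
  have h2 := splitOn_sum m A
  have h3 : 1 ≤ (A.splitOn m).length := List.length_pos_iff.mpr (splitOn_ne_nil m A)
  omega

lemma mem_splitOn_length_lt {m : ℕ} {A u : Word} (hm : m ∈ A) (h : u ∈ A.splitOn m) :
    u.length < A.length := by
  have h1 := length_le_of_mem h
  have h2 := splitOn_sum m A
  have h3 := two_le_splitOn_length hm
  omega

lemma mem_splitOn_length₂ {m : ℕ} {A u v : Word} (hu : u ∈ A.splitOn m) (hv : v ∈ A.splitOn m)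
    (huv : u ≠ v) : u.length + v.length < A.length := by
  have h1 := length_le_of_mem₂ hu hv huv
  have h2 := splitOn_sum m A
  omega

lemma mem_splitOn_length₃ {m : ℕ} {A u v w : Word} (hu : u ∈ A.splitOn m) (hv : v ∈ A.splitOn m)
    (hw : w ∈ A.splitOn m) (huv : u ≠ v) (hvw : v ≠ w) (huw : u ≠ w) :
    u.length + v.length + w.length + 1 < A.length := by
  have h1 := length_le_of_mem₃ hu hv hw huv hvw huw
  have h2 := splitOn_sum m A
  omega

lemma splitOn_append {m : ℕ} {C D : Word} {I : List Word} {lk w : Word} {T : List Word}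
    (hC : C.splitOn m = I ++ [lk]) (hD : D.splitOn m = w :: T) :
    (C ++ D).splitOn m = I ++ (lk ++ w) :: T := by
  induction C generalizing I lk with
  | nil =>
    rw [splitOn_nil] at hC
    rcases I with _ | ⟨i0, I'⟩
    · simp only [List.nil_append] at hC ⊢
      have hlk : lk = [] := by
        injection hC with h1 _
        exact h1.symm
      subst hlk
      simpa using hD
    · exfalso
      have : ([[]] : List Word).length = (i0 :: I' ++ [lk]).length := by rw [hC]
      simp at this
  | cons c C' ih =>
    by_cases hc : c = m
    · rw [List.cons_append, splitOn_cons, if_pos hc]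
      rw [splitOn_cons, if_pos hc] at hC
      rcases I with _ | ⟨i0, I'⟩
      · exfalso
        simp only [List.nil_append] at hC
        have h1 : C'.splitOn m = [] := by
          have := hC
          injection this with _ h2
        exact splitOn_ne_nil m C' h1
      · simp only [List.cons_append] at hC
        injection hC with h1 h2
        rw [ih h2, ← h1]
        simp
    · rw [List.cons_append, splitOn_cons, if_neg hc]
      rw [splitOn_cons, if_neg hc] at hC
      rcases hC' : C'.splitOn m with _ | ⟨h0, t⟩
      · exact absurd hC' (splitOn_ne_nil m C')
      · rw [hC'] at hC
        simp only [List.modifyHead] at hC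
        rcases I with _ | ⟨i0, I'⟩
        · simp only [List.nil_append] at hC ⊢
          injection hC with h1 h2
          subst h2
          have := ih (I := []) (lk := h0) (by simp [hC'])
          rw [this]
          simp [← h1]
        · simp only [List.cons_append] at hC
          injection hC with h1 h2
          have := ih (I := h0 :: I') (lk := lk) (by simp [hC', h2])
          rw [this]
          simp [← h1]

end WormProof
namespace WormProof

def Le (A B : Word) : Prop := leAux (A.length + B.length + 1) A B

lemma getD_mem {l : List Word} {i : ℕ} (h : i < l.length) : l.getD i [] ∈ l := by
  rw [List.getD_eq_getElem _ _ h]; exact List.getElem_mem h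

lemma lexLe_nil_left (r : Word → Word → Prop) (M : List Word) : LexLe r [] M :=
  Or.inl ⟨Nat.zero_le _, by simp⟩

lemma lexLe_nil_right {r : Word → Word → Prop} {N : List Word} (h : LexLe r N []) : N = [] := by
  rcases h with ⟨h1, _⟩ | ⟨s, _, h2, _⟩
  · exact List.length_eq_zero_iff.mp (Nat.le_zero.mp (by simpa using h1))
  · simp at h2

lemma leAux_refl (f : ℕ) (A : Word) : leAux (f+1) A A := by
  right
  intro m _ MA MB hMA hMB
  exact hMB.2 MA hMA.1

lemma leAux_refl' {f : ℕ} (h : 1 ≤ f) (A : Word) : leAux f A A := by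
  cases f with
  | zero => omega
  | succ f => exact leAux_refl f A

lemma le_refl (A : Word) : Le A A := leAux_refl _ A

lemma lexLe_congr {r r' : Word → Word → Prop} {xs ys : List Word}
    (H : ∀ u v, u ∈ xs ++ ys → v ∈ xs ++ ys → (r u v ↔ r' u v)) :
    LexLe r xs ys ↔ LexLe r' xs ys := by
  have key : ∀ i, i < xs.length → i < ys.length →
      ((r (xs.getD i []) (ys.getD i []) ↔ r' (xs.getD i []) (ys.getD i [])) ∧
       (r (ys.getD i []) (xs.getD i []) ↔ r' (ys.getD i []) (xs.getD i []))) := by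
    intro i hx hy
    have hmx := List.mem_append_left ys (getD_mem hx)
    have hmy := List.mem_append_right xs (getD_mem hy)
    exact ⟨H _ _ hmx hmy, H _ _ hmy hmx⟩
  constructor <;> intro h
  · rcases h with ⟨h1, h2⟩ | ⟨s, h1, h2, h3, h4, h5⟩
    · left; refine ⟨h1, fun i hi => ?_⟩
      have k := key i hi (lt_of_lt_of_le hi h1)
      exact ⟨k.1.mp (h2 i hi).1, k.2.mp (h2 i hi).2⟩
    · right
      refine ⟨s, h1, h2, fun i hi => ?_, (key s h1 h2).1.mp h4, fun hr => h5 ((key s h1 h2).2.mpr hr)⟩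
      have k := key i (hi.trans h1) (hi.trans h2)
      exact ⟨k.1.mp (h3 i hi).1, k.2.mp (h3 i hi).2⟩
  · rcases h with ⟨h1, h2⟩ | ⟨s, h1, h2, h3, h4, h5⟩
    · left; refine ⟨h1, fun i hi => ?_⟩
      have k := key i hi (lt_of_lt_of_le hi h1)
      exact ⟨k.1.mpr (h2 i hi).1, k.2.mpr (h2 i hi).2⟩
    · right
      refine ⟨s, h1, h2, fun i hi => ?_, (key s h1 h2).1.mpr h4, fun hr => h5 ((key s h1 h2).2.mp hr)⟩
      have k := key i (hi.trans h1) (hi.trans h2)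
      exact ⟨k.1.mpr (h3 i hi).1, k.2.mpr (h3 i hi).2⟩

lemma isLexMax_congr {r r' : Word → Word → Prop} {xs M : List Word}
    (H : ∀ u v, u ∈ xs → v ∈ xs → (r u v ↔ r' u v)) :
    IsLexMax r xs M ↔ IsLexMax r' xs M := by
  constructor <;> intro h
  · refine ⟨h.1, fun N hN => ?_⟩
    have := h.2 N hN
    rwa [lexLe_congr (fun u v hu hv => H u v ?_ ?_)] at this
    · rcases List.mem_append.mp hu with h' | h'
      · exact hN.subset h'
      · exact h.1.subset h'
    · rcases List.mem_append.mp hv with h' | h'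
      · exact hN.subset h'
      · exact h.1.subset h'
  · refine ⟨h.1, fun N hN => ?_⟩
    have := h.2 N hN
    rwa [← lexLe_congr (fun u v hu hv => H u v ?_ ?_)] at this
    · rcases List.mem_append.mp hu with h' | h'
      · exact hN.subset h'
      · exact h.1.subset h'
    · rcases List.mem_append.mp hv with h' | h'
      · exact hN.subset h'
      · exact h.1.subset h'

lemma inner_congr {r r' : Word → Word → Prop} {XA XB : List Word}
    (hpair : ∀ u v, u ∈ XA ++ XB → v ∈ XA ++ XB → (r u v ↔ r' u v)) :
    (∀ MA MB : List Word, IsLexMax r XA MA → IsLexMax r XB MB → LexLe r MA MB) ↔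
    (∀ MA MB : List Word, IsLexMax r' XA MA → IsLexMax r' XB MB → LexLe r' MA MB) := by
  have hA : ∀ u v, u ∈ XA → v ∈ XA → (r u v ↔ r' u v) := fun u v hu hv =>
    hpair u v (List.mem_append_left _ hu) (List.mem_append_left _ hv)
  have hB : ∀ u v, u ∈ XB → v ∈ XB → (r u v ↔ r' u v) := fun u v hu hv =>
    hpair u v (List.mem_append_right _ hu) (List.mem_append_right _ hv)
  constructor <;> intro h MA MB h1 h2
  · rw [← lexLe_congr (fun u v hu hv => hpair u v ?_ ?_)]
    · exact h MA MB ((isLexMax_congr hA).mpr h1) ((isLexMax_congr hB).mpr h2)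
    · rcases List.mem_append.mp hu with h' | h'
      · exact List.mem_append_left _ (h1.1.subset h')
      · exact List.mem_append_right _ (h2.1.subset h')
    · rcases List.mem_append.mp hv with h' | h'
      · exact List.mem_append_left _ (h1.1.subset h')
      · exact List.mem_append_right _ (h2.1.subset h')
  · rw [lexLe_congr (fun u v hu hv => hpair u v ?_ ?_)]
    · exact h MA MB ((isLexMax_congr hA).mp h1) ((isLexMax_congr hB).mp h2)
    · rcases List.mem_append.mp hu with h' | h'
      · exact List.mem_append_left _ (h1.1.subset h')
      · exact List.mem_append_right _ (h2.1.subset h')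
    · rcases List.mem_append.mp hv with h' | h'
      · exact List.mem_append_left _ (h1.1.subset h')
      · exact List.mem_append_right _ (h2.1.subset h')

lemma cross_length {m : ℕ} {A B u v : Word} (hm : m ∈ A ++ B)
    (hu : u ∈ A.splitOn m) (hv : v ∈ B.splitOn m) :
    u.length + v.length < A.length + B.length := by
  rcases List.mem_append.mp hm with h | h
  · have := mem_splitOn_length_lt h hu
    have := mem_splitOn_length hv
    omega
  · have := mem_splitOn_length hu
    have := mem_splitOn_length_lt h hv
    omega

lemma pair_bound {m : ℕ} {A B u v : Word} (hm : m ∈ A ++ B)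
    (hu : u ∈ A.splitOn m ++ B.splitOn m) (hv : v ∈ A.splitOn m ++ B.splitOn m)
    (huv : u ≠ v) : u.length + v.length < A.length + B.length := by
  have h1 : 1 ≤ A.length + B.length := by
    have h0 := List.length_pos_iff.mpr (List.ne_nil_of_mem hm)
    rw [List.length_append] at h0; omega
  rcases List.mem_append.mp hu with hu' | hu' <;> rcases List.mem_append.mp hv with hv' | hv'
  · have := mem_splitOn_length₂ hu' hv' huv; omega
  · exact cross_length hm hu' hv'
  · have := cross_length hm hv' hu'; omega
  · have := mem_splitOn_length₂ hu' hv' huv; omega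

lemma stab : ∀ n f g (A B : Word), A.length + B.length ≤ n → n < f → n < g →
    (leAux f A B ↔ leAux g A B) := by
  intro n
  induction n using Nat.strong_induction_on with
  | _ n IH =>
    intro f g A B hn hf hg
    obtain ⟨f', rfl⟩ : ∃ f', f = f' + 1 := ⟨f - 1, by omega⟩
    obtain ⟨g', rfl⟩ : ∃ g', g = g' + 1 := ⟨g - 1, by omega⟩
    show ((A = [] ∧ B = []) ∨ _) ↔ ((A = [] ∧ B = []) ∨ _)
    apply or_congr_right
    apply forall_congr'
    intro m
    apply imp_congr_right
    intro hm
    have hmem : m ∈ A ++ B := (min?_iff.mp hm).1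
    have hlen1 : 1 ≤ A.length + B.length := by
      have h0 := List.length_pos_iff.mpr (List.ne_nil_of_mem hmem)
      rw [List.length_append] at h0; omega
    apply inner_congr
    intro u v hu hv
    by_cases huv : u = v
    · subst huv
      constructor <;> intro _
      · exact leAux_refl' (by omega) u
      · exact leAux_refl' (by omega) u
    · exact IH (u.length + v.length) (by have := pair_bound hmem hu hv huv; omega)
        f' g' u v le_rfl (by have := pair_bound hmem hu hv huv; omega)
        (by have := pair_bound hmem hu hv huv; omega)

lemma le_iff (A B : Word) : Le A B ↔ (A = [] ∧ B = []) ∨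
    (∀ m, (A ++ B).min? = some m →
      ∀ MA MB : List Word, IsLexMax Le (A.splitOn m) MA →
        IsLexMax Le (B.splitOn m) MB → LexLe Le MA MB) := by
  show ((A = [] ∧ B = []) ∨ _) ↔ _
  apply or_congr_right
  apply forall_congr'
  intro m
  apply imp_congr_right
  intro hm
  have hmem : m ∈ A ++ B := (min?_iff.mp hm).1
  have hlen1 : 1 ≤ A.length + B.length := by
    have h0 := List.length_pos_iff.mpr (List.ne_nil_of_mem hmem)
    rw [List.length_append] at h0; omega
  apply inner_congr
  intro u v hu hv
  by_cases huv : u = v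
  · subst huv
    constructor <;> intro _
    · exact le_refl u
    · exact leAux_refl' (by omega) u
  · exact stab (u.length + v.length) _ _ u v le_rfl
      (by have := pair_bound hmem hu hv huv; omega) (by omega)

end WormProof
namespace WormProof

/-- all six transitivity statements among three fixed words -/
def SymTrans (r : Word → Word → Prop) (u v w : Word) : Prop :=
  ∀ a b c, (a = u ∨ a = v ∨ a = w) → (b = u ∨ b = v ∨ b = w) → (c = u ∨ c = v ∨ c = w) →
    r a b → r b c → r a c

lemma lexLe_trans {r : Word → Word → Prop} {xs ys zs : List Word}
    (h1 : LexLe r xs ys) (h2 : LexLe r ys zs)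
    (H : ∀ i, i < xs.length → i < ys.length → i < zs.length →
      SymTrans r (xs.getD i []) (ys.getD i []) (zs.getD i [])) :
    LexLe r xs zs := by
  set x := fun i => xs.getD i [] with hx
  set y := fun i => ys.getD i [] with hy
  set z := fun i => zs.getD i [] with hz
  rcases h1 with ⟨l1, e1⟩ | ⟨s, s1, s2, pri1, st1, ns1⟩
  · rcases h2 with ⟨l2, e2⟩ | ⟨t, t1, t2, pri2, st2, ns2⟩
    · left
      refine ⟨l1.trans l2, fun i hi => ?_⟩
      have hiy := lt_of_lt_of_le hi l1
      have hiz := lt_of_lt_of_le hiy l2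
      have S := H i hi hiy hiz
      exact ⟨S (x i) (y i) (z i) (Or.inl rfl) (Or.inr (Or.inl rfl)) (Or.inr (Or.inr rfl))
          (e1 i hi).1 (e2 i hiy).1,
        S (z i) (y i) (x i) (Or.inr (Or.inr rfl)) (Or.inr (Or.inl rfl)) (Or.inl rfl)
          (e2 i hiy).2 (e1 i hi).2⟩
    · by_cases hs : t < xs.length
      · right
        refine ⟨t, hs, t2, fun i hi => ?_, ?_, ?_⟩
        · have hiy := hi.trans t1
          have hix := hi.trans hs
          have S := H i hix hiy (hi.trans t2)
          exact ⟨S (x i) (y i) (z i) (Or.inl rfl) (Or.inr (Or.inl rfl)) (Or.inr (Or.inr rfl))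
              (e1 i hix).1 (pri2 i hi).1,
            S (z i) (y i) (x i) (Or.inr (Or.inr rfl)) (Or.inr (Or.inl rfl)) (Or.inl rfl)
              (pri2 i hi).2 (e1 i hix).2⟩
        · exact H t hs t1 t2 (x t) (y t) (z t) (Or.inl rfl) (Or.inr (Or.inl rfl))
            (Or.inr (Or.inr rfl)) (e1 t hs).1 st2
        · intro hzx
          exact ns2 (H t hs t1 t2 (z t) (x t) (y t) (Or.inr (Or.inr rfl)) (Or.inl rfl)
            (Or.inr (Or.inl rfl)) hzx (e1 t hs).1)
      · left
        refine ⟨by omega, fun i hi => ?_⟩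
        have hit : i < t := by omega
        have hiy := lt_of_lt_of_le hi l1
        have S := H i hi hiy (hit.trans t2)
        exact ⟨S (x i) (y i) (z i) (Or.inl rfl) (Or.inr (Or.inl rfl)) (Or.inr (Or.inr rfl))
            (e1 i hi).1 (pri2 i hit).1,
          S (z i) (y i) (x i) (Or.inr (Or.inr rfl)) (Or.inr (Or.inl rfl)) (Or.inl rfl)
            (pri2 i hit).2 (e1 i hi).2⟩
  · rcases h2 with ⟨l2, e2⟩ | ⟨t, t1, t2, pri2, st2, ns2⟩
    · right
      refine ⟨s, s1, lt_of_lt_of_le s2 l2, fun i hi => ?_, ?_, ?_⟩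
      · have hiy := hi.trans s2
        have S := H i (hi.trans s1) hiy (lt_of_lt_of_le hiy l2)
        exact ⟨S (x i) (y i) (z i) (Or.inl rfl) (Or.inr (Or.inl rfl)) (Or.inr (Or.inr rfl))
            (pri1 i hi).1 (e2 i hiy).1,
          S (z i) (y i) (x i) (Or.inr (Or.inr rfl)) (Or.inr (Or.inl rfl)) (Or.inl rfl)
            (e2 i hiy).2 (pri1 i hi).2⟩
      · exact H s s1 s2 (lt_of_lt_of_le s2 l2) (x s) (y s) (z s) (Or.inl rfl)
          (Or.inr (Or.inl rfl)) (Or.inr (Or.inr rfl)) st1 (e2 s s2).1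
      · intro hzx
        exact ns1 (H s s1 s2 (lt_of_lt_of_le s2 l2) (y s) (z s) (x s) (Or.inr (Or.inl rfl))
          (Or.inr (Or.inr rfl)) (Or.inl rfl) (e2 s s2).1 hzx)
    · rcases lt_trichotomy s t with hst | rfl | hts
      · right
        refine ⟨s, s1, hst.trans t2, fun i hi => ?_, ?_, ?_⟩
        · have S := H i (hi.trans s1) (hi.trans s2) ((hi.trans hst).trans t2)
          exact ⟨S (x i) (y i) (z i) (Or.inl rfl) (Or.inr (Or.inl rfl)) (Or.inr (Or.inr rfl))
              (pri1 i hi).1 (pri2 i (hi.trans hst)).1,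
            S (z i) (y i) (x i) (Or.inr (Or.inr rfl)) (Or.inr (Or.inl rfl)) (Or.inl rfl)
              (pri2 i (hi.trans hst)).2 (pri1 i hi).2⟩
        · exact H s s1 s2 (hst.trans t2) (x s) (y s) (z s) (Or.inl rfl) (Or.inr (Or.inl rfl))
            (Or.inr (Or.inr rfl)) st1 (pri2 s hst).1
        · intro hzx
          exact ns1 (H s s1 s2 (hst.trans t2) (y s) (z s) (x s) (Or.inr (Or.inl rfl))
            (Or.inr (Or.inr rfl)) (Or.inl rfl) (pri2 s hst).1 hzx)
      · right
        refine ⟨s, s1, t2, fun i hi => ?_, ?_, ?_⟩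
        · have S := H i (hi.trans s1) (hi.trans s2) (hi.trans t2)
          exact ⟨S (x i) (y i) (z i) (Or.inl rfl) (Or.inr (Or.inl rfl)) (Or.inr (Or.inr rfl))
              (pri1 i hi).1 (pri2 i hi).1,
            S (z i) (y i) (x i) (Or.inr (Or.inr rfl)) (Or.inr (Or.inl rfl)) (Or.inl rfl)
              (pri2 i hi).2 (pri1 i hi).2⟩
        · exact H s s1 s2 t2 (x s) (y s) (z s) (Or.inl rfl) (Or.inr (Or.inl rfl))
            (Or.inr (Or.inr rfl)) st1 st2
        · intro hzx
          exact ns2 (H s s1 s2 t2 (z s) (x s) (y s) (Or.inr (Or.inr rfl)) (Or.inl rfl)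
            (Or.inr (Or.inl rfl)) hzx st1)
      · right
        refine ⟨t, hts.trans s1, t2, fun i hi => ?_, ?_, ?_⟩
        · have S := H i ((hi.trans hts).trans s1) (hi.trans t1) (hi.trans t2)
          exact ⟨S (x i) (y i) (z i) (Or.inl rfl) (Or.inr (Or.inl rfl)) (Or.inr (Or.inr rfl))
              (pri1 i (hi.trans hts)).1 (pri2 i hi).1,
            S (z i) (y i) (x i) (Or.inr (Or.inr rfl)) (Or.inr (Or.inl rfl)) (Or.inl rfl)
              (pri2 i hi).2 (pri1 i (hi.trans hts)).2⟩
        · exact H t (hts.trans s1) t1 t2 (x t) (y t) (z t) (Or.inl rfl) (Or.inr (Or.inl rfl))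
            (Or.inr (Or.inr rfl)) (pri1 t hts).1 st2
        · intro hzx
          exact ns2 (H t (hts.trans s1) t1 t2 (z t) (x t) (y t) (Or.inr (Or.inr rfl))
            (Or.inl rfl) (Or.inr (Or.inl rfl)) hzx (pri1 t hts).1)

lemma lexLe_total {r : Word → Word → Prop} {xs ys : List Word}
    (H : ∀ i, i < xs.length → i < ys.length →
      r (xs.getD i []) (ys.getD i []) ∨ r (ys.getD i []) (xs.getD i [])) :
    LexLe r xs ys ∨ LexLe r ys xs := by
  by_cases hex : ∃ i, i < xs.length ∧ i < ys.length ∧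
      ¬(r (xs.getD i []) (ys.getD i []) ∧ r (ys.getD i []) (xs.getD i []))
  · have hs := Nat.find_spec hex
    set s := Nat.find hex with hsdef
    obtain ⟨hs1, hs2, hs3⟩ := hs
    have hpri : ∀ i < s, r (xs.getD i []) (ys.getD i []) ∧ r (ys.getD i []) (xs.getD i []) := by
      intro i hi
      by_contra hcon
      have := Nat.find_min hex hi
      exact this ⟨hi.trans hs1, hi.trans hs2, hcon⟩
    rcases H s hs1 hs2 with h | h
    · have hnot : ¬ r (ys.getD s []) (xs.getD s []) := fun h' => hs3 ⟨h, h'⟩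
      exact Or.inl (Or.inr ⟨s, hs1, hs2, hpri, h, hnot⟩)
    · have hnot : ¬ r (xs.getD s []) (ys.getD s []) := fun h' => hs3 ⟨h', h⟩
      exact Or.inr (Or.inr ⟨s, hs2, hs1, fun i hi => ⟨(hpri i hi).2, (hpri i hi).1⟩, h, hnot⟩)
  · push_neg at hex
    rcases le_or_gt xs.length ys.length with hl | hl
    · exact Or.inl (Or.inl ⟨hl, fun i hi => hex i hi (lt_of_lt_of_le hi hl)⟩)
    · refine Or.inr (Or.inl ⟨le_of_lt hl, fun i hi => ?_⟩)
      have := hex i (hi.trans hl) hi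
      exact ⟨this.2, this.1⟩

end WormProof
namespace WormProof

lemma lexLe_cons {r : Word → Word → Prop} {a b : Word} {xs ys : List Word}
    (hab : r a b) (hba : r b a) (h : LexLe r xs ys) : LexLe r (a :: xs) (b :: ys) := by
  rcases h with ⟨l, e⟩ | ⟨s, s1, s2, pri, st, ns⟩
  · left
    refine ⟨by simpa using Nat.succ_le_succ l, fun i hi => ?_⟩
    cases i with
    | zero => simpa using ⟨hab, hba⟩
    | succ j =>
      simp only [List.getD_cons_succ]
      exact e j (by simpa using hi)
  · right
    refine ⟨s + 1, by simpa using Nat.succ_lt_succ s1, by simpa using Nat.succ_lt_succ s2,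
      fun i hi => ?_, by simpa using st, by simpa using ns⟩
    cases i with
    | zero => simpa using ⟨hab, hba⟩
    | succ j =>
      simp only [List.getD_cons_succ]
      exact pri j (by omega)

lemma exists_max (r : Word → Word → Prop) : ∀ (xs : List Word), xs ≠ [] →
    (∀ u ∈ xs, r u u) → (∀ u ∈ xs, ∀ v ∈ xs, r u v ∨ r v u) →
    (∀ u ∈ xs, ∀ v ∈ xs, ∀ w ∈ xs, r u v → r v w → r u w) →
    ∃ u b v, xs = u ++ b :: v ∧ (∀ a ∈ xs, r a b) ∧ ∀ a ∈ u, ¬(∀ c ∈ xs, r c a) := by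
  intro xs
  induction xs with
  | nil => intro h; exact absurd rfl h
  | cons x t ih =>
    intro _ hrefl htot htrans
    by_cases hx : ∀ c ∈ x :: t, r c x
    · exact ⟨[], x, t, rfl, hx, by simp⟩
    · have htne : t ≠ [] := by
        rintro rfl
        exact hx (by simpa using hrefl x (by simp))
      obtain ⟨u, b, v, ht, hmax, hnm⟩ := ih htne
        (fun a ha => hrefl a (List.mem_cons_of_mem _ ha))
        (fun a ha c hc => htot a (List.mem_cons_of_mem _ ha) c (List.mem_cons_of_mem _ hc))
        (fun a ha c hc d hd => htrans a (List.mem_cons_of_mem _ ha) c (List.mem_cons_of_mem _ hc)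
          d (List.mem_cons_of_mem _ hd))
      have hbt : b ∈ t := by rw [ht]; simp
      have hxb : r x b := by
        push_neg at hx
        obtain ⟨c, hc, hcx⟩ := hx
        have hc' : c ∈ t := by
          rcases List.mem_cons.mp hc with rfl | h'
          · exact absurd (hrefl c hc) hcx
          · exact h'
        have hxc : r x c := by
          rcases htot x (by simp) c (List.mem_cons_of_mem _ hc') with h' | h'
          · exact h'
          · exact absurd h' hcx
        exact htrans x (by simp) c (List.mem_cons_of_mem _ hc') b (List.mem_cons_of_mem _ hbt)
          hxc (hmax c hc')
      refine ⟨x :: u, b, v, by rw [ht]; simp, fun a ha => ?_, fun a ha => ?_⟩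
      · rcases List.mem_cons.mp ha with rfl | h'
        · exact hxb
        · exact hmax a h'
      · rcases List.mem_cons.mp ha with rfl | h'
        · exact fun hall => hx hall
        · intro hall
          exact hnm a h' (fun c hc => hall c (List.mem_cons_of_mem _ hc))

lemma exists_isLexMax (r : Word → Word → Prop) : ∀ (n : ℕ) (xs : List Word), xs.length ≤ n →
    (∀ u ∈ xs, r u u) → (∀ u ∈ xs, ∀ v ∈ xs, r u v ∨ r v u) →
    (∀ u ∈ xs, ∀ v ∈ xs, ∀ w ∈ xs, r u v → r v w → r u w) →
    ∃ M, IsLexMax r xs M := by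
  intro n
  induction n with
  | zero =>
    intro xs hlen _ _ _
    have : xs = [] := List.length_eq_zero_iff.mp (Nat.le_zero.mp hlen)
    subst this
    exact ⟨[], List.nil_sublist _, fun N hN => by
      rw [List.sublist_nil.mp hN]; exact lexLe_nil_left r []⟩
  | succ n ih =>
    intro xs hlen hrefl htot htrans
    rcases eq_or_ne xs [] with rfl | hne
    · exact ⟨[], List.nil_sublist _, fun N hN => by
        rw [List.sublist_nil.mp hN]; exact lexLe_nil_left r []⟩
    obtain ⟨u, b, v, hxs, hmax, hnm⟩ := exists_max r xs hne hrefl htot htrans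
    have hvsub : ∀ a ∈ v, a ∈ xs := by
      intro a ha; rw [hxs]; simp [ha]
    have hvlen : v.length ≤ n := by
      have : xs.length = u.length + v.length + 1 := by rw [hxs]; simp; omega
      omega
    obtain ⟨M', hM'⟩ := ih v hvlen (fun a ha => hrefl a (hvsub a ha))
      (fun a ha c hc => htot a (hvsub a ha) c (hvsub c hc))
      (fun a ha c hc d hd => htrans a (hvsub a ha) c (hvsub c hc) d (hvsub d hd))
    refine ⟨b :: M', ?_, ?_⟩
    · rw [hxs]
      exact List.Sublist.trans (List.cons_sublist_cons.mpr hM'.1) (List.sublist_append_right u _)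
    · intro N hN
      rcases N with _ | ⟨c, N'⟩
      · exact lexLe_nil_left r _
      obtain ⟨r₁, r₂, hsplit, hcr, hN'⟩ := List.cons_sublist_iff.mp hN
      have hcxs : c ∈ xs := by rw [hsplit]; exact List.mem_append_left _ hcr
      have hcb : r c b := hmax c hcxs
      by_cases hbc : r b c
      · -- c is also maximal; show N' <+ v
        have hcmax : ∀ e ∈ xs, r e c := fun e he =>
          htrans e he b (by rw [hxs]; simp) c hcxs (hmax e he) hbc
        have hlt : u.length < r₁.length := by
          by_contra hle
          push_neg at hle
          have hr₁ : r₁ = (xs.take r₁.length) := by rw [hsplit, List.take_left]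
          have hu : u = xs.take u.length := by rw [hxs, List.take_left]
          have htk : List.take r₁.length u = r₁ := by
            rw [hu, List.take_take, min_eq_left hle, ← hr₁]
          have hcu : c ∈ u := List.take_subset _ u (htk ▸ hcr)
          exact hnm c hcu hcmax
        have hr₂v : r₂.Sublist v := by
          have h1 : r₂ = xs.drop r₁.length := by rw [hsplit, List.drop_left]
          have h2 : v = xs.drop (u.length + 1) := by
            rw [hxs]
            rw [show u.length + 1 = (u ++ [b]).length by simp]
            rw [show u ++ b :: v = (u ++ [b]) ++ v by simp]
            rw [List.drop_left]
          rw [h1, h2]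
          have : xs.drop r₁.length = (xs.drop (u.length+1)).drop (r₁.length - (u.length+1)) := by
            rw [List.drop_drop]; congr 1; omega
          rw [this]
          exact List.drop_sublist _ _
        exact lexLe_cons hcb hbc (hM'.2 N' (hN'.trans hr₂v))
      · exact Or.inr ⟨0, by simp, by simp, by simp, by simpa using hcb, by simpa using hbc⟩

lemma isLexMax_singleton {r : Word → Word → Prop} {W : Word} (h : r W W) :
    IsLexMax r [W] [W] := by
  refine ⟨List.Sublist.refl _, fun N hN => ?_⟩
  rcases List.sublist_singleton.mp hN with rfl | rfl
  · exact lexLe_nil_left r _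
  · refine Or.inl ⟨Nat.le_refl _, fun i hi => ?_⟩
    have hi0 : i = 0 := by simpa using hi
    subst hi0
    simp only [List.getD_cons_zero]
    exact ⟨h, h⟩

lemma isLexMax_singleton_eq {r : Word → Word → Prop} {W : Word} {M : List Word}
    (h : IsLexMax r [W] M) : M = [W] := by
  rcases List.sublist_singleton.mp h.1 with rfl | rfl
  · have := h.2 [W] (List.Sublist.refl _)
    have := lexLe_nil_right this
    simp at this
  · rfl

end WormProof
namespace WormProof

lemma perm_sum {u v w a b c : Word}
    (ha : a = u ∨ a = v ∨ a = w) (hb : b = u ∨ b = v ∨ b = w) (hc : c = u ∨ c = v ∨ c = w)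
    (hab : a ≠ b) (hbc : b ≠ c) (hac : a ≠ c) :
    a.length + b.length + c.length = u.length + v.length + w.length ∧
      u ≠ v ∧ v ≠ w ∧ u ≠ w := by
  rcases ha with rfl | rfl | rfl <;> rcases hb with rfl | rfl | rfl <;>
    rcases hc with rfl | rfl | rfl <;>
    first
    | exact absurd rfl hab
    | exact absurd rfl hbc
    | exact absurd rfl hac
    | refine ⟨by omega, ?_, ?_, ?_⟩ <;>
        first
        | assumption
        | exact fun h => hab h.symm
        | exact fun h => hbc h.symm
        | exact fun h => hac h.symm

lemma symTrans_of_bound {n : ℕ}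
    (IHtrans : ∀ a b c : Word, a.length + b.length + c.length < n → Le a b → Le b c → Le a c)
    {u v w : Word} (hbnd : u ≠ v → v ≠ w → u ≠ w → u.length + v.length + w.length < n) :
    SymTrans Le u v w := by
  intro a b c ha hbm hcm hab hbc
  by_cases e1 : a = b
  · exact e1 ▸ hbc
  by_cases e2 : b = c
  · exact e2 ▸ hab
  by_cases e3 : a = c
  · exact e3 ▸ le_refl a
  obtain ⟨hsum, d1, d2, d3⟩ := perm_sum ha hbm hcm e1 e2 e3
  exact IHtrans a b c (by rw [hsum]; exact hbnd d1 d2 d3) hab hbc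

lemma exists_lexmax_le {n : ℕ}
    (IHtot : ∀ u v : Word, u.length + v.length < n → Le u v ∨ Le v u)
    (IHtrans : ∀ u v w : Word, u.length + v.length + w.length < n → Le u v → Le v w → Le u w)
    (m : ℕ) (A : Word) (hA : A.length ≤ n) : ∃ M, IsLexMax Le (A.splitOn m) M := by
  apply exists_isLexMax Le (A.splitOn m).length (A.splitOn m) (Nat.le_refl _)
  · intro u _; exact le_refl u
  · intro u hu v hv
    by_cases h : u = v
    · exact h ▸ Or.inl (le_refl u)
    · exact IHtot u v (lt_of_lt_of_le (mem_splitOn_length₂ hu hv h) hA)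
  · intro u hu v hv w hw h1 h2
    by_cases e1 : u = v
    · exact e1 ▸ h2
    by_cases e2 : v = w
    · exact e2 ▸ h1
    by_cases e3 : u = w
    · exact e3 ▸ le_refl u
    · refine IHtrans u v w ?_ h1 h2
      have := mem_splitOn_length₃ hu hv hw e1 e2 e3
      omega

lemma min?_pair_left {m : ℕ} {X Y Z : List ℕ} (hm : (X ++ Y ++ Z).min? = some m)
    (hmem : m ∈ X ++ Y) : (X ++ Y).min? = some m := by
  obtain ⟨_, hle⟩ := min?_iff.mp hm
  refine min?_iff.mpr ⟨hmem, fun b hb => hle b ?_⟩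
  simp only [List.mem_append] at hb ⊢
  tauto

lemma min?_pair_right {m : ℕ} {X Y Z : List ℕ} (hm : (X ++ Y ++ Z).min? = some m)
    (hmem : m ∈ Y ++ Z) : (Y ++ Z).min? = some m := by
  obtain ⟨_, hle⟩ := min?_iff.mp hm
  refine min?_iff.mpr ⟨hmem, fun b hb => hle b ?_⟩
  simp only [List.mem_append] at hb ⊢
  tauto

lemma min?_pair_outer {m : ℕ} {X Y Z : List ℕ} (hm : (X ++ Y ++ Z).min? = some m)
    (hmem : m ∈ X ++ Z) : (X ++ Z).min? = some m := by
  obtain ⟨_, hle⟩ := min?_iff.mp hm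
  refine min?_iff.mpr ⟨hmem, fun b hb => hle b ?_⟩
  simp only [List.mem_append] at hb ⊢
  tauto

lemma total_trans : ∀ n : ℕ,
    (∀ A B : Word, A.length + B.length ≤ n → (Le A B ∨ Le B A)) ∧
    (∀ A B C : Word, A.length + B.length + C.length ≤ n → Le A B → Le B C → Le A C) := by
  intro n
  induction n using Nat.strong_induction_on with
  | _ n IH =>
  have IHtot : ∀ u v : Word, u.length + v.length < n → Le u v ∨ Le v u :=
    fun u v h => (IH _ h).1 u v (Nat.le_refl _)
  have IHtrans : ∀ u v w : Word, u.length + v.length + w.length < n → Le u v → Le v w → Le u w :=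
    fun u v w h => (IH _ h).2 u v w (Nat.le_refl _)
  constructor
  · -- totality
    intro A B hn
    rcases hmo : (A ++ B).min? with _ | m
    · rw [List.min?_eq_none_iff, List.append_eq_nil_iff] at hmo
      exact Or.inl (hmo.1 ▸ hmo.2 ▸ le_refl ([] : Word))
    have hmem : m ∈ A ++ B := (min?_iff.mp hmo).1
    obtain ⟨MA, hMA⟩ := exists_lexmax_le IHtot IHtrans m A (by omega)
    obtain ⟨MB, hMB⟩ := exists_lexmax_le IHtot IHtrans m B (by omega)
    have build : ∀ (X Y : Word), (X ++ Y).min? = some m →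
        X.length + Y.length ≤ n → ∀ MX MY : List Word, IsLexMax Le (X.splitOn m) MX →
        IsLexMax Le (Y.splitOn m) MY → LexLe Le MX MY → Le X Y := by
      intro X Y hmXY hlen MX MY hMX hMY hlex
      refine (le_iff X Y).mpr (Or.inr ?_)
      intro m' hm' NA NB hNA hNB
      have hmm : m' = m := by
        rw [hm'] at hmXY
        exact Option.some.inj hmXY
      subst hmm
      have hmemXY : m' ∈ X ++ Y := (min?_iff.mp hm').1
      have L1 : LexLe Le NA MX := hMX.2 NA hNA.1
      have L2 : LexLe Le MY NB := hNB.2 MY hMY.1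
      have T1 : LexLe Le NA MY := by
        refine lexLe_trans L1 hlex (fun i h1 h2 h3 => ?_)
        refine symTrans_of_bound IHtrans (fun d1 _ _ => ?_)
        have h1' := mem_splitOn_length₂ (hNA.1.subset (getD_mem h1)) (hMX.1.subset (getD_mem h2)) d1
        have h2' := mem_splitOn_length (hMY.1.subset (getD_mem h3))
        omega
      refine lexLe_trans T1 L2 (fun i h1 h2 h3 => ?_)
      refine symTrans_of_bound IHtrans (fun _ d2 _ => ?_)
      have h1' := mem_splitOn_length (hNA.1.subset (getD_mem h1))
      have h2' := mem_splitOn_length₂ (hMY.1.subset (getD_mem h2)) (hNB.1.subset (getD_mem h3)) d2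
      omega
    have htot : ∀ i, i < MA.length → i < MB.length →
        (Le (MA.getD i []) (MB.getD i []) ∨ Le (MB.getD i []) (MA.getD i [])) := by
      intro i h1 h2
      have hu := hMA.1.subset (getD_mem h1)
      have hv := hMB.1.subset (getD_mem h2)
      exact IHtot _ _ (lt_of_lt_of_le (cross_length hmem hu hv) hn)
    rcases lexLe_total htot with h | h
    · exact Or.inl (build A B hmo hn MA MB hMA hMB h)
    · refine Or.inr (build B A ?_ (by omega) MB MA hMB hMA h)
      obtain ⟨h1, h2⟩ := min?_iff.mp hmo
      refine min?_iff.mpr ⟨?_, fun b hb => h2 b ?_⟩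
      · rcases List.mem_append.mp h1 with h' | h' <;> simp [h']
      · rcases List.mem_append.mp hb with h' | h' <;> simp [h']
  · -- transitivity
    intro A B C hn h1 h2
    by_cases hAB : A = [] ∧ B = []
    · obtain ⟨rfl, rfl⟩ := hAB; exact h2
    by_cases hBC : B = [] ∧ C = []
    · obtain ⟨rfl, rfl⟩ := hBC; exact h1
    by_cases hAC : A = [] ∧ C = []
    · obtain ⟨rfl, rfl⟩ := hAC; exact le_refl []
    have R1 := ((le_iff A B).mp h1).resolve_left hAB
    have R2 := ((le_iff B C).mp h2).resolve_left hBC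
    rcases hmo : (A ++ B ++ C).min? with _ | m
    · rw [List.min?_eq_none_iff] at hmo
      simp only [List.append_eq_nil_iff] at hmo
      exact absurd ⟨hmo.1.1, hmo.2⟩ hAC
    obtain ⟨hmem, hle⟩ := min?_iff.mp hmo
    have minAB : m ∈ A ++ B → (A ++ B).min? = some m := min?_pair_left hmo
    have minBC : m ∈ B ++ C → (B ++ C).min? = some m := min?_pair_right hmo
    have minAC : m ∈ A ++ C → (A ++ C).min? = some m := min?_pair_outer hmo
    have caseAC : m ∈ A → m ∈ C → Le A C := by
      intro hA hC
      refine (le_iff A C).mpr (Or.inr ?_)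
      intro m' hm' MA MC hMA hMC
      have hm'' := minAC (List.mem_append.mpr (Or.inl hA))
      have hmm : m' = m := by rw [hm'] at hm''; exact Option.some.inj hm''
      subst hmm
      obtain ⟨MB, hMB⟩ := exists_lexmax_le IHtot IHtrans m' B (by omega)
      have L1 : LexLe Le MA MB := R1 m' (minAB (List.mem_append.mpr (Or.inl hA))) MA MB hMA hMB
      have L2 : LexLe Le MB MC := R2 m' (minBC (List.mem_append.mpr (Or.inr hC))) MB MC hMB hMC
      refine lexLe_trans L1 L2 (fun i i1 i2 i3 => ?_)
      refine symTrans_of_bound IHtrans (fun _ _ _ => ?_)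
      have b1 := mem_splitOn_length_lt hA (hMA.1.subset (getD_mem i1))
      have b2 := mem_splitOn_length (hMB.1.subset (getD_mem i2))
      have b3 := mem_splitOn_length (hMC.1.subset (getD_mem i3))
      omega
    by_cases hA : m ∈ A <;> by_cases hB : m ∈ B <;> by_cases hC : m ∈ C
    · exact caseAC hA hC
    · -- hA, hB, ¬hC
      refine (le_iff A C).mpr (Or.inr ?_)
      intro m' hm' MA MC hMA hMC
      have hm'' := minAC (List.mem_append.mpr (Or.inl hA))
      have hmm : m' = m := by rw [hm'] at hm''; exact Option.some.inj hm''
      subst hmm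
      obtain ⟨MB, hMB⟩ := exists_lexmax_le IHtot IHtrans m' B (by omega)
      have hCs : C.splitOn m' = [C] := splitOn_not_mem hC
      have hMC' : MC = [C] := isLexMax_singleton_eq (hCs ▸ hMC)
      have L1 : LexLe Le MA MB := R1 m' (minAB (List.mem_append.mpr (Or.inl hA))) MA MB hMA hMB
      have L2 : LexLe Le MB [C] := R2 m' (minBC (List.mem_append.mpr (Or.inl hB))) MB [C] hMB
        (by rw [hCs]; exact isLexMax_singleton (le_refl C))
      rw [hMC']
      refine lexLe_trans L1 L2 (fun i i1 i2 i3 => ?_)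
      refine symTrans_of_bound IHtrans (fun _ _ _ => ?_)
      have b1 := mem_splitOn_length_lt hA (hMA.1.subset (getD_mem i1))
      have b2 := mem_splitOn_length (hMB.1.subset (getD_mem i2))
      have b3 : ([C] : List Word).getD i [] = C := by
        have := getD_mem i3
        simpa using List.eq_of_mem_singleton this
      rw [b3]
      omega
    · exact caseAC hA hC
    · -- hA only
      refine (le_iff A C).mpr (Or.inr ?_)
      intro m' hm' MA MC hMA hMC
      have hm'' := minAC (List.mem_append.mpr (Or.inl hA))
      have hmm : m' = m := by rw [hm'] at hm''; exact Option.some.inj hm''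
      subst hmm
      have hCs : C.splitOn m' = [C] := splitOn_not_mem hC
      have hBs : B.splitOn m' = [B] := splitOn_not_mem hB
      have hMC' : MC = [C] := isLexMax_singleton_eq (hCs ▸ hMC)
      have sB : IsLexMax Le (B.splitOn m') [B] := by
        rw [hBs]; exact isLexMax_singleton (le_refl B)
      have L1 : LexLe Le MA [B] := R1 m' (minAB (List.mem_append.mpr (Or.inl hA))) MA [B] hMA sB
      rw [hMC']
      rcases L1 with ⟨hlen, he⟩ | ⟨s, s1, s2, _, st, ns⟩
      · rcases MA with _ | ⟨a, MA'⟩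
        · exact lexLe_nil_left Le [C]
        · have hMA'nil : MA' = [] := by
            simp only [List.length_cons] at hlen
            exact List.length_eq_zero_iff.mp (by simpa using hlen)
          subst hMA'nil
          have he0 := he 0 (by simp)
          simp only [List.getD_cons_zero] at he0
          have haA : a ∈ A.splitOn m' := hMA.1.subset (by simp)
          have haC : Le a C := IHtrans a B C
            (by have := mem_splitOn_length_lt hA haA; omega) he0.1 h2
          by_cases hCa : Le C a
          · refine Or.inl ⟨by simp, fun i hi => ?_⟩
            have hi0 : i = 0 := by simpa using hi
            subst hi0
            simp only [List.getD_cons_zero]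
            exact ⟨haC, hCa⟩
          · refine Or.inr ⟨0, by simp, by simp, by simp, ?_, ?_⟩
            · simpa using haC
            · simpa using hCa
      · have hs0 : s = 0 := by simpa using s2
        subst hs0
        simp only [List.getD_cons_zero] at st ns
        have haA : MA.getD 0 [] ∈ A.splitOn m' := hMA.1.subset (getD_mem s1)
        have hlt := mem_splitOn_length_lt hA haA
        have haC : Le (MA.getD 0 []) C := IHtrans _ B C (by omega) st h2
        have hnCa : ¬ Le C (MA.getD 0 []) := fun h' =>
          ns (IHtrans B C _ (by omega) h2 h')
        refine Or.inr ⟨0, s1, by simp, by simp, ?_, ?_⟩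
        · simpa using haC
        · simpa using hnCa
    · -- ¬hA, hB, hC
      refine (le_iff A C).mpr (Or.inr ?_)
      intro m' hm' MA MC hMA hMC
      have hm'' := minAC (List.mem_append.mpr (Or.inr hC))
      have hmm : m' = m := by rw [hm'] at hm''; exact Option.some.inj hm''
      subst hmm
      have hAs : A.splitOn m' = [A] := splitOn_not_mem hA
      have hMA' : MA = [A] := isLexMax_singleton_eq (hAs ▸ hMA)
      obtain ⟨MB, hMB⟩ := exists_lexmax_le IHtot IHtrans m' B (by omega)
      have L1 : LexLe Le [A] MB := R1 m' (minAB (List.mem_append.mpr (Or.inr hB))) [A] MB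
        (by rw [hAs]; exact isLexMax_singleton (le_refl A)) hMB
      have L2 : LexLe Le MB MC := R2 m' (minBC (List.mem_append.mpr (Or.inl hB))) MB MC hMB hMC
      rw [hMA']
      refine lexLe_trans L1 L2 (fun i i1 i2 i3 => ?_)
      refine symTrans_of_bound IHtrans (fun _ _ _ => ?_)
      have b1 : ([A] : List Word).getD i [] = A := by
        have := getD_mem i1
        simpa using List.eq_of_mem_singleton this
      have b2 := mem_splitOn_length_lt hB (hMB.1.subset (getD_mem i2))
      have b3 := mem_splitOn_length (hMC.1.subset (getD_mem i3))
      rw [b1]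
      omega
    · -- ¬hA, hB, ¬hC : direct
      have hAs : A.splitOn m = [A] := splitOn_not_mem hA
      have hCs : C.splitOn m = [C] := splitOn_not_mem hC
      obtain ⟨MB, hMB⟩ := exists_lexmax_le IHtot IHtrans m B (by omega)
      have L1 : LexLe Le [A] MB := R1 m (minAB (List.mem_append.mpr (Or.inr hB))) [A] MB
        (by rw [hAs]; exact isLexMax_singleton (le_refl A)) hMB
      have L2 : LexLe Le MB [C] := R2 m (minBC (List.mem_append.mpr (Or.inl hB))) MB [C] hMB
        (by rw [hCs]; exact isLexMax_singleton (le_refl C))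
      have L3 : LexLe Le [A] [C] := by
        refine lexLe_trans L1 L2 (fun i i1 i2 i3 => ?_)
        refine symTrans_of_bound IHtrans (fun _ _ _ => ?_)
        have b1 : ([A] : List Word).getD i [] = A := by
          have := getD_mem i1
          simpa using List.eq_of_mem_singleton this
        have b2 := mem_splitOn_length_lt hB (hMB.1.subset (getD_mem i2))
        have b3 : ([C] : List Word).getD i [] = C := by
          have := getD_mem i3
          simpa using List.eq_of_mem_singleton this
        rw [b1, b3]
        omega
      rcases L3 with ⟨_, he⟩ | ⟨s, s1, _, _, st, _⟩
      · have := (he 0 (by simp)).1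
        simpa using this
      · have hs0 : s = 0 := by simpa using s1
        subst hs0
        simpa using st
    · -- ¬hA, ¬hB, hC
      refine (le_iff A C).mpr (Or.inr ?_)
      intro m' hm' MA MC hMA hMC
      have hm'' := minAC (List.mem_append.mpr (Or.inr hC))
      have hmm : m' = m := by rw [hm'] at hm''; exact Option.some.inj hm''
      subst hmm
      have hAs : A.splitOn m' = [A] := splitOn_not_mem hA
      have hBs : B.splitOn m' = [B] := splitOn_not_mem hB
      have hMA' : MA = [A] := isLexMax_singleton_eq (hAs ▸ hMA)
      have L2 : LexLe Le [B] MC := R2 m' (minBC (List.mem_append.mpr (Or.inr hC))) [B] MC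
        (by rw [hBs]; exact isLexMax_singleton (le_refl B)) hMC
      have key : 0 < MC.length ∧ Le B (MC.getD 0 []) := by
        rcases L2 with ⟨hl, he⟩ | ⟨s, s1, s2, _, st, _⟩
        · refine ⟨by simp only [List.length_singleton] at hl; omega, ?_⟩
          have := (he 0 (by simp)).1
          simpa using this
        · have hs0 : s = 0 := by simpa using s1
          subst hs0
          exact ⟨s2, by simpa using st⟩
      obtain ⟨h0len, hBMC⟩ := key
      have hMC0 : MC.getD 0 [] ∈ C.splitOn m' := hMC.1.subset (getD_mem h0len)
      have hlt := mem_splitOn_length_lt hC hMC0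
      have haC : Le A (MC.getD 0 []) := IHtrans A B _ (by omega) h1 hBMC
      rw [hMA']
      by_cases hCa : Le (MC.getD 0 []) A
      · refine Or.inl ⟨by simp only [List.length_singleton]; omega, fun i hi => ?_⟩
        have hi0 : i = 0 := by simpa using hi
        subst hi0
        simp only [List.getD_cons_zero]
        exact ⟨haC, hCa⟩
      · refine Or.inr ⟨0, by simp, h0len, by simp, ?_, ?_⟩
        · simpa using haC
        · simpa using hCa
    · -- none: contradiction
      exfalso
      simp only [List.mem_append] at hmem
      tauto

end WormProof
namespace WormProof

lemma le_trans_all {A B C : Word} : Le A B → Le B C → Le A C :=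
  (total_trans (A.length + B.length + C.length)).2 A B C (Nat.le_refl _)

lemma le_append : ∀ n (C D : Word), C.length + D.length ≤ n → Le C (C ++ D) := by
  intro n
  induction n using Nat.strong_induction_on with
  | _ n IH =>
  intro C D hn
  refine (le_iff C (C ++ D)).mpr ?_
  rcases hmo : (C ++ (C ++ D)).min? with _ | m
  · rw [List.min?_eq_none_iff] at hmo
    simp only [List.append_eq_nil_iff] at hmo
    exact Or.inl ⟨hmo.1, by simp [hmo.1, hmo.2.2]⟩
  right
  intro m' hm' MA MB hMA hMB
  have hmm : m' = m := (Option.some.inj hm').symm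
  subst hmm
  obtain ⟨hmemT, hleT⟩ := min?_iff.mp hmo
  have hmemCD : m' ∈ C ++ D := by
    rcases List.mem_append.mp hmemT with h | h
    · exact List.mem_append_left _ h
    · exact h
  obtain ⟨I, lk, hCsplit⟩ : ∃ I lk, C.splitOn m' = I ++ [lk] := by
    rcases (C.splitOn m').eq_nil_or_concat with h | ⟨I, lk, h⟩
    · exact absurd h (splitOn_ne_nil m' C)
    · exact ⟨I, lk, by rw [h, List.concat_eq_append]⟩
  rcases hDsplit : D.splitOn m' with _ | ⟨w, T⟩
  · exact absurd hDsplit (splitOn_ne_nil m' D)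
  have hblocks : (C ++ D).splitOn m' = I ++ (lk ++ w) :: T := splitOn_append hCsplit hDsplit
  -- decompose MA
  have hMAsub : MA.Sublist (I ++ [lk]) := hCsplit ▸ hMA.1
  obtain ⟨P, Q, hPQ, hP, hQ⟩ := List.sublist_append_iff.mp hMAsub
  rcases List.sublist_singleton.mp hQ with rfl | rfl
  · -- MA <+ I : directly a sublist of the blocks of C ++ D
    rw [List.append_nil] at hPQ
    subst hPQ
    refine hMB.2 MA ?_
    rw [hblocks]
    exact hP.trans (List.sublist_append_left I _)
  · -- MA = P ++ [lk]
    subst hPQ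
    have hlkmem : lk ∈ C.splitOn m' := by rw [hCsplit]; simp
    have hwmem : w ∈ D.splitOn m' := by rw [hDsplit]; simp
    have hbound : lk.length + w.length < n := by
      rcases List.mem_append.mp hmemCD with h | h
      · have := mem_splitOn_length_lt h hlkmem
        have := mem_splitOn_length hwmem
        omega
      · have := mem_splitOn_length hlkmem
        have := mem_splitOn_length_lt h hwmem
        omega
    have hlw : Le lk (lk ++ w) := IH _ hbound lk w (Nat.le_refl _)
    set s := P.length with hs
    set N : List Word := P ++ [lk ++ w] with hN
    have hNsub : N.Sublist ((C ++ D).splitOn m') := by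
      rw [hblocks]
      exact List.Sublist.append hP (List.singleton_sublist.mpr List.mem_cons_self)
    have LN : LexLe Le N MB := hMB.2 N hNsub
    have hNlen : N.length = s + 1 := by simp [hN, hs]
    have hMAlen : (P ++ [lk]).length = s + 1 := by simp [hs]
    have hgMA : ∀ i, i < s → (P ++ [lk]).getD i [] = N.getD i [] := by
      intro i hi
      rw [List.getD_append _ _ _ _ hi, List.getD_append _ _ _ _ hi]
    have hgMAs : (P ++ [lk]).getD s [] = lk := by
      rw [List.getD_append_right _ _ _ _ (Nat.le_refl _)]
      simp
    have hgNs : N.getD s [] = lk ++ w := by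
      rw [hN, List.getD_append_right _ _ _ _ (Nat.le_refl _)]
      simp
    rcases LN with ⟨hlen, he⟩ | ⟨t, t1, t2, pri, st, ns⟩
    · have hsMB : s < MB.length := by
        rw [hNlen] at hlen; omega
      have hse := he s (by rw [hNlen]; omega)
      rw [hgNs] at hse
      have hlke : Le lk (MB.getD s []) := le_trans_all hlw hse.1
      by_cases helk : Le (MB.getD s []) lk
      · refine Or.inl ⟨by rw [hMAlen, hNlen] at *; omega, fun i hi => ?_⟩
        rw [hMAlen] at hi
        rcases Nat.lt_or_ge i s with his | his
        · rw [hgMA i his]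
          exact he i (by rw [hNlen]; omega)
        · have : i = s := by omega
          subst this
          rw [hgMAs]
          exact ⟨hlke, helk⟩
      · refine Or.inr ⟨s, by rw [hMAlen]; omega, hsMB, fun i hi => ?_, ?_, ?_⟩
        · rw [hgMA i hi]
          exact he i (by rw [hNlen]; omega)
        · rw [hgMAs]; exact hlke
        · rw [hgMAs]; exact helk
    · rw [hNlen] at t1
      rcases Nat.lt_or_ge t s with hts | hts
      · refine Or.inr ⟨t, by rw [hMAlen]; omega, t2, fun i hi => ?_, ?_, ?_⟩
        · rw [hgMA i (by omega)]
          exact pri i hi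
        · rw [hgMA t hts]; exact st
        · rw [hgMA t hts]; exact ns
      · have hts' : t = s := by omega
        subst hts'
        rw [hgNs] at st ns
        refine Or.inr ⟨s, by rw [hMAlen]; omega, t2, fun i hi => ?_, ?_, ?_⟩
        · rw [hgMA i (by omega)]
          exact pri i hi
        · rw [hgMAs]
          exact le_trans_all hlw st
        · rw [hgMAs]
          intro h'
          exact ns (le_trans_all h' hlw)

end WormProof

theorem wle_append_right (C D : Word) : Wle C (C ++ D) := by
  have h := WormProof.le_append (C.length + D.length) C D (Nat.le_refl _)
  unfold WormProof.Le at h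
  unfold Wle
  rwa [List.length_append] at h ⊢
end

section
/- Let A = A_1 0 ... 0 A_n ∈ W_ω^N with A_1,...,A_n ∈ S_1 and n ≥ 1. Then the lexicographically maximal subsequence of the sequence (A_1, ..., A_{n-1}, A_n 2) has the form (A_1, ..., A_k, A_n 2) for some k with 0 ≤ k ≤ n-1; moreover A_n 2 ≾ A_i for all i ≤ k and A_i ≺ A_n 2 for all i with k+1 ≤ i ≤ n-1. -/
open scoped Classical

/-! ### Auxiliary development -/

section Aux

open List

lemma getD_mem_of_lt {l : List Word} {i : ℕ} (h : i < l.length) : l.getD i [] ∈ l := by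
  rw [List.getD_eq_getElem l [] h]; exact List.getElem_mem h

lemma lexLe_nil_left (r : Word → Word → Prop) (M : List Word) : LexLe r [] M :=
  Or.inl ⟨Nat.zero_le _, by simp⟩

lemma not_lexLe_nil {r : Word → Word → Prop} {N : List Word} (h : N ≠ []) :
    ¬ LexLe r N [] := by
  rintro (⟨h1, -⟩ | ⟨s, -, hs, -⟩)
  · exact h (List.length_eq_zero_iff.mp (Nat.le_zero.mp (by simpa using h1)))
  · simp at hs

lemma lexLe_refl {r : Word → Word → Prop} {M : List Word}
    (h : ∀ i < M.length, r (M.getD i []) (M.getD i [])) : LexLe r M M :=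
  Or.inl ⟨le_rfl, fun i hi => ⟨h i hi, h i hi⟩⟩

lemma lexLe_of_iff {r r' : Word → Word → Prop} {L1 L2 : List Word}
    (h : ∀ x ∈ L1, ∀ y ∈ L2, (r x y ↔ r' x y) ∧ (r y x ↔ r' y x)) :
    LexLe r L1 L2 → LexLe r' L1 L2 := by
  have key : ∀ i, i < L1.length → i < L2.length →
      ((r (L1.getD i []) (L2.getD i []) ↔ r' (L1.getD i []) (L2.getD i [])) ∧
       (r (L2.getD i []) (L1.getD i []) ↔ r' (L2.getD i []) (L1.getD i []))) := by
    intro i h1 h2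
    exact h _ (getD_mem_of_lt h1) _ (getD_mem_of_lt h2)
  rintro (⟨hl, ht⟩ | ⟨s, hs1, hs2, ht, hr1, hr2⟩)
  · refine Or.inl ⟨hl, fun i hi => ?_⟩
    obtain ⟨k1, k2⟩ := key i hi (lt_of_lt_of_le hi hl)
    obtain ⟨t1, t2⟩ := ht i hi
    exact ⟨k1.mp t1, k2.mp t2⟩
  · refine Or.inr ⟨s, hs1, hs2, fun i hi => ?_, ?_, ?_⟩
    · obtain ⟨k1, k2⟩ := key i (hi.trans hs1) (hi.trans hs2)
      obtain ⟨t1, t2⟩ := ht i hi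
      exact ⟨k1.mp t1, k2.mp t2⟩
    · exact (key s hs1 hs2).1.mp hr1
    · intro hcon
      exact hr2 ((key s hs1 hs2).2.mpr hcon)

lemma lexLe_congr {r r' : Word → Word → Prop} {L1 L2 : List Word}
    (h : ∀ x ∈ L1, ∀ y ∈ L2, (r x y ↔ r' x y) ∧ (r y x ↔ r' y x)) :
    LexLe r L1 L2 ↔ LexLe r' L1 L2 :=
  ⟨lexLe_of_iff h, lexLe_of_iff (fun x hx y hy =>
    ⟨(h x hx y hy).1.symm, (h x hx y hy).2.symm⟩)⟩

lemma isLexMax_congr {r r' : Word → Word → Prop} {l M : List Word}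
    (h : ∀ x ∈ l, ∀ y ∈ l, r x y ↔ r' x y) :
    IsLexMax r l M ↔ IsLexMax r' l M := by
  have key : ∀ N : List Word, N.Sublist l → M.Sublist l →
      (LexLe r N M ↔ LexLe r' N M) := fun N hN hM =>
    lexLe_congr (fun x hx y hy =>
      ⟨h x (hN.subset hx) y (hM.subset hy), h y (hM.subset hy) x (hN.subset hx)⟩)
  constructor
  · rintro ⟨hsub, hmax⟩
    exact ⟨hsub, fun N hN => (key N hN hsub).mp (hmax N hN)⟩
  · rintro ⟨hsub, hmax⟩
    exact ⟨hsub, fun N hN => (key N hN hsub).mpr (hmax N hN)⟩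

lemma leAux_refl_succ (f : ℕ) (A : Word) : leAux (f + 1) A A :=
  Or.inr (fun _ _ MA MB hMA hMB => hMB.2 MA hMA.1)

lemma wle_refl (A : Word) : Wle A A := leAux_refl_succ _ A

/-! #### splitOn facts -/

lemma splitOn_ne_nil' (m : ℕ) (A : Word) : A.splitOn m ≠ [] := by
  simp [List.splitOn]

lemma splitOn_of_not_mem {m : ℕ} {A : Word} (h : m ∉ A) : A.splitOn m = [A] := by
  simp only [List.splitOn]
  exact List.splitOnP_eq_single (by
    intro x hx
    simp only [beq_eq_false_iff_ne, ne_eq]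
    rintro rfl
    exact h hx)

lemma not_mem_of_mem_splitOnP (p : ℕ → Bool) :
    ∀ (A : Word), ∀ b ∈ A.splitOnP p, ∀ x ∈ b, ¬ p x := by
  intro A
  induction A with
  | nil => intro b hb; simp at hb; subst hb; simp
  | cons a t ih =>
    intro b hb x hx
    rw [List.splitOnP_cons] at hb
    by_cases hpa : p a
    · rw [if_pos hpa] at hb
      rcases List.mem_cons.mp hb with h | h
      · subst h; simp at hx
      · exact ih b h x hx
    · rw [if_neg hpa] at hb
      obtain ⟨h, t', ht'⟩ : ∃ h t', t.splitOnP p = h :: t' := by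
        rcases e : t.splitOnP p with - | ⟨h, t'⟩
        · exact absurd e (List.splitOnP_ne_nil _ _)
        · exact ⟨h, t', rfl⟩
      rw [ht'] at hb
      simp only [List.modifyHead] at hb
      rcases List.mem_cons.mp hb with hb | hb
      · subst hb
        rcases List.mem_cons.mp hx with rfl | hx
        · simpa using hpa
        · exact ih h (ht' ▸ List.mem_cons_self) x hx
      · exact ih b (ht' ▸ List.mem_cons_of_mem _ hb) x hx

lemma not_mem_of_mem_splitOn {m : ℕ} {A b : Word} (hb : b ∈ A.splitOn m) : m ∉ b := by
  intro hm
  exact not_mem_of_mem_splitOnP (· == m) A b hb m hm (by simp)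

lemma splitOn_length_sum (m : ℕ) :
    ∀ A : Word, ((A.splitOn m).map List.length).sum + ((A.splitOn m).length - 1)
      = A.length := by
  intro A
  induction A with
  | nil => simp
  | cons a t ih =>
    simp only [List.splitOn] at *
    rw [List.splitOnP_cons]
    by_cases hpa : (a == m) = true
    · rw [if_pos hpa]
      obtain ⟨h, t', ht'⟩ : ∃ h t', t.splitOnP (· == m) = h :: t' := by
        rcases e : t.splitOnP (· == m) with - | ⟨h, t'⟩
        · exact absurd e (List.splitOnP_ne_nil _ _)
        · exact ⟨h, t', rfl⟩
      rw [ht'] at ih ⊢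
      simp only [List.map_cons, List.sum_cons, List.length_cons, List.length_nil] at ih ⊢
      omega
    · rw [if_neg hpa]
      obtain ⟨h, t', ht'⟩ : ∃ h t', t.splitOnP (· == m) = h :: t' := by
        rcases e : t.splitOnP (· == m) with - | ⟨h, t'⟩
        · exact absurd e (List.splitOnP_ne_nil _ _)
        · exact ⟨h, t', rfl⟩
      rw [ht'] at ih ⊢
      simp only [List.modifyHead, List.map_cons, List.sum_cons, List.length_cons] at ih ⊢
      omega

lemma splitOn_two_le {m : ℕ} {A : Word} (h : m ∈ A) : 2 ≤ (A.splitOn m).length := by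
  by_contra hc
  push_neg at hc
  interval_cases hl : (A.splitOn m).length
  · exact splitOn_ne_nil' m A (List.length_eq_zero_iff.mp hl)
  · obtain ⟨b, hb⟩ := List.length_eq_one_iff.mp hl
    have h2 : [m].intercalate (A.splitOn m) = A := List.intercalate_splitOn m
    rw [hb] at h2
    simp [List.intercalate] at h2
    subst h2
    exact not_mem_of_mem_splitOn (hb ▸ List.mem_singleton_self b) h

lemma splitOn_sum_le (m : ℕ) (A : Word) :
    ((A.splitOn m).map List.length).sum ≤ A.length := by
  have := splitOn_length_sum m A; omega

lemma splitOn_sum_lt {m : ℕ} {A : Word} (h : m ∈ A) :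
    ((A.splitOn m).map List.length).sum + 1 ≤ A.length := by
  have h1 := splitOn_length_sum m A
  have h2 := splitOn_two_le h
  omega

lemma len_le_sum_of_mem {l : List Word} {x : Word} (hx : x ∈ l) :
    x.length ≤ (l.map List.length).sum :=
  List.single_le_sum (fun _ _ => Nat.zero_le _) _ (List.mem_map_of_mem hx)

lemma sum_len_pair {l : List Word} {x y : Word} (hx : x ∈ l) (hy : y ∈ l)
    (hne : x ≠ y) : x.length + y.length ≤ (l.map List.length).sum := by
  obtain ⟨s, t, rfl⟩ := List.mem_iff_append.mp hx
  have hy' : y ∈ s ++ t := by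
    rcases List.mem_append.mp hy with h | h
    · exact List.mem_append.mpr (Or.inl h)
    · rcases List.mem_cons.mp h with h | h
      · exact absurd h hne.symm
      · exact List.mem_append.mpr (Or.inr h)
  have h1 := len_le_sum_of_mem hy'
  simp only [List.map_append, List.sum_append, List.map_cons, List.sum_cons] at h1 ⊢
  omega

lemma sum_len_triple {l : List Word} {x y z : Word} (hx : x ∈ l) (hy : y ∈ l)
    (hz : z ∈ l) (hxy : x ≠ y) (hyz : y ≠ z) (hxz : x ≠ z) :
    x.length + y.length + z.length ≤ (l.map List.length).sum := by
  obtain ⟨s, t, rfl⟩ := List.mem_iff_append.mp hx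
  have hmem : ∀ w : Word, w ∈ s ++ x :: t → w ≠ x → w ∈ s ++ t := by
    intro w hw hwne
    rcases List.mem_append.mp hw with h | h
    · exact List.mem_append.mpr (Or.inl h)
    · rcases List.mem_cons.mp h with h | h
      · exact absurd h hwne
      · exact List.mem_append.mpr (Or.inr h)
  have h1 := sum_len_pair (hmem y hy (Ne.symm hxy)) (hmem z hz (Ne.symm hxz)) hyz
  simp only [List.map_append, List.sum_append, List.map_cons, List.sum_cons] at h1 ⊢
  omega

/-! #### Fuel stability -/

/-- The fuel-free comparison of `A` and `B` at level `m`. -/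
def Cmp (m : ℕ) (A B : Word) : Prop :=
  ∀ MA MB : List Word, IsLexMax Wle (A.splitOn m) MA →
    IsLexMax Wle (B.splitOn m) MB → LexLe Wle MA MB

lemma min?_exists {l : List ℕ} (h : l ≠ []) : ∃ m, l.min? = some m := by
  rcases e : l.min? with - | m
  · exact absurd (List.min?_eq_none_iff.mp e) h
  · exact ⟨m, rfl⟩

lemma leAux_stable : ∀ n : ℕ, ∀ A B : Word, A.length + B.length ≤ n →
    ∀ f, A.length + B.length ≤ f →
    (leAux (f + 1) A B ↔
      ((A = [] ∧ B = []) ∨ ∀ m, (A ++ B).min? = some m → Cmp m A B)) := by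
  intro n
  induction n using Nat.strong_induction_on with
  | _ n IH =>
  intro A B hn f hf
  by_cases hAB : A ++ B = []
  · rw [List.append_eq_nil_iff] at hAB
    obtain ⟨rfl, rfl⟩ := hAB
    exact ⟨fun _ => Or.inl ⟨rfl, rfl⟩, fun _ => Or.inl ⟨rfl, rfl⟩⟩
  · obtain ⟨m0, hm0⟩ := min?_exists hAB
    obtain ⟨hm0mem, hm0lb⟩ := List.min?_eq_some_iff'.mp hm0
    have hsum1 : 1 ≤ A.length + B.length := by
      rcases A with - | ⟨a, t⟩
      · rcases B with - | ⟨b, t⟩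
        · simp at hAB
        · simp
      · simp; omega
    have bound : ∀ x ∈ A.splitOn m0 ++ B.splitOn m0,
        ∀ y ∈ A.splitOn m0 ++ B.splitOn m0,
        x ≠ y → x.length + y.length + 1 ≤ A.length + B.length := by
      intro x hx y hy hxy
      have hsA := splitOn_sum_le m0 A
      have hsB := splitOn_sum_le m0 B
      rcases List.mem_append.mp hx with hx' | hx' <;>
        rcases List.mem_append.mp hy with hy' | hy'
      · have hmA : m0 ∈ A := by
          by_contra hmA
          rw [splitOn_of_not_mem hmA] at hx' hy'
          simp at hx' hy'
          exact hxy (hx'.trans hy'.symm)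
        have h1 := sum_len_pair hx' hy' hxy
        have h2 := splitOn_sum_lt hmA
        omega
      · have h1 := len_le_sum_of_mem hx'
        have h2 := len_le_sum_of_mem hy'
        rcases List.mem_append.mp hm0mem with hmA | hmB
        · have := splitOn_sum_lt hmA; omega
        · have := splitOn_sum_lt hmB; omega
      · have h1 := len_le_sum_of_mem hx'
        have h2 := len_le_sum_of_mem hy'
        rcases List.mem_append.mp hm0mem with hmA | hmB
        · have := splitOn_sum_lt hmA; omega
        · have := splitOn_sum_lt hmB; omega
      · have hmB : m0 ∈ B := by
          by_contra hmB
          rw [splitOn_of_not_mem hmB] at hx' hy'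
          simp at hx' hy'
          exact hxy (hx'.trans hy'.symm)
        have h1 := sum_len_pair hx' hy' hxy
        have h2 := splitOn_sum_lt hmB
        omega
    have key : ∀ g, A.length + B.length ≤ g →
        ∀ x ∈ A.splitOn m0 ++ B.splitOn m0, ∀ y ∈ A.splitOn m0 ++ B.splitOn m0,
        (leAux g x y ↔ Wle x y) := by
      intro g hg x hx y hy
      by_cases hxy : x = y
      · subst hxy
        obtain ⟨g', rfl⟩ : ∃ g', g = g' + 1 := by
          refine ⟨g - 1, ?_⟩; omega
        exact ⟨fun _ => wle_refl x, fun _ => leAux_refl_succ g' x⟩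
      · have hb := bound x hx y hy hxy
        have hlt : x.length + y.length < n := by omega
        have e1 := IH _ hlt x y le_rfl (g - 1) (by omega)
        rw [show g - 1 + 1 = g by omega] at e1
        have e2 := IH _ hlt x y le_rfl (x.length + y.length) le_rfl
        exact e1.trans e2.symm
    have keyf := key f hf
    have convA : ∀ MA, IsLexMax (leAux f) (A.splitOn m0) MA ↔
        IsLexMax Wle (A.splitOn m0) MA := fun MA =>
      isLexMax_congr (fun x hx y hy =>
        keyf x (List.mem_append.mpr (Or.inl hx)) y (List.mem_append.mpr (Or.inl hy)))
    have convB : ∀ MB, IsLexMax (leAux f) (B.splitOn m0) MB ↔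
        IsLexMax Wle (B.splitOn m0) MB := fun MB =>
      isLexMax_congr (fun x hx y hy =>
        keyf x (List.mem_append.mpr (Or.inr hx)) y (List.mem_append.mpr (Or.inr hy)))
    have convL : ∀ MA MB : List Word, MA.Sublist (A.splitOn m0) →
        MB.Sublist (B.splitOn m0) →
        (LexLe (leAux f) MA MB ↔ LexLe Wle MA MB) := by
      intro MA MB hMA hMB
      exact lexLe_congr (fun x hx y hy =>
        ⟨keyf x (List.mem_append.mpr (Or.inl (hMA.subset hx)))
            y (List.mem_append.mpr (Or.inr (hMB.subset hy))),
         keyf y (List.mem_append.mpr (Or.inr (hMB.subset hy)))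
            x (List.mem_append.mpr (Or.inl (hMA.subset hx)))⟩)
    constructor
    · rintro (⟨rfl, rfl⟩ | H)
      · simp at hAB
      · refine Or.inr (fun m hm MA MB hMA hMB => ?_)
        have hmm : m = m0 := by rw [hm0] at hm; exact (Option.some_inj.mp hm).symm
        subst hmm
        exact (convL MA MB hMA.1 hMB.1).mp
          (H m hm MA MB ((convA MA).mpr hMA) ((convB MB).mpr hMB))
    · rintro (⟨rfl, rfl⟩ | H)
      · simp at hAB
      · refine Or.inr (fun m hm MA MB hMA hMB => ?_)
        have hmm : m = m0 := by rw [hm0] at hm; exact (Option.some_inj.mp hm).symm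
        subst hmm
        exact (convL MA MB ((convA MA).mp hMA).1 ((convB MB).mp hMB).1).mpr
          (H m hm MA MB ((convA MA).mp hMA) ((convB MB).mp hMB))

lemma wle_iff {A B : Word} (hne : A ++ B ≠ []) :
    Wle A B ↔ ∀ m, (A ++ B).min? = some m → Cmp m A B := by
  have h := leAux_stable (A.length + B.length) A B le_rfl (A.length + B.length) le_rfl
  constructor
  · intro hw
    rcases h.mp hw with ⟨rfl, rfl⟩ | H
    · simp at hne
    · exact H
  · intro hc
    exact h.mpr (Or.inr hc)

/-! #### Singleton lexmax, level invariance -/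

lemma isLexMax_singleton {x : Word} (hx : Wle x x) : IsLexMax Wle [x] [x] := by
  refine ⟨List.Sublist.refl _, fun N hN => ?_⟩
  rcases List.sublist_singleton.mp hN with rfl | rfl
  · exact lexLe_nil_left _ _
  · exact lexLe_refl (by intro i hi; simp at hi; subst hi; simpa using hx)

lemma isLexMax_singleton_eq {r : Word → Word → Prop} {x : Word} {M : List Word}
    (h : IsLexMax r [x] M) : M = [x] := by
  rcases List.sublist_singleton.mp h.1 with rfl | rfl
  · exact absurd (h.2 [x] (List.Sublist.refl _)) (not_lexLe_nil (by simp))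
  · rfl

lemma lexLe_pair_iff {A B : Word} :
    LexLe Wle [A] [B] ↔ (Wle A B ∧ Wle B A) ∨ (Wle A B ∧ ¬ Wle B A) := by
  constructor
  · rintro (⟨-, ht⟩ | ⟨s, hs1, -, -, h1, h2⟩)
    · have := ht 0 (by simp)
      simp only [List.getD] at this
      exact Or.inl (by simpa using this)
    · have hs : s = 0 := by simp at hs1; omega
      subst hs
      refine Or.inr (by simpa using ⟨h1, h2⟩)
  · rintro (⟨h1, h2⟩ | ⟨h1, h2⟩)
    · exact Or.inl ⟨le_rfl, fun i hi => by
        simp at hi; subst hi; simpa using ⟨h1, h2⟩⟩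
    · exact Or.inr ⟨0, by simp, by simp, fun i hi => by omega, by simpa using h1,
        by simpa using h2⟩

/-- Level invariance: comparing at any level `m` below all symbols agrees with `Wle`. -/
lemma wle_iff_cmp {A B : Word} {m : ℕ} (hm : ∀ c ∈ A ++ B, m ≤ c) :
    Wle A B ↔ Cmp m A B := by
  by_cases hmem : m ∈ A ++ B
  · have hne : A ++ B ≠ [] := by intro h0; rw [h0] at hmem; simp at hmem
    have hmin : (A ++ B).min? = some m := List.min?_eq_some_iff'.mpr ⟨hmem, hm⟩
    rw [wle_iff hne]
    constructor
    · intro h; exact h m hmin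
    · intro h m' hm'
      have : m' = m := by rw [hmin] at hm'; exact Option.some_inj.mp hm'.symm
      subst this; exact h
  · have hmA : m ∉ A := fun h => hmem (List.mem_append.mpr (Or.inl h))
    have hmB : m ∉ B := fun h => hmem (List.mem_append.mpr (Or.inr h))
    have hcmp : Cmp m A B ↔ LexLe Wle [A] [B] := by
      unfold Cmp
      rw [splitOn_of_not_mem hmA, splitOn_of_not_mem hmB]
      constructor
      · intro h
        exact h [A] [B] (isLexMax_singleton (wle_refl A)) (isLexMax_singleton (wle_refl B))
      · intro h MA MB hMA hMB
        rw [isLexMax_singleton_eq hMA, isLexMax_singleton_eq hMB]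
        exact h
    have hpair : Wle A B ↔ LexLe Wle [A] [B] := by
      rw [lexLe_pair_iff]
      constructor
      · intro h
        by_cases hBA : Wle B A
        · exact Or.inl ⟨h, hBA⟩
        · exact Or.inr ⟨h, hBA⟩
      · rintro (⟨h, -⟩ | ⟨h, -⟩) <;> exact h
    rw [hpair, hcmp]

/-! #### LexLe is a total preorder (given good behaviour on entries) -/

/-- All transitivity instances for the triple `(a, b, c)` needed to
compose `LexLe` comparisons. -/
def TransAt (a b c : Word) : Prop :=
  (Wle a b → Wle b c → Wle a c) ∧ (Wle c a → Wle a b → Wle c b) ∧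
  (Wle b c → Wle c a → Wle b a) ∧ (Wle c b → Wle b a → Wle c a)

lemma transAt_of_trans {x y z : Word}
    (h : ∀ a b c : Word, a ∈ [x, y, z] → b ∈ [x, y, z] → c ∈ [x, y, z] →
      Wle a b → Wle b c → Wle a c) : TransAt x y z :=
  ⟨h x y z (by simp) (by simp) (by simp),
   h z x y (by simp) (by simp) (by simp),
   h y z x (by simp) (by simp) (by simp),
   h z y x (by simp) (by simp) (by simp)⟩

lemma lexLe_total {L1 L2 : List Word}
    (h : ∀ i, i < L1.length → i < L2.length →
      Wle (L1.getD i []) (L2.getD i []) ∨ Wle (L2.getD i []) (L1.getD i [])) :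
    LexLe Wle L1 L2 ∨ LexLe Wle L2 L1 := by
  by_cases hall : ∀ i, i < L1.length → i < L2.length →
      Wle (L1.getD i []) (L2.getD i []) ∧ Wle (L2.getD i []) (L1.getD i [])
  · rcases le_total L1.length L2.length with hl | hl
    · exact Or.inl (Or.inl ⟨hl, fun i hi => hall i hi (lt_of_lt_of_le hi hl)⟩)
    · exact Or.inr (Or.inl ⟨hl, fun i hi =>
        ⟨(hall i (lt_of_lt_of_le hi hl) hi).2, (hall i (lt_of_lt_of_le hi hl) hi).1⟩⟩)
  · push_neg at hall
    classical
    have hex : ∃ s, s < L1.length ∧ s < L2.length ∧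
        ¬ (Wle (L1.getD s []) (L2.getD s []) ∧ Wle (L2.getD s []) (L1.getD s [])) := by
      obtain ⟨s, h1, h2, h3⟩ := hall
      exact ⟨s, h1, h2, fun hc => h3 hc.1 hc.2⟩
    set t := Nat.find hex with hts
    obtain ⟨ht1, ht2, ht3⟩ := Nat.find_spec hex
    have hties : ∀ i < t, Wle (L1.getD i []) (L2.getD i []) ∧
        Wle (L2.getD i []) (L1.getD i []) := by
      intro i hi
      by_contra hno
      exact Nat.find_min hex hi ⟨hi.trans ht1, hi.trans ht2, hno⟩
    rcases h t ht1 ht2 with hw | hw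
    · exact Or.inl (Or.inr ⟨t, ht1, ht2, hties, hw, fun hc => ht3 ⟨hw, hc⟩⟩)
    · exact Or.inr (Or.inr ⟨t, ht2, ht1,
        fun i hi => ⟨(hties i hi).2, (hties i hi).1⟩, hw, fun hc => ht3 ⟨hc, hw⟩⟩)

lemma lexLe_trans {L1 L2 L3 : List Word}
    (h : ∀ i, i < L1.length → i < L2.length → i < L3.length →
      TransAt (L1.getD i []) (L2.getD i []) (L3.getD i [])) :
    LexLe Wle L1 L2 → LexLe Wle L2 L3 → LexLe Wle L1 L3 := by
  rintro (⟨hl12, ht12⟩ | ⟨s1, hs11, hs12, ht12, ha1, hb1⟩) <;>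
    rintro (⟨hl23, ht23⟩ | ⟨s2, hs21, hs22, ht23, ha2, hb2⟩)
  · refine Or.inl ⟨hl12.trans hl23, fun i hi => ?_⟩
    have h2 : i < L2.length := lt_of_lt_of_le hi hl12
    have h3 : i < L3.length := lt_of_lt_of_le h2 hl23
    obtain ⟨t1, t1'⟩ := ht12 i hi
    obtain ⟨t2, t2'⟩ := ht23 i h2
    obtain ⟨c1, c2, c3, c4⟩ := h i hi h2 h3
    exact ⟨c1 t1 t2, c4 t2' t1'⟩
  · by_cases hcase : s2 < L1.length
    · refine Or.inr ⟨s2, hcase, hs22, fun i hi => ?_, ?_, ?_⟩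
      · have h1 : i < L1.length := hi.trans hcase
        have h2 : i < L2.length := hi.trans hs21
        have h3 : i < L3.length := hi.trans hs22
        obtain ⟨t1, t1'⟩ := ht12 i h1
        obtain ⟨t2, t2'⟩ := ht23 i hi
        obtain ⟨c1, c2, c3, c4⟩ := h i h1 h2 h3
        exact ⟨c1 t1 t2, c4 t2' t1'⟩
      · obtain ⟨t1, t1'⟩ := ht12 s2 hcase
        exact (h s2 hcase hs21 hs22).1 t1 ha2
      · intro hc
        obtain ⟨t1, t1'⟩ := ht12 s2 hcase
        exact hb2 ((h s2 hcase hs21 hs22).2.1 hc t1)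
    · push_neg at hcase
      refine Or.inl ⟨hcase.trans (le_of_lt hs22), fun i hi => ?_⟩
      have h1 : i < L1.length := hi
      have hi2 : i < s2 := lt_of_lt_of_le hi hcase
      have h2 : i < L2.length := hi2.trans hs21
      have h3 : i < L3.length := hi2.trans hs22
      obtain ⟨t1, t1'⟩ := ht12 i h1
      obtain ⟨t2, t2'⟩ := ht23 i hi2
      obtain ⟨c1, c2, c3, c4⟩ := h i h1 h2 h3
      exact ⟨c1 t1 t2, c4 t2' t1'⟩
  · refine Or.inr ⟨s1, hs11, lt_of_lt_of_le hs12 hl23, fun i hi => ?_, ?_, ?_⟩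
    · have h1 : i < L1.length := hi.trans hs11
      have h2 : i < L2.length := hi.trans hs12
      have h3 : i < L3.length := lt_of_lt_of_le h2 hl23
      obtain ⟨t1, t1'⟩ := ht12 i hi
      obtain ⟨t2, t2'⟩ := ht23 i h2
      obtain ⟨c1, c2, c3, c4⟩ := h i h1 h2 h3
      exact ⟨c1 t1 t2, c4 t2' t1'⟩
    · obtain ⟨t2, t2'⟩ := ht23 s1 hs12
      exact (h s1 hs11 hs12 (lt_of_lt_of_le hs12 hl23)).1 ha1 t2
    · intro hc
      obtain ⟨t2, t2'⟩ := ht23 s1 hs12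
      exact hb1 ((h s1 hs11 hs12 (lt_of_lt_of_le hs12 hl23)).2.2.1 t2 hc)
  · rcases lt_trichotomy s1 s2 with hlt | heq | hgt
    · refine Or.inr ⟨s1, hs11, hlt.trans hs22, fun i hi => ?_, ?_, ?_⟩
      · have h1 : i < L1.length := hi.trans hs11
        have h2 : i < L2.length := hi.trans hs12
        have h3 : i < L3.length := (hi.trans hlt).trans hs22
        obtain ⟨t1, t1'⟩ := ht12 i hi
        obtain ⟨t2, t2'⟩ := ht23 i (hi.trans hlt)
        obtain ⟨c1, c2, c3, c4⟩ := h i h1 h2 h3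
        exact ⟨c1 t1 t2, c4 t2' t1'⟩
      · obtain ⟨t2, t2'⟩ := ht23 s1 hlt
        exact (h s1 hs11 hs12 (hlt.trans hs22)).1 ha1 t2
      · intro hc
        obtain ⟨t2, t2'⟩ := ht23 s1 hlt
        exact hb1 ((h s1 hs11 hs12 (hlt.trans hs22)).2.2.1 t2 hc)
    · subst heq
      refine Or.inr ⟨s1, hs11, hs22, fun i hi => ?_, ?_, ?_⟩
      · have h1 : i < L1.length := hi.trans hs11
        have h2 : i < L2.length := hi.trans hs12
        have h3 : i < L3.length := hi.trans hs22
        obtain ⟨t1, t1'⟩ := ht12 i hi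
        obtain ⟨t2, t2'⟩ := ht23 i hi
        obtain ⟨c1, c2, c3, c4⟩ := h i h1 h2 h3
        exact ⟨c1 t1 t2, c4 t2' t1'⟩
      · exact (h s1 hs11 hs12 hs22).1 ha1 ha2
      · intro hc
        exact hb2 ((h s1 hs11 hs12 hs22).2.1 hc ha1)
    · refine Or.inr ⟨s2, hgt.trans hs11, hs22, fun i hi => ?_, ?_, ?_⟩
      · have h1 : i < L1.length := (hi.trans hgt).trans hs11
        have h2 : i < L2.length := hi.trans hs21
        have h3 : i < L3.length := hi.trans hs22
        obtain ⟨t1, t1'⟩ := ht12 i (hi.trans hgt)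
        obtain ⟨t2, t2'⟩ := ht23 i hi
        obtain ⟨c1, c2, c3, c4⟩ := h i h1 h2 h3
        exact ⟨c1 t1 t2, c4 t2' t1'⟩
      · obtain ⟨t1, t1'⟩ := ht12 s2 hgt
        exact (h s2 (hgt.trans hs11) hs21 hs22).1 t1 ha2
      · intro hc
        obtain ⟨t1, t1'⟩ := ht12 s2 hgt
        exact hb2 ((h s2 (hgt.trans hs11) hs21 hs22).2.1 hc t1)

lemma exists_top {α : Type*} {R : α → α → Prop} :
    ∀ (L : List α), L ≠ [] →
    (∀ x ∈ L, ∀ y ∈ L, R x y ∨ R y x) →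
    (∀ x ∈ L, ∀ y ∈ L, ∀ z ∈ L, R x y → R y z → R x z) →
    ∃ M ∈ L, ∀ N ∈ L, R N M := by
  intro L
  induction L with
  | nil => simp
  | cons a t ih =>
    intro _ htot htrans
    rcases eq_or_ne t [] with rfl | hte
    · refine ⟨a, by simp, fun N hN => ?_⟩
      have hNa : N = a := by simpa using hN
      rcases htot N hN a (by simp) with h | h
      · exact h
      · rw [hNa]; rw [hNa] at h; exact h
    · obtain ⟨M, hM, hMax⟩ := ih hte
        (fun x hx y hy => htot x (List.mem_cons_of_mem _ hx) y (List.mem_cons_of_mem _ hy))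
        (fun x hx y hy z hz => htrans x (List.mem_cons_of_mem _ hx)
          y (List.mem_cons_of_mem _ hy) z (List.mem_cons_of_mem _ hz))
      rcases htot a (List.mem_cons_self) M (List.mem_cons_of_mem _ hM) with h | h
      · refine ⟨M, List.mem_cons_of_mem _ hM, fun N hN => ?_⟩
        rcases List.mem_cons.mp hN with rfl | hN'
        · exact h
        · exact hMax N hN'
      · refine ⟨a, List.mem_cons_self, fun N hN => ?_⟩
        rcases List.mem_cons.mp hN with rfl | hN'
        · rcases htot N hN N hN with h' | h' <;> exact h'
        · exact htrans N (List.mem_cons_of_mem _ hN') M (List.mem_cons_of_mem _ hM)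
            a (List.mem_cons_self) (hMax N hN') h

lemma exists_isLexMax {l : List Word}
    (htot : ∀ x ∈ l, ∀ y ∈ l, Wle x y ∨ Wle y x)
    (htrans : ∀ x ∈ l, ∀ y ∈ l, ∀ z ∈ l, Wle x y → Wle y z → Wle x z) :
    ∃ M, IsLexMax Wle l M := by
  have tri : ∀ e1 ∈ l, ∀ e2 ∈ l, ∀ e3 ∈ l, TransAt e1 e2 e3 := by
    intro e1 h1 e2 h2 e3 h3
    refine transAt_of_trans ?_
    intro a b c ha hb hc
    have mem : ∀ w : Word, w ∈ [e1, e2, e3] → w ∈ l := by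
      intro w hw
      simp at hw
      rcases hw with rfl | rfl | rfl <;> assumption
    exact htrans a (mem a ha) b (mem b hb) c (mem c hc)
  have hLne : l.sublists ≠ [] :=
    List.ne_nil_of_mem (List.mem_sublists.mpr (List.nil_sublist l))
  obtain ⟨M, hM, hMax⟩ := exists_top (R := LexLe Wle) l.sublists hLne
    (fun N1 h1 N2 h2 => lexLe_total (fun i hi1 hi2 =>
      htot _ ((List.mem_sublists.mp h1).subset (getD_mem_of_lt hi1))
        _ ((List.mem_sublists.mp h2).subset (getD_mem_of_lt hi2))))
    (fun N1 h1 N2 h2 N3 h3 => lexLe_trans (fun i hi1 hi2 hi3 =>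
      tri _ ((List.mem_sublists.mp h1).subset (getD_mem_of_lt hi1))
        _ ((List.mem_sublists.mp h2).subset (getD_mem_of_lt hi2))
        _ ((List.mem_sublists.mp h3).subset (getD_mem_of_lt hi3))))
  exact ⟨M, List.mem_sublists.mp hM, fun N hN => hMax N (List.mem_sublists.mpr hN)⟩

/-! #### The empty word is minimal -/

lemma wle_nil_left : ∀ B : Word, Wle [] B := by
  have main : ∀ n : ℕ, ∀ B : Word, B.length ≤ n → Wle [] B := by
    intro n
    induction n using Nat.strong_induction_on with
    | _ n IH =>
    intro B hBn
    rcases eq_or_ne B [] with rfl | hBne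
    · exact wle_refl []
    have hne : ([] : Word) ++ B ≠ [] := by simpa using hBne
    rw [wle_iff hne]
    intro m hm MA MB hMA hMB
    obtain ⟨hmmem, hmlb⟩ := List.min?_eq_some_iff'.mp hm
    have hmB : m ∈ B := by simpa using hmmem
    have hMAeq : MA = [[]] := isLexMax_singleton_eq hMA
    subst hMAeq
    have hMBne : MB ≠ [] := by
      rintro rfl
      exact not_lexLe_nil (splitOn_ne_nil' m B) (hMB.2 (B.splitOn m) (List.Sublist.refl _))
    have hMBpos : 0 < MB.length := List.length_pos_iff.mpr hMBne
    set b := MB.getD 0 [] with hbdef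
    have hb : b ∈ B.splitOn m := hMB.1.subset (getD_mem_of_lt hMBpos)
    have hblen : b.length < B.length := by
      have h1 := len_le_sum_of_mem hb
      have h2 := splitOn_sum_lt hmB
      omega
    have hWb : Wle [] b := by
      rcases Nat.lt_or_ge n 1 with h | h
      · omega
      · exact IH b.length (by omega) b le_rfl
    by_cases hb0 : Wle b []
    · refine Or.inl ⟨by simp; omega, fun i hi => ?_⟩
      have hi0 : i = 0 := by simp at hi; omega
      subst hi0
      exact ⟨hWb, hb0⟩
    · exact Or.inr ⟨0, by simp, hMBpos, fun i hi => by omega, hWb, hb0⟩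
  exact fun B => main B.length B le_rfl

/-! #### `Wle` is a total preorder -/

lemma wle_main : ∀ n : ℕ,
    (∀ B : Word, B.length ≤ n → B ≠ [] → ¬ Wle B []) ∧
    (∀ A B : Word, A.length + B.length ≤ n → Wle A B ∨ Wle B A) ∧
    (∀ A B C : Word, A.length + B.length + C.length ≤ n →
      Wle A B → Wle B C → Wle A C) := by
  intro n
  induction n using Nat.strong_induction_on with
  | _ n IH =>
  have IHtot : ∀ A B : Word, A.length + B.length < n → Wle A B ∨ Wle B A :=
    fun A B h => (IH _ h).2.1 A B le_rfl
  have IHtrans : ∀ A B C : Word, A.length + B.length + C.length < n →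
      Wle A B → Wle B C → Wle A C :=
    fun A B C h => (IH _ h).2.2 A B C le_rfl
  have tot_of : ∀ l : List Word, (l.map List.length).sum < n →
      ∀ x ∈ l, ∀ y ∈ l, Wle x y ∨ Wle y x := by
    intro l hl x hx y hy
    by_cases hxy : x = y
    · subst hxy; exact Or.inl (wle_refl x)
    · exact IHtot x y (lt_of_le_of_lt (sum_len_pair hx hy hxy) hl)
  have trans_of : ∀ l : List Word, (l.map List.length).sum < n →
      ∀ x ∈ l, ∀ y ∈ l, ∀ z ∈ l, Wle x y → Wle y z → Wle x z := by
    intro l hl x hx y hy z hz hxy hyz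
    by_cases h1 : x = y
    · subst h1; exact hyz
    by_cases h2 : y = z
    · subst h2; exact hxy
    by_cases h3 : x = z
    · subst h3; exact wle_refl x
    exact IHtrans x y z (lt_of_le_of_lt (sum_len_triple hx hy hz h1 h2 h3) hl) hxy hyz
  have tri_of : ∀ l : List Word, (l.map List.length).sum < n →
      ∀ x ∈ l, ∀ y ∈ l, ∀ z ∈ l, TransAt x y z := by
    intro l hl x hx y hy z hz
    refine transAt_of_trans ?_
    intro a b c ha hb hc
    have mem : ∀ w : Word, w ∈ [x, y, z] → w ∈ l := by
      intro w hw
      simp at hw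
      rcases hw with rfl | rfl | rfl <;> assumption
    exact trans_of l hl a (mem a ha) b (mem b hb) c (mem c hc)
  have exmax : ∀ l : List Word, (l.map List.length).sum < n →
      ∃ M, IsLexMax Wle l M :=
    fun l hl => exists_isLexMax (tot_of l hl) (trans_of l hl)
  have Npart : ∀ B : Word, B.length ≤ n → B ≠ [] → ¬ Wle B [] := by
    intro B hBn hBne hW
    have hne : B ++ ([] : Word) ≠ [] := by simpa using hBne
    rw [wle_iff hne] at hW
    obtain ⟨m, hm⟩ := min?_exists hne
    obtain ⟨hmmem, hmlb⟩ := List.min?_eq_some_iff'.mp hm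
    have hmB : m ∈ B := by simpa using hmmem
    have hsum : ((B.splitOn m).map List.length).sum < n := by
      have := splitOn_sum_lt hmB
      omega
    obtain ⟨MA, hMA⟩ := exmax (B.splitOn m) hsum
    have hMB : IsLexMax Wle (([] : Word).splitOn m) [[]] :=
      isLexMax_singleton (wle_refl [])
    have hcon := hW m hm MA [[]] hMA hMB
    have hMAne : MA ≠ [] := by
      rintro rfl
      exact not_lexLe_nil (splitOn_ne_nil' m B) (hMA.2 (B.splitOn m) (List.Sublist.refl _))
    rcases hcon with ⟨hlen, ht⟩ | ⟨s, hs1, hs2, -, -, hnb⟩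
    · have hMAlen : MA.length = 1 := by
        have := List.length_pos_iff.mpr hMAne
        simp at hlen
        omega
      set b := MA.getD 0 [] with hbdef
      have hb : b ∈ B.splitOn m := hMA.1.subset (getD_mem_of_lt (by omega))
      have hbnil : b = [] := by
        by_contra hbne
        have h1 := len_le_sum_of_mem hb
        have hble : Wle b [] := (ht 0 (by omega)).1
        exact (IH (n - 1) (by omega)).1 b (by omega) hbne hble
      have hfull := hMA.2 (B.splitOn m) (List.Sublist.refl _)
      rcases hfull with ⟨hlen2, -⟩ | ⟨s, hs1, hs2, -, -, hnb2⟩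
      · have := splitOn_two_le hmB
        omega
      · have hs0 : s = 0 := by omega
        subst hs0
        rw [← hbdef] at hnb2
        rw [hbnil] at hnb2
        exact hnb2 (wle_nil_left _)
    · have hs0 : s = 0 := by simpa using hs2
      subst hs0
      simp at hnb
      exact hnb (wle_nil_left _)
  have Tpart : ∀ A B : Word, A.length + B.length ≤ n → Wle A B ∨ Wle B A := by
    intro A B hn'
    rcases eq_or_ne A [] with rfl | hAne
    · exact Or.inl (wle_nil_left B)
    rcases eq_or_ne B [] with rfl | hBne
    · exact Or.inr (wle_nil_left A)
    have hABne : A ++ B ≠ [] := by simp [hAne]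
    have hBAne : B ++ A ≠ [] := by simp [hBne]
    obtain ⟨m, hm⟩ := min?_exists hABne
    obtain ⟨hmmem, hmlb⟩ := List.min?_eq_some_iff'.mp hm
    have hmBA : (B ++ A).min? = some m := by
      rw [List.min?_eq_some_iff']
      constructor
      · rcases List.mem_append.mp hmmem with h | h
        · exact List.mem_append.mpr (Or.inr h)
        · exact List.mem_append.mpr (Or.inl h)
      · intro c hc
        rcases List.mem_append.mp hc with h | h
        · exact hmlb c (List.mem_append.mpr (Or.inr h))
        · exact hmlb c (List.mem_append.mpr (Or.inl h))
    set l := A.splitOn m ++ B.splitOn m with hldef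
    have hsum : (l.map List.length).sum < n := by
      have h1 := splitOn_sum_le m A
      have h2 := splitOn_sum_le m B
      have h3 : (l.map List.length).sum =
          ((A.splitOn m).map List.length).sum + ((B.splitOn m).map List.length).sum := by
        simp [hldef]
      rcases List.mem_append.mp hmmem with h | h
      · have := splitOn_sum_lt h; omega
      · have := splitOn_sum_lt h; omega
    have hsumA : ((A.splitOn m).map List.length).sum < n := by
      have : (l.map List.length).sum =
          ((A.splitOn m).map List.length).sum + ((B.splitOn m).map List.length).sum := by
        simp [hldef]
      omega
    have hsumB : ((B.splitOn m).map List.length).sum < n := by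
      have : (l.map List.length).sum =
          ((A.splitOn m).map List.length).sum + ((B.splitOn m).map List.length).sum := by
        simp [hldef]
      omega
    obtain ⟨MA0, hMA0⟩ := exmax (A.splitOn m) hsumA
    obtain ⟨MB0, hMB0⟩ := exmax (B.splitOn m) hsumB
    have memA : ∀ (M : List Word), M.Sublist (A.splitOn m) → ∀ i, i < M.length →
        M.getD i [] ∈ l := fun M hMs i hi =>
      List.mem_append.mpr (Or.inl (hMs.subset (getD_mem_of_lt hi)))
    have memB : ∀ (M : List Word), M.Sublist (B.splitOn m) → ∀ i, i < M.length →
        M.getD i [] ∈ l := fun M hMs i hi =>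
      List.mem_append.mpr (Or.inr (hMs.subset (getD_mem_of_lt hi)))
    rcases lexLe_total (fun i h1 h2 => tot_of l hsum _ (memA MA0 hMA0.1 i h1)
        _ (memB MB0 hMB0.1 i h2)) with hLe | hLe
    · left
      rw [wle_iff hABne]
      intro m' hm' MA MB hMA hMB
      have hmm : m' = m := by rw [hm] at hm'; exact Option.some_inj.mp hm'.symm
      subst hmm
      have h1 : LexLe Wle MA MA0 := hMA0.2 MA hMA.1
      have h2 : LexLe Wle MB0 MB := hMB.2 MB0 hMB0.1
      have tA : LexLe Wle MA MB0 :=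
        lexLe_trans (fun i hi1 hi2 hi3 => tri_of l hsum _ (memA MA hMA.1 i hi1)
          _ (memA MA0 hMA0.1 i hi2) _ (memB MB0 hMB0.1 i hi3)) h1 hLe
      exact lexLe_trans (fun i hi1 hi2 hi3 => tri_of l hsum _ (memA MA hMA.1 i hi1)
        _ (memB MB0 hMB0.1 i hi2) _ (memB MB hMB.1 i hi3)) tA h2
    · right
      rw [wle_iff hBAne]
      intro m' hm' MB MA hMB hMA
      have hmm : m' = m := by rw [hmBA] at hm'; exact Option.some_inj.mp hm'.symm
      subst hmm
      have h1 : LexLe Wle MB MB0 := hMB0.2 MB hMB.1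
      have h2 : LexLe Wle MA0 MA := hMA.2 MA0 hMA0.1
      have tB : LexLe Wle MB MA0 :=
        lexLe_trans (fun i hi1 hi2 hi3 => tri_of l hsum _ (memB MB hMB.1 i hi1)
          _ (memB MB0 hMB0.1 i hi2) _ (memA MA0 hMA0.1 i hi3)) h1 hLe
      exact lexLe_trans (fun i hi1 hi2 hi3 => tri_of l hsum _ (memB MB hMB.1 i hi1)
        _ (memA MA0 hMA0.1 i hi2) _ (memA MA hMA.1 i hi3)) tB h2
  have Trpart : ∀ A B C : Word, A.length + B.length + C.length ≤ n →
      Wle A B → Wle B C → Wle A C := by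
    intro A B C hn' hab hbc
    rcases eq_or_ne A [] with rfl | hAne
    · exact wle_nil_left C
    rcases eq_or_ne B [] with rfl | hBne
    · exact absurd hab (Npart A (by omega) hAne)
    rcases eq_or_ne C [] with rfl | hCne
    · exact absurd hbc (Npart B (by omega) hBne)
    have hne3 : A ++ B ++ C ≠ [] := by simp [hAne]
    obtain ⟨m, hm⟩ := min?_exists hne3
    obtain ⟨hmmem, hmlb⟩ := List.min?_eq_some_iff'.mp hm
    have hmem3 : m ∈ A ∨ m ∈ B ∨ m ∈ C := by
      rcases List.mem_append.mp hmmem with h | h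
      · rcases List.mem_append.mp h with h' | h'
        · exact Or.inl h'
        · exact Or.inr (Or.inl h')
      · exact Or.inr (Or.inr h)
    have hlb3 : ∀ c, c ∈ A ∨ c ∈ B ∨ c ∈ C → m ≤ c := by
      intro c hc
      apply hmlb
      rcases hc with h | h | h
      · exact List.mem_append.mpr (Or.inl (List.mem_append.mpr (Or.inl h)))
      · exact List.mem_append.mpr (Or.inl (List.mem_append.mpr (Or.inr h)))
      · exact List.mem_append.mpr (Or.inr h)
    have hmAB : ∀ c ∈ A ++ B, m ≤ c := by
      intro c hc
      rcases List.mem_append.mp hc with h | h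
      · exact hlb3 c (Or.inl h)
      · exact hlb3 c (Or.inr (Or.inl h))
    have hmBC : ∀ c ∈ B ++ C, m ≤ c := by
      intro c hc
      rcases List.mem_append.mp hc with h | h
      · exact hlb3 c (Or.inr (Or.inl h))
      · exact hlb3 c (Or.inr (Or.inr h))
    have hmAC : ∀ c ∈ A ++ C, m ≤ c := by
      intro c hc
      rcases List.mem_append.mp hc with h | h
      · exact hlb3 c (Or.inl h)
      · exact hlb3 c (Or.inr (Or.inr h))
    rw [wle_iff_cmp hmAB] at hab
    rw [wle_iff_cmp hmBC] at hbc
    rw [wle_iff_cmp hmAC]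
    intro MA MC hMA hMC
    set l := A.splitOn m ++ B.splitOn m ++ C.splitOn m with hldef
    have hsums : (l.map List.length).sum =
        ((A.splitOn m).map List.length).sum + ((B.splitOn m).map List.length).sum
          + ((C.splitOn m).map List.length).sum := by
      simp [hldef]; omega
    have hsum : (l.map List.length).sum < n := by
      have h1 := splitOn_sum_le m A
      have h2 := splitOn_sum_le m B
      have h3 := splitOn_sum_le m C
      rcases hmem3 with h | h | h
      · have := splitOn_sum_lt h; omega
      · have := splitOn_sum_lt h; omega
      · have := splitOn_sum_lt h; omega
    have hsumB : ((B.splitOn m).map List.length).sum < n := by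
      omega
    obtain ⟨MB, hMB⟩ := exmax (B.splitOn m) hsumB
    have h1 := hab MA MB hMA hMB
    have h2 := hbc MB MC hMB hMC
    have memA : ∀ i, i < MA.length → MA.getD i [] ∈ l := fun i hi =>
      List.mem_append.mpr (Or.inl (List.mem_append.mpr
        (Or.inl (hMA.1.subset (getD_mem_of_lt hi)))))
    have memB : ∀ i, i < MB.length → MB.getD i [] ∈ l := fun i hi =>
      List.mem_append.mpr (Or.inl (List.mem_append.mpr
        (Or.inr (hMB.1.subset (getD_mem_of_lt hi)))))
    have memC : ∀ i, i < MC.length → MC.getD i [] ∈ l := fun i hi =>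
      List.mem_append.mpr (Or.inr (hMC.1.subset (getD_mem_of_lt hi)))
    exact lexLe_trans (fun i hi1 hi2 hi3 =>
      tri_of l hsum _ (memA i hi1) _ (memB i hi2) _ (memC i hi3)) h1 h2
  exact ⟨Npart, Tpart, Trpart⟩

lemma wle_total (A B : Word) : Wle A B ∨ Wle B A :=
  (wle_main (A.length + B.length)).2.1 A B le_rfl

lemma wle_trans {A B C : Word} : Wle A B → Wle B C → Wle A C :=
  (wle_main (A.length + B.length + C.length)).2.2 A B C le_rfl

end Aux

theorem lexmax_of_append_two (As : List Word) (hne : As ≠ [])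
    (hS1 : ∀ w ∈ As, ∀ c ∈ w, 1 ≤ c)
    (hnf : InNF (List.intercalate [0] As)) :
    ∃ k ≤ As.length - 1,
      IsLexMax Wle (As.dropLast ++ [As.getLastD [] ++ [2]])
        (As.take k ++ [As.getLastD [] ++ [2]]) ∧
      (∀ i < k, Wle (As.getLastD [] ++ [2]) (As.getD i [])) ∧
      (∀ i, k ≤ i → i < As.length - 1 →
        Wlt (As.getD i []) (As.getLastD [] ++ [2])) := by
  classical
  set n := As.length with hn
  have hn1 : 1 ≤ n := List.length_pos_iff.mpr hne
  set L : Word := As.getLastD [] ++ [2] with hLdef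
  -- monotone chain from the normal form hypothesis
  have mono : ∀ i j, i ≤ j → j < n → Wle (As.getD j []) (As.getD i []) := by
    have step : ∀ j, j + 1 < n → Wle (As.getD (j + 1) []) (As.getD j []) := by
      intro j hj
      have hn2 : 2 ≤ n := by omega
      set W := List.intercalate [0] As with hW
      have h0notin : ∀ l ∈ As, (0 : ℕ) ∉ l := by
        intro l hl h0
        have := hS1 l hl 0 h0; omega
      have hsplit : W.splitOn 0 = As := List.splitOn_intercalate (ls := As) 0 h0notin hne
      have hWne : W ≠ [] := by
        intro h
        rw [h] at hsplit
        have hAs : As = [[]] := by rw [← hsplit]; rfl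
        rw [hn, hAs] at hn2
        simp at hn2
      have h0W : (0 : ℕ) ∈ W := by
        by_contra h0
        have h1 := splitOn_of_not_mem h0
        rw [hsplit] at h1
        rw [hn, h1] at hn2
        simp at hn2
      have hmin : W.min? = some 0 :=
        List.min?_eq_some_iff'.mpr ⟨h0W, fun b _ => Nat.zero_le b⟩
      have hnf' := hnf
      rw [InNF] at hnf'
      obtain ⟨g, hg⟩ := Nat.exists_eq_succ_of_ne_zero
        (show W.length ≠ 0 from fun h => hWne (List.length_eq_zero_iff.mp h))
      rw [hg] at hnf'
      simp only [NFAux] at hnf'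
      rcases hnf' with h | h
      · exact absurd h hWne
      · obtain ⟨hchain, -⟩ := h 0 hmin
        rw [hsplit] at hchain
        have hc := List.isChain_iff_getElem.mp hchain j (by omega)
        rw [List.getD_eq_getElem As [] (by omega), List.getD_eq_getElem As [] (by omega)]
        simpa [List.get_eq_getElem] using hc
    intro i j hij hj
    induction j with
    | zero =>
      have : i = 0 := by omega
      subst this; exact wle_refl _
    | succ j ihj =>
      rcases Nat.lt_or_ge i (j + 1) with h | h
      · exact wle_trans (step j hj) (ihj (by omega) (by omega))
      · have : i = j + 1 := by omega
        subst this; exact wle_refl _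
  -- choose k
  set P : ℕ → Prop := fun k => ∀ i < k, Wle L (As.getD i []) with hPdef
  set k := Nat.findGreatest P (n - 1) with hk
  have hkle : k ≤ n - 1 := Nat.findGreatest_le _
  have hPk : P k := Nat.findGreatest_spec (Nat.zero_le _) (fun i hi => absurd hi (by omega))
  have hlt : ∀ i, k ≤ i → i < n - 1 → Wlt (As.getD i []) L := by
    intro i hki hi
    have hkn : k < n - 1 := by omega
    have hnk : ¬ Wle L (As.getD k []) := by
      have hnp : ¬ P (k + 1) := Nat.findGreatest_is_greatest (n := n - 1) (by omega) (by omega)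
      by_contra hc
      apply hnp
      intro i' hi'
      rcases Nat.lt_or_ge i' k with h | h
      · exact hPk i' h
      · have : i' = k := by omega
        subst this; exact hc
    have h1 : Wle (As.getD k []) L := by
      rcases wle_total (As.getD k []) L with h | h
      · exact h
      · exact absurd h hnk
    have h2 : Wle (As.getD i []) (As.getD k []) := mono k i hki (by omega)
    exact ⟨wle_trans h2 h1, fun hc => hnk (wle_trans hc h2)⟩
  refine ⟨k, hkle, ?_, fun i hi => hPk i hi, hlt⟩
  have hdroplen : As.dropLast.length = n - 1 := by simp [hn]
  have htakelen : (As.take k).length = k := by simp; omega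
  have hxslen : (As.dropLast ++ [L]).length = n := by simp; omega
  have hMlen : (As.take k ++ [L]).length = k + 1 := by simp; omega
  have hxsget : ∀ j, j < n - 1 → (As.dropLast ++ [L]).getD j [] = As.getD j [] := by
    intro j hj
    rw [List.getD_append _ _ _ _ (by omega)]
    rw [List.getD_eq_getElem _ _ (by omega), List.getD_eq_getElem _ _ (by omega)]
    exact List.getElem_dropLast _
  have hxsgetlast : (As.dropLast ++ [L]).getD (n - 1) [] = L := by
    rw [List.getD_append_right _ _ _ _ (by omega)]
    rw [hdroplen]
    simp
  have hMget : ∀ j, j < k → (As.take k ++ [L]).getD j [] = As.getD j [] := by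
    intro j hj
    rw [List.getD_append _ _ _ _ (by omega)]
    rw [List.getD_eq_getElem _ _ (by omega), List.getD_eq_getElem _ _ (by omega)]
    exact List.getElem_take
  have hMgetk : (As.take k ++ [L]).getD k [] = L := by
    rw [List.getD_append_right _ _ _ _ (by omega)]
    rw [htakelen]
    simp
  constructor
  · -- sublist
    have h1 : (As.take k).Sublist As.dropLast := by
      rw [List.dropLast_eq_take]
      have h2 : As.take k = (As.take (n - 1)).take k := by
        rw [List.take_take]
        congr 1
        omega
      rw [h2]
      exact List.take_sublist _ _
    exact h1.append (List.Sublist.refl _)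
  · intro N hN
    have hNlen : N.length ≤ n := by
      have := hN.length_le
      omega
    obtain ⟨f, hf⟩ := List.sublist_iff_exists_fin_orderEmbedding_get_eq.mp hN
    have hfub0 : ∀ i : Fin N.length, (f i : ℕ) < n := by
      intro i
      have := (f i).2
      omega
    have hflb : ∀ p : ℕ, ∀ hp : p < N.length, p ≤ (f ⟨p, hp⟩ : ℕ) := by
      intro p
      induction p using Nat.strong_induction_on with
      | _ p IHp =>
      intro hp
      by_contra hcon
      push_neg at hcon
      set j := (f ⟨p, hp⟩ : ℕ) with hj
      have hjp : j < p := hcon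
      have hjN : j < N.length := by omega
      have h1 : (f ⟨j, hjN⟩ : ℕ) < (f ⟨p, hp⟩ : ℕ) := by
        apply f.strictMono
        exact Fin.mk_lt_mk.mpr hjp
      have h2 := IHp j hjp hjN
      omega
    have hfstep : ∀ p d : ℕ, ∀ hpd : p + d < N.length,
        (f ⟨p, by omega⟩ : ℕ) + d ≤ (f ⟨p + d, hpd⟩ : ℕ) := by
      intro p d
      induction d with
      | zero => intro h; simp
      | succ d IHd =>
        intro hpd
        have h1 : p + d < N.length := by omega
        have h2 := IHd h1
        have h3 : (f ⟨p + d, h1⟩ : ℕ) < (f ⟨p + d + 1, by omega⟩ : ℕ) := by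
          apply f.strictMono
          exact Fin.mk_lt_mk.mpr (by omega)
        have h4 : (⟨p + (d+1), hpd⟩ : Fin N.length) = ⟨p + d + 1, by omega⟩ := by
          apply Fin.ext
          show p + (d + 1) = p + d + 1
          omega
        rw [h4]
        omega
    have hNval : ∀ (i : ℕ) (hi : i < N.length),
        N.getD i [] = (As.dropLast ++ [L]).getD (f ⟨i, hi⟩ : ℕ) [] := by
      intro i hi
      rw [List.getD_eq_getElem _ _ hi, List.getD_eq_getElem _ _ ((f ⟨i, hi⟩).2)]
      simpa [List.get_eq_getElem] using hf ⟨i, hi⟩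
    have cmp : ∀ (i : ℕ) (hi : i < N.length), i ≤ k →
        Wle (N.getD i []) ((As.take k ++ [L]).getD i []) := by
      intro i hi hik
      set p := (f ⟨i, hi⟩ : ℕ) with hp
      have hplb : i ≤ p := hflb i hi
      have hpub : p < n := hfub0 ⟨i, hi⟩
      rcases Nat.lt_or_ge p (n - 1) with hpn | hpn
      · have hNi : N.getD i [] = As.getD p [] := by
          rw [hNval i hi, ← hp, hxsget p hpn]
        rcases Nat.lt_or_ge i k with hik' | hik'
        · rw [hMget i hik', hNi]
          exact mono i p hplb (by omega)
        · have hik2 : i = k := by omega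
          subst hik2
          rw [hMgetk, hNi]
          exact (hlt p (by omega) hpn).1
      · have hpn' : p = n - 1 := by omega
        have hNi : N.getD i [] = L := by
          rw [hNval i hi, ← hp, hpn', hxsgetlast]
        rcases Nat.lt_or_ge i k with hik' | hik'
        · rw [hMget i hik', hNi]
          exact hPk i hik'
        · have hik2 : i = k := by omega
          subst hik2
          rw [hMgetk, hNi]
          exact wle_refl L
    by_cases hall : ∀ i, ∀ hi : i < N.length, i < k + 1 →
        (Wle (N.getD i []) ((As.take k ++ [L]).getD i []) ∧
         Wle ((As.take k ++ [L]).getD i []) (N.getD i []))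
    case pos =>
      rcases Nat.lt_or_ge (k + 1) N.length with hNlong | hNshort
      · exfalso
        have hkN : k < N.length := by omega
        have htiek := (hall k hkN (by omega)).2
        rw [hMgetk] at htiek
        set p := (f ⟨k, hkN⟩ : ℕ) with hp
        have hplb : k ≤ p := hflb k hkN
        have hpub : p + (N.length - 1 - k) ≤ n - 1 := by
          have h1 := hfstep k (N.length - 1 - k) (by omega)
          have h2 : k + (N.length - 1 - k) = N.length - 1 := by omega
          have h3 := hfub0 ⟨k + (N.length - 1 - k), by omega⟩
          omega
        have hpn : p < n - 1 := by omega
        have hNk : N.getD k [] = As.getD p [] := by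
          rw [hNval k hkN, ← hp, hxsget p hpn]
        rw [hNk] at htiek
        exact (hlt p (by omega) hpn).2 htiek
      · exact Or.inl ⟨by rw [hMlen]; omega, fun i hi => hall i hi (by omega)⟩
    case neg =>
      push_neg at hall
      obtain ⟨s0, hs01, hs02, hs03⟩ := hall
      have hex : ∃ s, s < N.length ∧ s < k + 1 ∧
          ¬ (Wle (N.getD s []) ((As.take k ++ [L]).getD s []) ∧
             Wle ((As.take k ++ [L]).getD s []) (N.getD s [])) :=
        ⟨s0, hs01, hs02, fun hc => hs03 hc.1 hc.2⟩
      set t := Nat.find hex with ht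
      obtain ⟨ht1, ht2, ht3⟩ := Nat.find_spec hex
      have hties : ∀ i < t,
          Wle (N.getD i []) ((As.take k ++ [L]).getD i []) ∧
          Wle ((As.take k ++ [L]).getD i []) (N.getD i []) := by
        intro i hi
        by_contra hno
        exact Nat.find_min hex hi ⟨hi.trans ht1, hi.trans ht2, hno⟩
      have hwt : Wle (N.getD t []) ((As.take k ++ [L]).getD t []) :=
        cmp t ht1 (by omega)
      exact Or.inr ⟨t, ht1, by omega, hties, hwt, fun hc => ht3 ⟨hwt, hc⟩⟩
end

section
/- For every nonzero ordinal β < ε₀ with Cantor normal form ω^{β_1} + ... + ω^{β_{k-1}} + ω^{β_k}·n (where k, n ≥ 1 and β_1 ≥ ... ≥ β_{k-1} > β_k), one has ψ(β) = ω^{β_1} + ... + ω^{β_{k-1}} + ω^{β_k + 1}, and β R ψ(β) holds, i.e., ψ(β) is a limit ordinal and β is a member of the standard fundamental sequence of ψ(β). -/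
open scoped Classical

section PsiAux

open Ordinal List

/-- Evaluation of a CNF-style association list. -/
private noncomputable def ev (L : List (Ordinal × Ordinal)) : Ordinal :=
  L.foldr (fun q r => Ordinal.omega0 ^ q.1 * q.2 + r) 0

private lemma ev_nil : ev [] = 0 := rfl

private lemma ev_cons (p : Ordinal × Ordinal) (L : List (Ordinal × Ordinal)) :
    ev (p :: L) = omega0 ^ p.1 * p.2 + ev L := rfl

private lemma ev_append (L₁ L₂ : List (Ordinal × Ordinal)) :
    ev (L₁ ++ L₂) = ev L₁ + ev L₂ := by
  induction L₁ with
  | nil => simp [ev_nil, ev]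
  | cons p L ih =>
      rw [List.cons_append, ev_cons, ev_cons, ih, add_assoc]

private lemma ev_lt {L : List (Ordinal × Ordinal)} {x : Ordinal}
    (hs : (L.map Prod.fst).Pairwise (· > ·))
    (hc : ∀ p ∈ L, p.2 < omega0) (hx : ∀ p ∈ L, p.1 < x) :
    ev L < omega0 ^ x := by
  induction L generalizing x with
  | nil => exact opow_pos x omega0_pos
  | cons p L ih =>
      rw [List.map_cons, List.pairwise_cons] at hs
      have h1 : ev L < omega0 ^ p.1 :=
        ih hs.2 (fun q hq => hc q (List.mem_cons_of_mem _ hq))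
          (fun q hq => hs.1 q.1 (List.mem_map_of_mem hq))
      have h2 : ev (p :: L) < omega0 ^ (Order.succ p.1) := by
        rw [ev_cons]
        exact opow_mul_add_lt_opow (hc p (List.mem_cons_self)) h1 (Order.lt_succ p.1)
      exact h2.trans_le (opow_le_opow_right omega0_pos
        (Order.succ_le_iff.mpr (hx p (List.mem_cons_self))))

private lemma CNF_ev {L : List (Ordinal × Ordinal)}
    (hs : (L.map Prod.fst).Pairwise (· > ·))
    (h0 : ∀ p ∈ L, 0 < p.2) (hc : ∀ p ∈ L, p.2 < omega0) :
    Ordinal.CNF omega0 (ev L) = L := by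
  induction L with
  | nil => exact Ordinal.CNF.zero_right _
  | cons p L ih =>
      rw [List.map_cons, List.pairwise_cons] at hs
      have hmem : p ∈ p :: L := List.mem_cons_self
      have hw : ev L < omega0 ^ p.1 :=
        ev_lt hs.2 (fun q hq => hc q (List.mem_cons_of_mem _ hq))
          (fun q hq => hs.1 q.1 (List.mem_map_of_mem hq))
      have hv : p.2 ≠ 0 := (h0 p hmem).ne'
      have ho : ev (p :: L) ≠ 0 := by
        rw [ev_cons]
        exact (opow_mul_add_pos omega0_ne_zero _ hv _).ne'
      have hlog : log omega0 (ev (p :: L)) = p.1 := by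
        rw [ev_cons, log_opow_mul_add one_lt_omega0 hv hw,
          log_eq_zero (hc p hmem), add_zero]
      have hdiv : ev (p :: L) / omega0 ^ p.1 = p.2 := by
        rw [ev_cons, mul_add_div _ (opow_ne_zero _ omega0_ne_zero),
          div_eq_zero_of_lt hw, add_zero]
      have hmod : ev (p :: L) % omega0 ^ p.1 = ev L := by
        have h1 := div_add_mod (ev (p :: L)) (omega0 ^ p.1)
        rw [hdiv] at h1
        have h2 : omega0 ^ p.1 * p.2 + ev (p :: L) % omega0 ^ p.1
            = omega0 ^ p.1 * p.2 + ev L := by rw [h1, ev_cons]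
        exact add_left_cancel h2
      rw [Ordinal.CNF.ne_zero ho, hlog, hdiv, hmod, ih hs.2
        (fun q hq => h0 q (List.mem_cons_of_mem _ hq))
        (fun q hq => hc q (List.mem_cons_of_mem _ hq))]

/-- `ω^e * d + ω^(e+1) = ω^(e+1)` for `d < ω`. -/
private lemma opow_mul_add_opow_succ {e d : Ordinal} (hd : d < omega0) :
    omega0 ^ e * d + omega0 ^ (e + 1) = omega0 ^ (e + 1) := by
  rw [opow_add, opow_one, ← mul_add, add_omega0 hd]

end PsiAux

theorem psi_fundSeq (β : Ordinal) (h0 : 0 < β) (hε : β < eps0) (e c : Ordinal)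
    (hlast : (Ordinal.CNF Ordinal.omega0 β).getLast? = some (e, c)) :
    psi β = ((Ordinal.CNF Ordinal.omega0 β).dropLast).foldr
        (fun q r => Ordinal.omega0 ^ q.1 * q.2 + r) 0 + Ordinal.omega0 ^ (e + 1) ∧
    Order.IsSuccLimit (psi β) ∧ ∃ n : ℕ, β = fundSeq (psi β) n := by
  classical
  open Ordinal List in
  have hne : Ordinal.CNF Ordinal.omega0 β ≠ [] := by
    intro h; rw [h] at hlast; simp at hlast
  have hgl : (Ordinal.CNF Ordinal.omega0 β).getLast hne = (e, c) := by
    have h1 := List.getLast?_eq_getLast hne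
    rw [h1] at hlast
    exact Option.some.inj hlast
  set M := (Ordinal.CNF Ordinal.omega0 β).dropLast with hM
  have hLM : M ++ [(e, c)] = Ordinal.CNF Ordinal.omega0 β := by
    rw [hM, ← hgl]; exact List.dropLast_append_getLast hne
  have hsortL : (((Ordinal.CNF Ordinal.omega0 β).map Prod.fst)).Pairwise (· > ·) :=
    (Ordinal.CNF.sortedGT _ _).pairwise
  have hposL : ∀ p ∈ Ordinal.CNF Ordinal.omega0 β, 0 < p.2 :=
    fun p hp => Ordinal.CNF.snd_pos hp
  have hltL : ∀ p ∈ Ordinal.CNF Ordinal.omega0 β, p.2 < Ordinal.omega0 := fun p hp =>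
    Ordinal.CNF.snd_lt one_lt_omega0 hp
  have hsubM : M.Sublist (Ordinal.CNF Ordinal.omega0 β) := List.dropLast_sublist _
  have hposM : ∀ p ∈ M, 0 < p.2 := fun p hp => hposL p (hsubM.subset hp)
  have hltM : ∀ p ∈ M, p.2 < Ordinal.omega0 := fun p hp => hltL p (hsubM.subset hp)
  have hsortM : ((M.map Prod.fst) ++ [e]).Pairwise (· > ·) := by
    have h1 : (M ++ [(e, c)]).map Prod.fst = M.map Prod.fst ++ [e] := by simp
    rw [← h1, hLM]; exact hsortL
  have happ := List.pairwise_append.mp hsortM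
  have hsM : (M.map Prod.fst).Pairwise (· > ·) := happ.1
  have hMe : ∀ x ∈ M.map Prod.fst, e < x := fun x hx =>
    happ.2.2 x hx e (List.mem_singleton_self e)
  have hβ : β = ev M + (Ordinal.omega0 ^ e * c + 0) := by
    have h1 : ev (M ++ [(e, c)]) = β := by
      rw [hLM]; exact Ordinal.CNF.foldr _ β
    rw [← h1, ev_append]; rfl
  have hcM : (e, c) ∈ Ordinal.CNF Ordinal.omega0 β := by
    rw [← hLM]; exact List.mem_append_right _ (List.mem_singleton_self _)
  have hcω : c < Ordinal.omega0 := hltL _ hcM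
  have hcpos : 0 < c := hposL _ hcM
  have habs : Ordinal.omega0 ^ e * (c - 1) + Ordinal.omega0 ^ (e + 1)
      = Ordinal.omega0 ^ (e + 1) :=
    opow_mul_add_opow_succ ((sub_le_self c 1).trans_lt hcω)
  have hpsi : psi β = ev M + Ordinal.omega0 ^ (e + 1) := by
    have h2 : psi β = ev M + (Ordinal.omega0 ^ e * (c - 1) + Ordinal.omega0 ^ (e + 1)) := by
      unfold psi
      rw [hlast]
      rfl
    rw [h2, habs]
  refine ⟨hpsi, ?_, ?_⟩
  · rw [hpsi]
    refine Ordinal.isSuccLimit_add _ (Ordinal.isSuccLimit_opow_left Ordinal.isSuccLimit_omega0 ?_)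
    rw [Ordinal.add_one_eq_succ]
    exact Ordinal.succ_ne_zero e
  · -- find the CNF of `psi β`
    have key : ∃ (P : List (Ordinal × Ordinal)) (d : Ordinal),
        Ordinal.CNF Ordinal.omega0 (psi β) = P ++ [(e + 1, d + 1)] ∧
        ev P + Ordinal.omega0 ^ (e + 1) * d = ev M ∧ d < Ordinal.omega0 := by
      cases hMl : M.getLast? with
      | none =>
          have hMnil : M = [] := List.getLast?_eq_none_iff.mp hMl
          have hev0 : ev ([] : List (Ordinal × Ordinal))
              + Ordinal.omega0 ^ (e + 1) * 0 = ev M := by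
            simp [ev_nil, hMnil]
          refine ⟨[], 0, ?_, hev0, omega0_pos⟩
          have h1 : ev [((e : Ordinal) + 1, (1 : Ordinal))] = psi β := by
            rw [hpsi, hMnil, ev_nil, zero_add, ev_cons, ev_nil, mul_one, add_zero]
          rw [← h1, CNF_ev]
          · simp
          · simp
          · rintro p hp
            simp only [List.mem_singleton] at hp
            subst hp
            show (0 : Ordinal) < 1
            exact zero_lt_one
          · rintro p hp
            simp only [List.mem_singleton] at hp
            subst hp
            show (1 : Ordinal) < Ordinal.omega0
            exact one_lt_omega0
      | some q =>
          have hMne : M ≠ [] := by intro h; rw [h] at hMl; simp at hMl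
          have hq : M.getLast hMne = q := by
            have h1 := List.getLast?_eq_getLast hMne
            rw [h1] at hMl; exact Option.some.inj hMl
          have hM' : M.dropLast ++ [q] = M := by
            rw [← hq]; exact List.dropLast_append_getLast hMne
          have hqM : q ∈ M := by rw [← hM']; exact List.mem_append_right _ (List.mem_singleton_self _)
          have hqe : e < q.1 := hMe q.1 (List.mem_map_of_mem hqM)
          have hsubM' : M.dropLast.Sublist M := List.dropLast_sublist _
          have hsortM' : ((M.dropLast.map Prod.fst) ++ [q.1]).Pairwise (· > ·) := by
            have h1 : (M.dropLast ++ [q]).map Prod.fst = M.dropLast.map Prod.fst ++ [q.1] := by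
              simp
            rw [← h1, hM']; exact hsM
          have happ' := List.pairwise_append.mp hsortM'
          have hevM : ev M = ev M.dropLast + (Ordinal.omega0 ^ q.1 * q.2 + 0) := by
            rw [← hM', ev_append, ev_cons, ev_nil]; rw [hM']
          obtain ⟨j, hj⟩ := Ordinal.lt_omega0.mp (hltM q hqM)
          by_cases hq1 : q.1 = e + 1
          · -- merge with the last term of M
            refine ⟨M.dropLast, q.2, ?_, ?_, hltM q hqM⟩
            · have h1 : ev (M.dropLast ++ [((e : Ordinal) + 1, q.2 + 1)]) = psi β := by
                rw [hpsi, ev_append, ev_cons, ev_nil, add_zero, hevM, add_zero, hq1,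
                  add_assoc, mul_add_one]
              rw [← h1, CNF_ev]
              · have h2 : (M.dropLast ++ [((e : Ordinal) + 1, q.2 + 1)]).map Prod.fst
                    = M.dropLast.map Prod.fst ++ [q.1] := by simp [hq1]
                rw [h2]; exact hsortM'
              · rintro p hp
                rcases List.mem_append.mp hp with hp | hp
                · exact hposM p (hsubM'.subset hp)
                · simp only [List.mem_singleton] at hp
                  subst hp
                  show (0 : Ordinal) < q.2 + 1
                  exact lt_of_lt_of_le zero_lt_one (le_add_self)
              · rintro p hp
                rcases List.mem_append.mp hp with hp | hp
                · exact hltM p (hsubM'.subset hp)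
                · simp only [List.mem_singleton] at hp
                  subst hp
                  show q.2 + 1 < Ordinal.omega0
                  rw [hj, ← Nat.cast_succ]
                  exact nat_lt_omega0 _
            · rw [hevM, hq1, add_zero]
          · -- append a new term
            have hq2 : e + 1 < q.1 := by
              refine lt_of_le_of_ne ?_ (Ne.symm hq1)
              rw [Ordinal.add_one_eq_succ]
              exact Order.succ_le_iff.mpr hqe
            refine ⟨M, 0, ?_, by rw [mul_zero, add_zero], omega0_pos⟩
            have h1 : ev (M ++ [((e : Ordinal) + 1, (0 : Ordinal) + 1)]) = psi β := by
              rw [hpsi, ev_append, ev_cons, ev_nil, add_zero, zero_add, mul_one]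
            rw [← h1, CNF_ev]
            · have h2 : (M ++ [((e : Ordinal) + 1, (0 : Ordinal) + 1)]).map Prod.fst
                  = M.map Prod.fst ++ [e + 1] := by simp
              rw [h2]
              refine List.pairwise_append.mpr ⟨hsM, List.pairwise_singleton _ _, ?_⟩
              rintro x hx y hy
              simp only [List.mem_singleton] at hy
              subst hy
              rw [← hM', List.map_append] at hx
              rcases List.mem_append.mp hx with hx | hx
              · exact hq2.trans (happ'.2.2 x hx q.1 (List.mem_singleton_self _))
              · have hxq : x = q.1 := by simpa using hx
                rw [hxq]; exact hq2
            · rintro p hp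
              rcases List.mem_append.mp hp with hp | hp
              · exact hposM p hp
              · simp only [List.mem_singleton] at hp
                subst hp
                simpa using zero_lt_one
            · rintro p hp
              rcases List.mem_append.mp hp with hp | hp
              · exact hltM p hp
              · simp only [List.mem_singleton] at hp
                subst hp
                show (0 : Ordinal) + 1 < Ordinal.omega0
                rw [zero_add]; exact one_lt_omega0
    obtain ⟨P, d, hCNF, hP, hdω⟩ := key
    obtain ⟨m, hm⟩ := Ordinal.lt_omega0.mp hcω
    have hmpos : m ≠ 0 := by
      rintro rfl; rw [hm] at hcpos; simp at hcpos
    obtain ⟨k, rfl⟩ := Nat.exists_eq_succ_of_ne_zero hmpos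
    refine ⟨k, ?_⟩
    have hglast : (Ordinal.CNF Ordinal.omega0 (psi β)).getLast? = some (e + 1, d + 1) := by
      rw [hCNF, List.getLast?_concat]
    have hdrop : (Ordinal.CNF Ordinal.omega0 (psi β)).dropLast = P := by
      rw [hCNF, List.dropLast_concat]
    have hsucc_ne : (e + 1 : Ordinal) ≠ 0 := by
      rw [Ordinal.add_one_eq_succ]; exact Ordinal.succ_ne_zero e
    have hex : ∃ e', (e + 1 : Ordinal) = e' + 1 := ⟨e, rfl⟩
    have hch : ∀ (h : ∃ e', (e + 1 : Ordinal) = e' + 1), h.choose = e := by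
      intro h
      have hspec := h.choose_spec
      have h2 : Order.succ h.choose = Order.succ (e : Ordinal) := by
        rw [← Ordinal.add_one_eq_succ, ← Ordinal.add_one_eq_succ, ← hspec]
      exact Order.succ_eq_succ_iff.mp h2
    have hval : fundSeq (psi β) k
        = (ev P + Ordinal.omega0 ^ (e + 1) * (d + 1 - 1))
          + Ordinal.omega0 ^ e * ((k : Ordinal) + 1) := by
      rw [fundSeq, hglast]
      simp only
      rw [if_neg hsucc_ne, dif_pos hex, hch hex, hdrop]
      rfl
    obtain ⟨i, rfl⟩ := Ordinal.lt_omega0.mp hdω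
    have hsub : ((i : Ordinal) + 1) - 1 = (i : Ordinal) := by
      rw [← Nat.cast_one, ← Nat.cast_add, ← Ordinal.natCast_sub]
      simp
    rw [hval, hsub, hP, hβ, add_zero, hm, Nat.cast_succ]
end
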